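/- arXiv:2406.05470 — 7 statements merged into one kernel-verified Lean document; each statement's English description precedes it below -/
import Mathlib

section
/- Let d ≥ 1, let K ⊂ ℝ^d be a compact set, let U be a compact subset of the space C(K) of continuous real-valued functions on K with the supremum norm, and let ψ : ℝ → ℝ be a Tauber–Wiener function. Then for every ε > 0 there exist N ∈ ℕ, vectors ξ_1, …, ξ_N ∈ ℝ^d and scalars θ_1, …, θ_N ∈ ℝ (all independent of f), and continuous maps w_1, …, w_N : U → ℝ, such that for every f ∈ U, sup_{x ∈ K} | f(x) − ∑_{i=1}^N w_i(f) · ψ(ξ_i · x + θ_i) | < ε, where ξ_i · x denotes the Euclidean inner product. -/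
open scoped BigOperators RealInnerProductSpace

/-- A continuous function `ψ : ℝ → ℝ` is a Tauber–Wiener function if for every compact
interval `[a,b]`, finite linear combinations `x ↦ ∑ᵢ wᵢ ψ(ξᵢ x + θᵢ)` are dense in
`C([a,b])` with the supremum norm. -/
def IsTauberWiener (ψ : ℝ → ℝ) : Prop :=
  Continuous ψ ∧
    ∀ a b : ℝ, ∀ f : ℝ → ℝ, ContinuousOn f (Set.Icc a b) → ∀ ε : ℝ, 0 < ε →
      ∃ (N : ℕ) (w ξ θ : Fin N → ℝ),
        ∀ x ∈ Set.Icc a b, |f x - ∑ i, w i * ψ (ξ i * x + θ i)| < ε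

variable {d : ℕ} {K : Set (EuclideanSpace ℝ (Fin d))}

/-- ridge continuous map -/
noncomputable def ridge (ψ : ℝ → ℝ) (hψ : Continuous ψ) (K : Set (EuclideanSpace ℝ (Fin d)))
    (ξ : EuclideanSpace ℝ (Fin d)) (θ : ℝ) : C(K, ℝ) :=
  ⟨fun x => ψ (⟪ξ, (x : EuclideanSpace ℝ (Fin d))⟫ + θ), by
    exact hψ.comp (((continuous_const.inner continuous_subtype_val)).add continuous_const)⟩

noncomputable def cosRidge (K : Set (EuclideanSpace ℝ (Fin d)))
    (ξ : EuclideanSpace ℝ (Fin d)) (θ : ℝ) : C(K, ℝ) :=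
  ridge Real.cos Real.continuous_cos K ξ θ

/-- Step A: any continuous function of a single inner product is approximable by TW sums. -/
theorem ridge_approx (hK : IsCompact K) {ψ : ℝ → ℝ} (hψ : IsTauberWiener ψ)
    (b : EuclideanSpace ℝ (Fin d)) (g : ℝ → ℝ) (hg : Continuous g)
    {ε : ℝ} (hε : 0 < ε) :
    ∃ v ∈ Submodule.span ℝ {h : C(K, ℝ) | ∃ ξ θ, h = ridge ψ hψ.1 K ξ θ},
      ∀ x : K, |g ⟪b, (x : EuclideanSpace ℝ (Fin d))⟫ - v x| < ε := by
  obtain ⟨R, hR⟩ := hK.isBounded.exists_norm_le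
  set M : ℝ := ‖b‖ * max R 0 with hM
  have hmem : ∀ x : K, ⟪b, (x : EuclideanSpace ℝ (Fin d))⟫ ∈ Set.Icc (-M) M := by
    intro x
    have h1 : |⟪b, (x : EuclideanSpace ℝ (Fin d))⟫| ≤ ‖b‖ * ‖(x : EuclideanSpace ℝ (Fin d))‖ :=
      abs_real_inner_le_norm _ _
    have h2 : ‖(x : EuclideanSpace ℝ (Fin d))‖ ≤ max R 0 := le_trans (hR _ x.2) (le_max_left _ _)
    have : |⟪b, (x : EuclideanSpace ℝ (Fin d))⟫| ≤ M :=
      h1.trans (by apply mul_le_mul_of_nonneg_left h2 (norm_nonneg _))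
    exact abs_le.mp this
  obtain ⟨N, w, ξ, θ, hN⟩ := hψ.2 (-M) M g hg.continuousOn ε hε
  refine ⟨∑ i, w i • ridge ψ hψ.1 K (ξ i • b) (θ i), ?_, ?_⟩
  · exact Submodule.sum_mem _ fun i _ => Submodule.smul_mem _ _
      (Submodule.subset_span ⟨ξ i • b, θ i, rfl⟩)
  · intro x
    have := hN _ (hmem x)
    simp only [ContinuousMap.coe_sum, Finset.sum_apply, ContinuousMap.coe_smul,
      Pi.smul_apply, smul_eq_mul, ridge, ContinuousMap.coe_mk, real_inner_smul_left] at this ⊢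
    exact this

theorem cosRidge_mul (b c : EuclideanSpace ℝ (Fin d)) (θ φ : ℝ) :
    cosRidge K b θ * cosRidge K c φ =
      (1/2 : ℝ) • cosRidge K (b + c) (θ + φ) + (1/2 : ℝ) • cosRidge K (b - c) (θ - φ) := by
  ext x
  simp only [cosRidge, ridge, ContinuousMap.mul_apply, ContinuousMap.coe_mk,
    ContinuousMap.add_apply, ContinuousMap.smul_apply, smul_eq_mul,
    inner_add_left, inner_sub_left]
  set u := ⟪b, (x : EuclideanSpace ℝ (Fin d))⟫
  set v := ⟪c, (x : EuclideanSpace ℝ (Fin d))⟫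
  have key : ∀ p q : ℝ, Real.cos p * Real.cos q
      = 1/2 * Real.cos (p + q) + 1/2 * Real.cos (p - q) := by
    intro p q; rw [Real.cos_add, Real.cos_sub]; ring
  rw [show u + v + (θ + φ) = (u + θ) + (v + φ) by ring,
    show u - v + (θ - φ) = (u + θ) - (v + φ) by ring, key]

theorem span_cos_mul {x y : C(K, ℝ)}
    (hx : x ∈ Submodule.span ℝ {h : C(K, ℝ) | ∃ ξ θ, h = cosRidge K ξ θ})
    (hy : y ∈ Submodule.span ℝ {h : C(K, ℝ) | ∃ ξ θ, h = cosRidge K ξ θ}) :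
    x * y ∈ Submodule.span ℝ {h : C(K, ℝ) | ∃ ξ θ, h = cosRidge K ξ θ} := by
  set T := {h : C(K, ℝ) | ∃ ξ θ, h = cosRidge K ξ θ}
  induction hx using Submodule.span_induction with
  | mem a ha =>
    induction hy using Submodule.span_induction with
    | mem b hb =>
      obtain ⟨ξa, θa, rfl⟩ := ha
      obtain ⟨ξb, θb, rfl⟩ := hb
      rw [cosRidge_mul]
      exact Submodule.add_mem _
        (Submodule.smul_mem _ _ (Submodule.subset_span ⟨_, _, rfl⟩))
        (Submodule.smul_mem _ _ (Submodule.subset_span ⟨_, _, rfl⟩))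
    | zero => simp
    | add u v hu hv ihu ihv => rw [mul_add]; exact Submodule.add_mem _ ihu ihv
    | smul r u hu ihu => rw [mul_smul_comm]; exact Submodule.smul_mem _ _ ihu
  | zero => simp
  | add u v hu hv ihu ihv => rw [add_mul]; exact Submodule.add_mem _ ihu ihv
  | smul r u hu ihu => rw [smul_mul_assoc]; exact Submodule.smul_mem _ _ ihu

theorem tw_dense (hK : IsCompact K) {ψ : ℝ → ℝ} (hψ : IsTauberWiener ψ)
    (g : C(K, ℝ)) {ε : ℝ} (hε : 0 < ε) :
    ∃ (N : ℕ) (w : Fin N → ℝ) (ξ : Fin N → EuclideanSpace ℝ (Fin d)) (θ : Fin N → ℝ),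
      ∀ x : K, |g x - ∑ i, w i * ψ (⟪ξ i, (x : EuclideanSpace ℝ (Fin d))⟫ + θ i)| < ε := by
  haveI : CompactSpace K := isCompact_iff_compactSpace.mp hK
  classical
  set P := {h : C(K, ℝ) | ∃ ξ θ, h = ridge ψ hψ.1 K ξ θ} with hP
  set V := Submodule.span ℝ P with hV
  set T := {h : C(K, ℝ) | ∃ ξ θ, h = cosRidge K ξ θ} with hT
  -- cos ridges belong to the closure of V
  have hcos : ∀ b θ0, cosRidge K b θ0 ∈ V.topologicalClosure := by
    intro b θ0
    have : cosRidge K b θ0 ∈ closure (V : Set C(K, ℝ)) := by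
      rw [Metric.mem_closure_iff]
      intro δ hδ
      obtain ⟨v, hvV, hv⟩ := ridge_approx hK hψ b (fun s => Real.cos (s + θ0))
        (Real.continuous_cos.comp (continuous_id.add continuous_const)) hδ
      refine ⟨v, hvV, (ContinuousMap.dist_lt_iff hδ).mpr fun x => ?_⟩
      rw [Real.dist_eq]
      exact hv x
    rwa [← Submodule.topologicalClosure_coe] at this
  have hTle : Submodule.span ℝ T ≤ V.topologicalClosure := by
    rw [Submodule.span_le]
    rintro h ⟨b, θ0, rfl⟩
    exact hcos b θ0
  -- the adjoin of T is contained in span T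
  have hadj : ∀ h ∈ Algebra.adjoin ℝ T, h ∈ Submodule.span ℝ T := by
    intro h hh
    induction hh using Algebra.adjoin_induction with
    | mem a ha => exact Submodule.subset_span ha
    | algebraMap r =>
      have h1 : (algebraMap ℝ C(K, ℝ) r) = r • cosRidge K 0 0 := by
        ext x
        simp [cosRidge, ridge]
      rw [h1]
      exact Submodule.smul_mem _ _ (Submodule.subset_span ⟨0, 0, rfl⟩)
    | add a b ha hb iha ihb => exact Submodule.add_mem _ iha ihb
    | mul a b ha hb iha ihb => exact span_cos_mul iha ihb
  -- the adjoin separates points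
  have hsep : (Algebra.adjoin ℝ T).SeparatesPoints := by
    intro x y hxy
    set b : EuclideanSpace ℝ (Fin d) := (x : EuclideanSpace ℝ (Fin d)) - y with hb
    have hb0 : b ≠ 0 := sub_ne_zero.mpr (Subtype.coe_injective.ne hxy)
    set u : ℝ := ⟪b, (x : EuclideanSpace ℝ (Fin d))⟫ with hu
    set v : ℝ := ⟪b, (y : EuclideanSpace ℝ (Fin d))⟫ with hv
    have huv : u - v = ‖b‖ ^ 2 := by
      rw [hu, hv, ← inner_sub_right, ← hb, ← real_inner_self_eq_norm_sq]
    have huv' : u - v ≠ 0 := by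
      rw [huv]
      exact pow_ne_zero _ (norm_ne_zero_iff.mpr hb0)
    set t : ℝ := Real.pi / (u - v) with ht
    refine ⟨cosRidge K (t • b) (-(t * u)), Set.mem_image_of_mem _
      (Algebra.subset_adjoin ⟨t • b, -(t * u), rfl⟩), ?_⟩
    have hx1 : Real.cos (⟪t • b, (x : EuclideanSpace ℝ (Fin d))⟫ + -(t * u)) = 1 := by
      rw [real_inner_smul_left, ← hu]
      simp
    have hy1 : Real.cos (⟪t • b, (y : EuclideanSpace ℝ (Fin d))⟫ + -(t * u)) = -1 := by
      rw [real_inner_smul_left, ← hv,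
        show t * v + -(t * u) = -(t * (u - v)) by ring, ht,
        div_mul_cancel₀ _ huv']
      simp
    simp only [cosRidge, ridge, ContinuousMap.coe_mk]
    rw [hx1, hy1]
    norm_num
  -- Stone-Weierstrass
  have hdense := ContinuousMap.subalgebra_topologicalClosure_eq_top_of_separatesPoints
    (Algebra.adjoin ℝ T) hsep
  have hgmem : g ∈ closure (V : Set C(K, ℝ)) := by
    have h1 : ((Algebra.adjoin ℝ T : Subalgebra ℝ C(K, ℝ)) : Set C(K, ℝ))
        ⊆ (V.topologicalClosure : Set C(K, ℝ)) := fun h hh => hTle (hadj h hh)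
    have h2 : closure ((Algebra.adjoin ℝ T : Subalgebra ℝ C(K, ℝ)) : Set C(K, ℝ))
        ⊆ (V.topologicalClosure : Set C(K, ℝ)) :=
      closure_minimal h1 V.isClosed_topologicalClosure
    have h3 : g ∈ (Algebra.adjoin ℝ T).topologicalClosure := by
      rw [hdense]; trivial
    rw [← Submodule.topologicalClosure_coe]
    exact h2 h3
  rw [Metric.mem_closure_iff] at hgmem
  obtain ⟨v, hvV, hgv⟩ := hgmem ε hε
  obtain ⟨n, c, p, hsum⟩ := Submodule.mem_span_set'.mp hvV
  refine ⟨n, c, fun i => (p i).2.choose, fun i => (p i).2.choose_spec.choose, fun x => ?_⟩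
  have hps : ∀ i, ((p i : C(K, ℝ)) : K → ℝ) x
      = ψ (⟪(p i).2.choose, (x : EuclideanSpace ℝ (Fin d))⟫ + (p i).2.choose_spec.choose) := by
    intro i
    conv_lhs => rw [(p i).2.choose_spec.choose_spec]
    rfl
  have hvx : v x = ∑ i, c i * ψ (⟪(p i).2.choose, (x : EuclideanSpace ℝ (Fin d))⟫
      + (p i).2.choose_spec.choose) := by
    rw [← hsum]
    simp only [ContinuousMap.coe_sum, Finset.sum_apply, ContinuousMap.coe_smul,
      Pi.smul_apply, smul_eq_mul]
    exact Finset.sum_congr rfl fun i _ => by rw [hps]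
  rw [← hvx]
  have := (ContinuousMap.dist_lt_iff hε).mp hgv x
  rwa [Real.dist_eq] at this

theorem universal_approximation_for_functions
    (d : ℕ) (hd : 1 ≤ d)
    (K : Set (EuclideanSpace ℝ (Fin d))) (hK : IsCompact K)
    (U : Set C(K, ℝ)) (hU : IsCompact U)
    (ψ : ℝ → ℝ) (hψ : IsTauberWiener ψ)
    (ε : ℝ) (hε : 0 < ε) :
    ∃ (N : ℕ) (ξ : Fin N → EuclideanSpace ℝ (Fin d)) (θ : Fin N → ℝ)
      (w : Fin N → U → ℝ),
      (∀ i, Continuous (w i)) ∧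
      ∀ f : U, ∀ x : K,
        |(f : C(K, ℝ)) x - ∑ i, w i f * ψ (⟪ξ i, (x : EuclideanSpace ℝ (Fin d))⟫ + θ i)| < ε := by
  classical
  haveI : CompactSpace K := isCompact_iff_compactSpace.mp hK
  have hε4 : 0 < ε / 4 := by linarith
  obtain ⟨s, hs⟩ := hU.elim_finite_subcover (fun g : C(K, ℝ) => Metric.ball g (ε / 4))
    (fun _ => Metric.isOpen_ball) (fun f hf => Set.mem_iUnion.2 ⟨f, Metric.mem_ball_self hε4⟩)
  choose Ng wg ξg θg hg using fun g : C(K, ℝ) => tw_dense hK hψ g hε4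
  set ι := (g : {x // x ∈ s}) × Fin (Ng (g : C(K, ℝ))) with hι
  set N := Fintype.card ι with hN
  set e : Fin N ≃ ι := (Fintype.equivFin ι).symm with he
  set m : C(K, ℝ) → C(K, ℝ) → ℝ := fun g f => max (ε / 4 - dist f g) 0 with hm
  set D : C(K, ℝ) → ℝ := fun f => ∑ g : {x // x ∈ s}, m (g : C(K, ℝ)) f with hD
  have hm_nonneg : ∀ g f, 0 ≤ m g f := fun g f => le_max_right _ _
  have hDpos : ∀ f : U, 0 < D (f : C(K, ℝ)) := by
    intro f
    obtain ⟨g, hgs, hfg⟩ := Set.mem_iUnion₂.mp (hs f.2)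
    rw [Metric.mem_ball] at hfg
    refine Finset.sum_pos' (fun g _ => hm_nonneg _ _) ⟨⟨g, hgs⟩, Finset.mem_univ _, ?_⟩
    exact lt_max_iff.mpr (Or.inl (by linarith))
  refine ⟨N, fun i => ξg ((e i).1 : C(K, ℝ)) (e i).2, fun i => θg ((e i).1 : C(K, ℝ)) (e i).2,
    fun i f => (m ((e i).1 : C(K, ℝ)) (f : C(K, ℝ)) / D (f : C(K, ℝ)))
      * wg ((e i).1 : C(K, ℝ)) (e i).2, ?_, ?_⟩
  · intro i
    have hmc : ∀ g : C(K, ℝ), Continuous fun f : U => m g (f : C(K, ℝ)) := fun g =>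
      (continuous_const.sub (continuous_subtype_val.dist continuous_const)).max continuous_const
    have hDc : Continuous fun f : U => D (f : C(K, ℝ)) :=
      continuous_finset_sum _ fun g _ => hmc _
    exact ((hmc _).div hDc fun f => (hDpos f).ne').mul continuous_const
  · intro f x
    set fc : C(K, ℝ) := (f : C(K, ℝ)) with hfc
    set φ : {x // x ∈ s} → ℝ := fun g => m (g : C(K, ℝ)) fc / D fc with hφ
    have hφ_nonneg : ∀ g, 0 ≤ φ g := fun g => div_nonneg (hm_nonneg _ _) (hDpos f).le
    have hφsum : ∑ g : {x // x ∈ s}, φ g = 1 := by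
      rw [hφ, ← Finset.sum_div]
      exact div_self (hDpos f).ne'
    set Sg : {x // x ∈ s} → ℝ := fun g => ∑ j, wg (g : C(K, ℝ)) j
      * ψ (⟪ξg (g : C(K, ℝ)) j, (x : EuclideanSpace ℝ (Fin d))⟫ + θg (g : C(K, ℝ)) j) with hSg
    have hgroup : ∑ i : Fin N, (m ((e i).1 : C(K, ℝ)) fc / D fc)
          * wg ((e i).1 : C(K, ℝ)) (e i).2
          * ψ (⟪ξg ((e i).1 : C(K, ℝ)) (e i).2, (x : EuclideanSpace ℝ (Fin d))⟫
            + θg ((e i).1 : C(K, ℝ)) (e i).2)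
        = ∑ g : {x // x ∈ s}, φ g * Sg g := by
      rw [Fintype.sum_equiv e
        (fun i => (m ((e i).1 : C(K, ℝ)) fc / D fc) * wg ((e i).1 : C(K, ℝ)) (e i).2
          * ψ (⟪ξg ((e i).1 : C(K, ℝ)) (e i).2, (x : EuclideanSpace ℝ (Fin d))⟫
            + θg ((e i).1 : C(K, ℝ)) (e i).2))
        (fun p : ι => (m ((p.1 : C(K, ℝ))) fc / D fc) * wg (p.1 : C(K, ℝ)) p.2
          * ψ (⟪ξg (p.1 : C(K, ℝ)) p.2, (x : EuclideanSpace ℝ (Fin d))⟫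
            + θg (p.1 : C(K, ℝ)) p.2))
        (fun i => rfl)]
      rw [← Finset.univ_sigma_univ, Finset.sum_sigma]
      refine Finset.sum_congr rfl fun g _ => ?_
      rw [hSg, Finset.mul_sum]
      exact Finset.sum_congr rfl fun j _ => by ring
    rw [hgroup]
    have hdiff : fc x - ∑ g : {x // x ∈ s}, φ g * Sg g
        = ∑ g : {x // x ∈ s}, φ g * (fc x - Sg g) := by
      simp only [mul_sub, Finset.sum_sub_distrib, ← Finset.sum_mul, hφsum, one_mul]
    rw [hdiff]
    have hterm : ∀ g : {x // x ∈ s}, |φ g * (fc x - Sg g)| ≤ φ g * (ε / 2) := by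
      intro g
      rw [abs_mul, abs_of_nonneg (hφ_nonneg g)]
      by_cases h0 : m (g : C(K, ℝ)) fc = 0
      · have hφ0 : φ g = 0 := by rw [hφ]; simp only [h0, zero_div]
        simp only [hφ0, zero_mul]
        exact le_refl 0
      · have hmpos : 0 < ε / 4 - dist fc (g : C(K, ℝ)) := by
          by_contra hcon
          exact h0 (max_eq_right (by linarith))
        have h1 : |fc x - (g : C(K, ℝ)) x| ≤ dist fc (g : C(K, ℝ)) := by
          rw [← Real.dist_eq]
          exact ContinuousMap.dist_apply_le_dist x
        have h2 : |(g : C(K, ℝ)) x - Sg g| < ε / 4 := hg (g : C(K, ℝ)) x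
        have h3 : |fc x - Sg g| ≤ ε / 2 := by
          have := abs_sub_le (fc x) ((g : C(K, ℝ)) x) (Sg g)
          linarith
        exact mul_le_mul_of_nonneg_left h3 (hφ_nonneg g)
    calc |∑ g : {x // x ∈ s}, φ g * (fc x - Sg g)|
        ≤ ∑ g : {x // x ∈ s}, |φ g * (fc x - Sg g)| := Finset.abs_sum_le_sum_abs _ _
      _ ≤ ∑ g : {x // x ∈ s}, φ g * (ε / 2) := Finset.sum_le_sum fun g _ => hterm g
      _ = ε / 2 := by rw [← Finset.sum_mul, hφsum, one_mul]
      _ < ε := by linarith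
end

section
/- Let ψ : ℝ → ℝ be a Tauber–Wiener function, let X be a real Banach space, let K₁ ⊂ X and K₂ ⊂ ℝ^d be compact sets, let U be a compact subset of C(K₁), and let F : U → C(K₂) be a continuous (possibly nonlinear) operator. Then for every ε > 0 there exist N, M, m ∈ ℕ, real numbers w_{ki}, ξ_{kij}, θ_{ki}, β_k (k = 1,…,N, i = 1,…,M, j = 1,…,m), vectors c_k ∈ ℝ^d, and points x_1, …, x_m ∈ K₁, such that for every u ∈ U and every y ∈ K₂: | F(u)(y) − ∑_{k=1}^N ∑_{i=1}^M w_{ki} · ψ( ∑_{j=1}^m ξ_{kij} u(x_j) + θ_{ki} ) · ψ( c_k · y + β_k ) | < ε. -/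
open scoped BigOperators RealInnerProductSpace

lemma aux_range_pad {M : Type*} [AddCommMonoid M] (f : ℕ → M) {n N : ℕ} (h : n ≤ N)
    (h0 : ∀ j, n ≤ j → f j = 0) :
    ∑ j ∈ Finset.range N, f j = ∑ j ∈ Finset.range n, f j :=
  (Finset.sum_subset (Finset.range_subset_range.2 h)
    (fun j _ hj' => h0 j (by simpa using hj'))).symm

lemma aux_tw_nat {ψ : ℝ → ℝ} (hψ : IsTauberWiener ψ) (a b : ℝ) (f : ℝ → ℝ)
    (hf : ContinuousOn f (Set.Icc a b)) {ε : ℝ} (hε : 0 < ε) :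
    ∃ (N : ℕ) (w ξ θ : ℕ → ℝ), ∀ M, N ≤ M → ∀ x ∈ Set.Icc a b,
      |f x - ∑ i ∈ Finset.range M, w i * ψ (ξ i * x + θ i)| < ε := by
  obtain ⟨N, w, ξ, θ, h⟩ := hψ.2 a b f hf ε hε
  refine ⟨N, (fun i => if h : i < N then w ⟨i, h⟩ else 0),
    (fun i => if h : i < N then ξ ⟨i, h⟩ else 0),
    (fun i => if h : i < N then θ ⟨i, h⟩ else 0), ?_⟩
  intro M hM x hx
  have heq : ∑ i ∈ Finset.range M,
      (if h : i < N then w ⟨i, h⟩ else 0) *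
        ψ ((if h : i < N then ξ ⟨i, h⟩ else 0) * x + (if h : i < N then θ ⟨i, h⟩ else 0))
      = ∑ i, w i * ψ (ξ i * x + θ i) := by
    rw [aux_range_pad _ hM (fun j hj => by simp [Nat.not_lt.2 hj])]
    rw [← Fin.sum_univ_eq_sum_range]
    exact Finset.sum_congr rfl (fun i _ => by simp [i.is_lt])
  rw [heq]
  exact h x hx

set_option maxHeartbeats 1000000 in
theorem universal_approximation_for_operators
    (ψ : ℝ → ℝ) (hψ : IsTauberWiener ψ)
    {X : Type*} [NormedAddCommGroup X] [NormedSpace ℝ X] [CompleteSpace X]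
    (d : ℕ)
    (K₁ : Set X) (hK₁ : IsCompact K₁)
    (K₂ : Set (EuclideanSpace ℝ (Fin d))) (hK₂ : IsCompact K₂)
    (U : Set C(K₁, ℝ)) (hU : IsCompact U)
    (F : U → C(K₂, ℝ)) (hF : Continuous F)
    (ε : ℝ) (hε : 0 < ε) :
    ∃ (N M m : ℕ) (w : Fin N → Fin M → ℝ) (ξ : Fin N → Fin M → Fin m → ℝ)
      (θ : Fin N → Fin M → ℝ) (β : Fin N → ℝ) (c : Fin N → EuclideanSpace ℝ (Fin d))
      (x : Fin m → K₁),
      ∀ u : U, ∀ y : K₂,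
        |F u y - ∑ k, ∑ i, w k i *
            ψ (∑ j, ξ k i j * (u : C(K₁, ℝ)) (x j) + θ k i) *
            ψ (⟪c k, (y : EuclideanSpace ℝ (Fin d))⟫ + β k)| < ε := by
  classical
  haveI : CompactSpace K₁ := isCompact_iff_compactSpace.mp hK₁
  haveI : CompactSpace U := isCompact_iff_compactSpace.mp hU
  haveI : CompactSpace K₂ := isCompact_iff_compactSpace.mp hK₂
  have hGc : Continuous (fun p : U × K₂ => F p.1 p.2) := by
    have : Continuous (fun p : U × K₂ => ((F p.1 : C(K₂, ℝ)), p.2)) :=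
      (hF.comp continuous_fst).prodMk continuous_snd
    exact ContinuousEval.continuous_eval.comp this
  set S : Set C(U × K₂, ℝ) := {f | ∃ (m : ℕ) (x : Fin m → K₁) (l : Fin m → ℝ)
      (c : EuclideanSpace ℝ (Fin d)),
    ∀ p : U × K₂, f p = Real.exp (∑ j, l j * (p.1 : C(K₁, ℝ)) (x j)) *
      Real.exp (⟪c, (p.2 : EuclideanSpace ℝ (Fin d))⟫)} with hS
  have hone : (1 : C(U × K₂, ℝ)) ∈ S := ⟨0, Fin.elim0, Fin.elim0, 0, fun p => by simp⟩
  have hmul : ∀ f ∈ S, ∀ g ∈ S, f * g ∈ S := by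
    rintro f ⟨m₁, x₁, l₁, c₁, hf⟩ g ⟨m₂, x₂, l₂, c₂, hg⟩
    refine ⟨m₁ + m₂, Fin.append x₁ x₂, Fin.append l₁ l₂, c₁ + c₂, fun p => ?_⟩
    have hsum : ∑ j : Fin (m₁ + m₂), Fin.append l₁ l₂ j *
        (p.1 : C(K₁, ℝ)) (Fin.append x₁ x₂ j)
        = (∑ j : Fin m₁, l₁ j * (p.1 : C(K₁, ℝ)) (x₁ j)) +
          ∑ j : Fin m₂, l₂ j * (p.1 : C(K₁, ℝ)) (x₂ j) := by
      rw [Fin.sum_univ_add]; simp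
    rw [ContinuousMap.mul_apply, hf p, hg p, hsum, inner_add_left, Real.exp_add, Real.exp_add]
    ring
  have hmk : ∀ (m : ℕ) (x : Fin m → K₁) (l : Fin m → ℝ) (c : EuclideanSpace ℝ (Fin d)),
      Continuous (fun p : U × K₂ => Real.exp (∑ j, l j * (p.1 : C(K₁, ℝ)) (x j)) *
        Real.exp (⟪c, (p.2 : EuclideanSpace ℝ (Fin d))⟫)) := by
    intro m x l c
    apply Continuous.mul
    · apply Real.continuous_exp.comp
      apply continuous_finset_sum
      intro j _
      exact continuous_const.mul
        ((ContinuousEvalConst.continuous_eval_const (x j)).comp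
          (continuous_subtype_val.comp continuous_fst))
    · apply Real.continuous_exp.comp
      exact (Continuous.inner continuous_const (continuous_subtype_val.comp continuous_snd))
  have hsep : (Algebra.adjoin ℝ S).SeparatesPoints := by
    rintro ⟨u, y⟩ ⟨v, z⟩ hpq
    by_cases huv : u = v
    · have hyz : (y : EuclideanSpace ℝ (Fin d)) ≠ z := by
        intro h; exact hpq (by ext <;> simp [huv, Subtype.ext h])
      set c : EuclideanSpace ℝ (Fin d) := (y : EuclideanSpace ℝ (Fin d)) - z with hc
      refine ⟨_, ⟨(⟨fun p => Real.exp (∑ j : Fin 0, Fin.elim0 j * (p.1 : C(K₁, ℝ)) (Fin.elim0 j)) *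
          Real.exp (⟪c, (p.2 : EuclideanSpace ℝ (Fin d))⟫), hmk 0 _ _ _⟩ : C(U × K₂, ℝ)),
        Algebra.subset_adjoin ⟨0, Fin.elim0, Fin.elim0, c, fun p => rfl⟩, rfl⟩, ?_⟩
      simp only [ContinuousMap.coe_mk]
      have : ⟪c, (y : EuclideanSpace ℝ (Fin d))⟫ ≠ ⟪c, (z : EuclideanSpace ℝ (Fin d))⟫ := by
        intro h
        have h0 : ⟪c, (y : EuclideanSpace ℝ (Fin d)) - z⟫ = (0 : ℝ) := by
          rw [inner_sub_right, h]; ring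
        rw [hc, real_inner_self_eq_norm_sq] at h0
        have hn : ‖(y : EuclideanSpace ℝ (Fin d)) - z‖ = 0 := by
          nlinarith [norm_nonneg ((y : EuclideanSpace ℝ (Fin d)) - z)]
        exact hyz (sub_eq_zero.mp (norm_eq_zero.mp hn))
      intro h
      apply this
      exact Real.exp_injective (mul_left_cancel₀ (Real.exp_ne_zero _) h)
    · have huv' : (u : C(K₁, ℝ)) ≠ v := fun h => huv (Subtype.ext h)
      obtain ⟨x₀, hx₀⟩ : ∃ x₀ : K₁, (u : C(K₁, ℝ)) x₀ ≠ (v : C(K₁, ℝ)) x₀ := by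
        by_contra h
        push_neg at h
        exact huv' (ContinuousMap.ext h)
      refine ⟨_, ⟨(⟨fun p => Real.exp (∑ j : Fin 1, (1:ℝ) * (p.1 : C(K₁, ℝ)) x₀) *
          Real.exp (⟪(0 : EuclideanSpace ℝ (Fin d)), (p.2 : EuclideanSpace ℝ (Fin d))⟫),
          hmk 1 (fun _ => x₀) (fun _ => 1) 0⟩ : C(U × K₂, ℝ)),
        Algebra.subset_adjoin ⟨1, (fun _ => x₀), (fun _ => (1:ℝ)), 0, fun p => rfl⟩, rfl⟩, ?_⟩
      simp only [ContinuousMap.coe_mk, Fin.sum_univ_one, one_mul, inner_zero_left,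
        Real.exp_zero, mul_one]
      exact fun h => hx₀ (Real.exp_injective h)
  obtain ⟨g, hg⟩ := ContinuousMap.exists_mem_subalgebra_near_continuous_of_separatesPoints
    (Algebra.adjoin ℝ S) hsep (fun p : U × K₂ => F p.1 p.2) hGc (ε/2) (by positivity)
  have hmem : (g : C(U × K₂, ℝ)) ∈ Submodule.span ℝ S := by
    have h1 : (g : C(U × K₂, ℝ)) ∈ Subalgebra.toSubmodule (Algebra.adjoin ℝ S) := g.2
    rw [Algebra.adjoin_eq_span] at h1
    have h2 : (Submonoid.closure S : Set C(U × K₂, ℝ)) ⊆ S := by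
      intro f hf
      induction hf using Submonoid.closure_induction with
      | mem f hf => exact hf
      | one => exact hone
      | mul f g hf hg ihf ihg => exact hmul f ihf g ihg
    exact Submodule.span_mono h2 (by exact_mod_cast h1)
  obtain ⟨N₀, a, fS, hsum⟩ := Submodule.mem_span_set'.mp hmem
  choose mk xk lk ck hk using fun k => (fS k).2
  -- normalize point families to a common length
  obtain ⟨mb, Xp, Λ, hkey⟩ : ∃ (mb : ℕ) (Xp : Fin N₀ → Fin mb → K₁) (Λ : Fin N₀ → Fin mb → ℝ),
      ∀ (k : Fin N₀) (u : C(K₁, ℝ)),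
        ∑ j, Λ k j * u (Xp k j) = ∑ j, lk k j * u (xk k j) := by
    by_cases hall : ∀ k, mk k = 0
    · refine ⟨0, fun _ => Fin.elim0, fun _ => Fin.elim0, fun k u => ?_⟩
      rw [Finset.sum_eq_zero (fun (j : Fin (mk k)) _ => absurd j.2 (by simp [hall k]))]
      simp
    · push_neg at hall
      obtain ⟨k₀, hk₀⟩ := hall
      set x₀ : K₁ := xk k₀ ⟨0, Nat.pos_of_ne_zero hk₀⟩
      refine ⟨Finset.univ.sup mk,
        fun k j => if h : (j : ℕ) < mk k then xk k ⟨j, h⟩ else x₀,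
        fun k j => if h : (j : ℕ) < mk k then lk k ⟨j, h⟩ else 0,
        fun k u => ?_⟩
      have hle : mk k ≤ Finset.univ.sup mk := Finset.le_sup (Finset.mem_univ k)
      rw [Fin.sum_univ_eq_sum_range (fun j =>
        (if h : j < mk k then lk k ⟨j, h⟩ else 0) *
          u (if h : j < mk k then xk k ⟨j, h⟩ else x₀))]
      rw [aux_range_pad _ hle (fun j hj => by simp [Nat.not_lt.2 hj])]
      rw [← Fin.sum_univ_eq_sum_range]
      exact Finset.sum_congr rfl (fun j _ => by simp [j.is_lt])
  -- uniform bound on U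
  obtain ⟨B, hB⟩ := isBounded_iff_forall_norm_le.mp hU.isBounded
  set Rk : Fin N₀ → ℝ := fun k => (∑ j, |Λ k j|) * max B 0 with hRkdef
  have hLmem : ∀ (k : Fin N₀) (u : U),
      (∑ j, Λ k j * (u : C(K₁, ℝ)) (Xp k j)) ∈ Set.Icc (-(Rk k)) (Rk k) := by
    intro k u
    refine Set.mem_Icc.mpr (abs_le.mp ?_)
    calc |∑ j, Λ k j * (u : C(K₁, ℝ)) (Xp k j)|
        ≤ ∑ j, |Λ k j * (u : C(K₁, ℝ)) (Xp k j)| := Finset.abs_sum_le_sum_abs _ _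
      _ ≤ ∑ j, |Λ k j| * max B 0 := by
          refine Finset.sum_le_sum (fun j _ => ?_)
          rw [abs_mul]
          refine mul_le_mul_of_nonneg_left ?_ (abs_nonneg _)
          refine le_trans ?_ (le_trans (hB _ u.2) (le_max_left _ _))
          simpa [Real.norm_eq_abs] using
            ContinuousMap.norm_coe_le_norm (u : C(K₁, ℝ)) (Xp k j)
      _ = Rk k := (Finset.sum_mul _ _ _).symm
  -- inner product bound on K₂
  have hipc : ∀ k : Fin N₀,
      Continuous (fun y : K₂ => (⟪ck k, (y : EuclideanSpace ℝ (Fin d))⟫ : ℝ)) :=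
    fun k => Continuous.inner continuous_const continuous_subtype_val
  set Ry : Fin N₀ → ℝ := fun k =>
    ‖(⟨fun y : K₂ => (⟪ck k, (y : EuclideanSpace ℝ (Fin d))⟫ : ℝ), hipc k⟩ : C(K₂, ℝ))‖
    with hRydef
  have hymem : ∀ (k : Fin N₀) (y : K₂),
      (⟪ck k, (y : EuclideanSpace ℝ (Fin d))⟫ : ℝ) ∈ Set.Icc (-(Ry k)) (Ry k) := by
    intro k y
    refine Set.mem_Icc.mpr (abs_le.mp ?_)
    simpa [Real.norm_eq_abs] using ContinuousMap.norm_coe_le_norm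
      (⟨fun y : K₂ => (⟪ck k, (y : EuclideanSpace ℝ (Fin d))⟫ : ℝ), hipc k⟩ : C(K₂, ℝ)) y
  set Ck : Fin N₀ → ℝ := fun k => |a k| * Real.exp (Rk k) with hCkdef
  have hCk0 : ∀ k, 0 ≤ Ck k := fun k => mul_nonneg (abs_nonneg _) (Real.exp_pos _).le
  have hδpos : ∀ k : Fin N₀, 0 < ε / (8 * (N₀ + 1) * (Ck k + 1)) := fun k => by
    have := hCk0 k; positivity
  have htwy := fun k : Fin N₀ => aux_tw_nat hψ (-(Ry k)) (Ry k) Real.exp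
    Real.continuous_exp.continuousOn (hδpos k)
  choose Ny v ξy θy hTWy using htwy
  set M' := Finset.univ.sup Ny with hM'def
  -- bound for the ψ-factors in y
  have hSbex : ∀ (k : Fin N₀) (l : ℕ), ∃ Sb : ℝ, 0 ≤ Sb ∧
      ∀ y : K₂, |ψ (ξy k l * ⟪ck k, (y : EuclideanSpace ℝ (Fin d))⟫ + θy k l)| ≤ Sb := by
    intro k l
    have hc : Continuous (fun y : K₂ =>
        ψ (ξy k l * ⟪ck k, (y : EuclideanSpace ℝ (Fin d))⟫ + θy k l)) :=
      hψ.1.comp ((continuous_const.mul (hipc k)).add continuous_const)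
    refine ⟨‖(⟨fun y : K₂ =>
        ψ (ξy k l * ⟪ck k, (y : EuclideanSpace ℝ (Fin d))⟫ + θy k l), hc⟩ : C(K₂, ℝ))‖,
      norm_nonneg _, fun y => ?_⟩
    simpa [Real.norm_eq_abs] using ContinuousMap.norm_coe_le_norm (⟨fun y : K₂ =>
      ψ (ξy k l * ⟪ck k, (y : EuclideanSpace ℝ (Fin d))⟫ + θy k l), hc⟩ : C(K₂, ℝ)) y
  choose Sb hSb0 hSbb using hSbex
  have hηpos : ∀ (k : Fin N₀) (l : Fin M'),
      0 < ε / (8 * (N₀ + 1) * (M' + 1) * (Sb k l + 1)) := fun k l => by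
    have := hSb0 k l; positivity
  have htwu := fun p : Fin N₀ × Fin M' => aux_tw_nat hψ (-(Rk p.1)) (Rk p.1)
    (fun t => a p.1 * v p.1 p.2 * Real.exp t)
    ((continuous_const.mul Real.continuous_exp).continuousOn) (hηpos p.1 p.2)
  choose Mu wu ξu θu hTWu using htwu
  set Mf := Finset.univ.sup Mu with hMfdef
  refine ⟨N₀ * M', Mf, N₀ * mb,
    (fun K i => wu (finProdFinEquiv.symm K) (i : ℕ)),
    (fun K i j => if (finProdFinEquiv.symm j).1 = (finProdFinEquiv.symm K).1 then
        ξu (finProdFinEquiv.symm K) (i : ℕ) *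
          Λ (finProdFinEquiv.symm j).1 (finProdFinEquiv.symm j).2 else 0),
    (fun K i => θu (finProdFinEquiv.symm K) (i : ℕ)),
    (fun K => θy (finProdFinEquiv.symm K).1 ((finProdFinEquiv.symm K).2 : ℕ)),
    (fun K => (ξy (finProdFinEquiv.symm K).1 ((finProdFinEquiv.symm K).2 : ℕ) : ℝ) •
        ck (finProdFinEquiv.symm K).1),
    (fun j => Xp (finProdFinEquiv.symm j).1 (finProdFinEquiv.symm j).2),
    ?_⟩
  intro u y
  set L : Fin N₀ → ℝ := fun k => ∑ j, Λ k j * (u : C(K₁, ℝ)) (Xp k j) with hLdef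
  set tY : Fin N₀ → ℝ := fun k => ⟪ck k, (y : EuclideanSpace ℝ (Fin d))⟫ with htYdef
  -- rewrite the big sum
  have hT : ∑ k : Fin (N₀ * M'), ∑ i : Fin Mf,
      (fun K i => wu (finProdFinEquiv.symm K) (i : ℕ)) k i *
        ψ (∑ j, (fun K i j => if (finProdFinEquiv.symm j).1 = (finProdFinEquiv.symm K).1 then
            ξu (finProdFinEquiv.symm K) (i : ℕ) *
              Λ (finProdFinEquiv.symm j).1 (finProdFinEquiv.symm j).2 else 0) k i j *
          (u : C(K₁, ℝ)) ((fun j => Xp (finProdFinEquiv.symm j).1 (finProdFinEquiv.symm j).2) j)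
          + (fun K i => θu (finProdFinEquiv.symm K) (i : ℕ)) k i) *
        ψ (⟪(fun K => (ξy (finProdFinEquiv.symm K).1 ((finProdFinEquiv.symm K).2 : ℕ) : ℝ) •
            ck (finProdFinEquiv.symm K).1) k, (y : EuclideanSpace ℝ (Fin d))⟫ +
          (fun K => θy (finProdFinEquiv.symm K).1 ((finProdFinEquiv.symm K).2 : ℕ)) k)
      = ∑ p : Fin N₀ × Fin M',
          (∑ i ∈ Finset.range Mf, wu p i * ψ (ξu p i * L p.1 + θu p i)) *
            ψ (ξy p.1 (p.2 : ℕ) * tY p.1 + θy p.1 (p.2 : ℕ)) := by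
    refine Fintype.sum_equiv finProdFinEquiv.symm _ _ (fun K => ?_)
    set p : Fin N₀ × Fin M' := finProdFinEquiv.symm K with hp
    have hy : (⟪(ξy p.1 (p.2 : ℕ) : ℝ) • ck p.1, (y : EuclideanSpace ℝ (Fin d))⟫ : ℝ)
        = ξy p.1 (p.2 : ℕ) * tY p.1 := real_inner_smul_left _ _ _
    have hj : ∀ i : ℕ, ∑ j : Fin (N₀ * mb),
        (if (finProdFinEquiv.symm j).1 = p.1 then
          ξu p i * Λ (finProdFinEquiv.symm j).1 (finProdFinEquiv.symm j).2 else 0) *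
          (u : C(K₁, ℝ)) (Xp (finProdFinEquiv.symm j).1 (finProdFinEquiv.symm j).2)
        = ξu p i * L p.1 := by
      intro i
      rw [← Equiv.sum_comp (finProdFinEquiv : Fin N₀ × Fin mb ≃ Fin (N₀ * mb))
        (fun j => (if (finProdFinEquiv.symm j).1 = p.1 then
          ξu p i * Λ (finProdFinEquiv.symm j).1 (finProdFinEquiv.symm j).2 else 0) *
          (u : C(K₁, ℝ)) (Xp (finProdFinEquiv.symm j).1 (finProdFinEquiv.symm j).2))]
      simp only [Equiv.symm_apply_apply]
      rw [Fintype.sum_prod_type]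
      have hrow : ∀ k' : Fin N₀,
          ∑ j : Fin mb, (if k' = p.1 then ξu p i * Λ k' j else 0) *
            (u : C(K₁, ℝ)) (Xp k' j)
          = if k' = p.1 then ξu p i * L k' else 0 := by
        intro k'
        split_ifs with h
        · rw [Finset.mul_sum]
          exact Finset.sum_congr rfl (fun j _ => by ring)
        · simp
      rw [Finset.sum_congr rfl (fun k' _ => hrow k')]
      rw [Finset.sum_ite_eq' Finset.univ p.1 (fun k' => ξu p i * L k')]
      simp
    simp only [← hp, hy]
    have : ∀ i : Fin Mf, wu p (i : ℕ) *
        ψ ((∑ j, (if (finProdFinEquiv.symm j).1 = p.1 then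
          ξu p (i : ℕ) * Λ (finProdFinEquiv.symm j).1 (finProdFinEquiv.symm j).2 else 0) *
          (u : C(K₁, ℝ)) (Xp (finProdFinEquiv.symm j).1 (finProdFinEquiv.symm j).2)) +
          θu p (i : ℕ)) *
        ψ (ξy p.1 (p.2 : ℕ) * tY p.1 + θy p.1 (p.2 : ℕ))
        = (wu p (i : ℕ) * ψ (ξu p (i : ℕ) * L p.1 + θu p (i : ℕ))) *
          ψ (ξy p.1 (p.2 : ℕ) * tY p.1 + θy p.1 (p.2 : ℕ)) := by
      intro i
      rw [hj (i : ℕ)]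
    rw [Finset.sum_congr rfl (fun i _ => this i)]
    rw [← Finset.sum_mul]
    rw [Fin.sum_univ_eq_sum_range (fun i => wu p i * ψ (ξu p i * L p.1 + θu p i))]
  rw [hT]
  set P1 : ℝ := ∑ k, a k * (Real.exp (L k) * Real.exp (tY k)) with hP1def
  set P2 : ℝ := ∑ p : Fin N₀ × Fin M',
      (a p.1 * v p.1 (p.2 : ℕ) * Real.exp (L p.1)) *
        ψ (ξy p.1 (p.2 : ℕ) * tY p.1 + θy p.1 (p.2 : ℕ)) with hP2def
  set T : ℝ := ∑ p : Fin N₀ × Fin M',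
      (∑ i ∈ Finset.range Mf, wu p i * ψ (ξu p i * L p.1 + θu p i)) *
        ψ (ξy p.1 (p.2 : ℕ) * tY p.1 + θy p.1 (p.2 : ℕ)) with hTdef
  -- Step 1 : |F u y - P1| < ε/2
  have h1 : |F u y - P1| < ε / 2 := by
    have hgp : (g : C(U × K₂, ℝ)) (u, y) = P1 := by
      have hcf := ContinuousMap.congr_fun hsum (u, y)
      rw [← hcf]
      simp only [ContinuousMap.coe_sum, Finset.sum_apply, ContinuousMap.coe_smul,
        Pi.smul_apply, smul_eq_mul]
      refine Finset.sum_congr rfl (fun k _ => ?_)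
      rw [hk k (u, y)]
      congr 1
      rw [← hkey k u]
    have := hg (u, y)
    rw [Real.norm_eq_abs, hgp] at this
    rw [abs_sub_comm]
    exact this
  -- Step 2 : |P1 - P2| ≤ ε/4
  have h2 : |P1 - P2| ≤ ε / 4 := by
    have hP2' : P2 = ∑ k : Fin N₀, (a k * Real.exp (L k)) *
        (∑ l ∈ Finset.range M', v k l * ψ (ξy k l * tY k + θy k l)) := by
      rw [hP2def, Fintype.sum_prod_type]
      refine Finset.sum_congr rfl (fun k _ => ?_)
      calc ∑ l : Fin M', (a k * v k (l : ℕ) * Real.exp (L k)) *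
            ψ (ξy k (l : ℕ) * tY k + θy k (l : ℕ))
          = ∑ l ∈ Finset.range M', (a k * v k l * Real.exp (L k)) *
              ψ (ξy k l * tY k + θy k l) :=
            Fin.sum_univ_eq_sum_range (fun l => (a k * v k l * Real.exp (L k)) *
              ψ (ξy k l * tY k + θy k l)) M'
        _ = (a k * Real.exp (L k)) * ∑ l ∈ Finset.range M', v k l *
              ψ (ξy k l * tY k + θy k l) := by
            rw [Finset.mul_sum]
            exact Finset.sum_congr rfl (fun l _ => by ring)
    have hdiff : P1 - P2 = ∑ k : Fin N₀, (a k * Real.exp (L k)) *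
        (Real.exp (tY k) - ∑ l ∈ Finset.range M', v k l * ψ (ξy k l * tY k + θy k l)) := by
      rw [hP1def, hP2', ← Finset.sum_sub_distrib]
      exact Finset.sum_congr rfl (fun k _ => by ring)
    rw [hdiff]
    calc |∑ k : Fin N₀, (a k * Real.exp (L k)) *
        (Real.exp (tY k) - ∑ l ∈ Finset.range M', v k l * ψ (ξy k l * tY k + θy k l))|
        ≤ ∑ k : Fin N₀, |(a k * Real.exp (L k)) *
            (Real.exp (tY k) - ∑ l ∈ Finset.range M', v k l * ψ (ξy k l * tY k + θy k l))| :=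
          Finset.abs_sum_le_sum_abs _ _
      _ ≤ ∑ _k : Fin N₀, ε / (8 * (N₀ + 1)) := by
          refine Finset.sum_le_sum (fun k _ => ?_)
          rw [abs_mul]
          have hA : |a k * Real.exp (L k)| ≤ Ck k := by
            rw [abs_mul, hCkdef]
            refine mul_le_mul_of_nonneg_left ?_ (abs_nonneg _)
            rw [abs_of_pos (Real.exp_pos _)]
            exact Real.exp_le_exp.mpr (hLmem k u).2
          have hB' : |Real.exp (tY k) -
              ∑ l ∈ Finset.range M', v k l * ψ (ξy k l * tY k + θy k l)|
              ≤ ε / (8 * (N₀ + 1) * (Ck k + 1)) :=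
            (hTWy k M' (Finset.le_sup (Finset.mem_univ k)) (tY k) (hymem k y)).le
          calc |a k * Real.exp (L k)| * |Real.exp (tY k) -
              ∑ l ∈ Finset.range M', v k l * ψ (ξy k l * tY k + θy k l)|
              ≤ (Ck k + 1) * (ε / (8 * (N₀ + 1) * (Ck k + 1))) := by
                refine mul_le_mul (le_trans hA (by linarith)) hB' (abs_nonneg _) ?_
                have := hCk0 k; linarith
            _ = ε / (8 * (N₀ + 1)) := by
                have h1' : Ck k + 1 ≠ 0 := by have := hCk0 k; positivity
                have h2' : (8 : ℝ) * (N₀ + 1) ≠ 0 := by positivity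
                field_simp
      _ = (N₀ : ℝ) * (ε / (8 * (N₀ + 1))) := by
          rw [Finset.sum_const, Finset.card_univ, Fintype.card_fin, nsmul_eq_mul]
      _ ≤ ε / 4 := by
          have h8 : (0:ℝ) < 8 * ((N₀:ℝ) + 1) := by positivity
          rw [mul_div_assoc', div_le_div_iff₀ h8 (by norm_num : (0:ℝ) < 4)]
          have hN : (0:ℝ) ≤ (N₀:ℝ) := Nat.cast_nonneg _
          nlinarith [mul_nonneg hN hε.le]
  -- Step 3 : |P2 - T| ≤ ε/4
  have h3 : |P2 - T| ≤ ε / 4 := by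
    have hdiff : P2 - T = ∑ p : Fin N₀ × Fin M',
        ((a p.1 * v p.1 (p.2 : ℕ) * Real.exp (L p.1)) -
          ∑ i ∈ Finset.range Mf, wu p i * ψ (ξu p i * L p.1 + θu p i)) *
          ψ (ξy p.1 (p.2 : ℕ) * tY p.1 + θy p.1 (p.2 : ℕ)) := by
      rw [hP2def, hTdef, ← Finset.sum_sub_distrib]
      exact Finset.sum_congr rfl (fun p _ => by ring)
    rw [hdiff]
    calc |∑ p : Fin N₀ × Fin M', ((a p.1 * v p.1 (p.2 : ℕ) * Real.exp (L p.1)) -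
          ∑ i ∈ Finset.range Mf, wu p i * ψ (ξu p i * L p.1 + θu p i)) *
          ψ (ξy p.1 (p.2 : ℕ) * tY p.1 + θy p.1 (p.2 : ℕ))|
        ≤ ∑ p : Fin N₀ × Fin M', |((a p.1 * v p.1 (p.2 : ℕ) * Real.exp (L p.1)) -
            ∑ i ∈ Finset.range Mf, wu p i * ψ (ξu p i * L p.1 + θu p i)) *
            ψ (ξy p.1 (p.2 : ℕ) * tY p.1 + θy p.1 (p.2 : ℕ))| :=
          Finset.abs_sum_le_sum_abs _ _
      _ ≤ ∑ _p : Fin N₀ × Fin M', ε / (8 * (N₀ + 1) * (M' + 1)) := by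
          refine Finset.sum_le_sum (fun p _ => ?_)
          rw [abs_mul]
          have hA : |(a p.1 * v p.1 (p.2 : ℕ) * Real.exp (L p.1)) -
              ∑ i ∈ Finset.range Mf, wu p i * ψ (ξu p i * L p.1 + θu p i)|
              ≤ ε / (8 * (N₀ + 1) * (M' + 1) * (Sb p.1 (p.2 : ℕ) + 1)) :=
            (hTWu p Mf (Finset.le_sup (Finset.mem_univ p)) (L p.1) (hLmem p.1 u)).le
          have hBb : |ψ (ξy p.1 (p.2 : ℕ) * tY p.1 + θy p.1 (p.2 : ℕ))|
              ≤ Sb p.1 (p.2 : ℕ) := hSbb p.1 (p.2 : ℕ) y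
          calc |(a p.1 * v p.1 (p.2 : ℕ) * Real.exp (L p.1)) -
              ∑ i ∈ Finset.range Mf, wu p i * ψ (ξu p i * L p.1 + θu p i)| *
              |ψ (ξy p.1 (p.2 : ℕ) * tY p.1 + θy p.1 (p.2 : ℕ))|
              ≤ (ε / (8 * (N₀ + 1) * (M' + 1) * (Sb p.1 (p.2 : ℕ) + 1))) *
                (Sb p.1 (p.2 : ℕ) + 1) := by
                have hs0 := hSb0 p.1 (p.2 : ℕ)
                refine mul_le_mul hA (le_trans hBb (by linarith)) (abs_nonneg _) ?_
                positivity
            _ = ε / (8 * (N₀ + 1) * (M' + 1)) := by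
                have h1' : Sb p.1 (p.2 : ℕ) + 1 ≠ 0 := by
                  have := hSb0 p.1 (p.2 : ℕ); positivity
                have h2' : (8 : ℝ) * (N₀ + 1) * (M' + 1) ≠ 0 := by positivity
                field_simp
      _ = ((N₀ * M' : ℕ) : ℝ) * (ε / (8 * (N₀ + 1) * (M' + 1))) := by
          rw [Finset.sum_const, Finset.card_univ, Fintype.card_prod, Fintype.card_fin,
            Fintype.card_fin, nsmul_eq_mul]
      _ ≤ ε / 4 := by
          push_cast
          have h8 : (0:ℝ) < 8 * ((N₀:ℝ) + 1) * ((M':ℝ) + 1) := by positivity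
          rw [mul_div_assoc', div_le_div_iff₀ h8 (by norm_num : (0:ℝ) < 4)]
          have hN : (0:ℝ) ≤ (N₀:ℝ) := Nat.cast_nonneg _
          have hM : (0:ℝ) ≤ (M':ℝ) := Nat.cast_nonneg _
          nlinarith [mul_nonneg (mul_nonneg hN hM) hε.le, mul_nonneg hN hε.le,
            mul_nonneg hM hε.le, hε.le]
  calc |F u y - T| ≤ |F u y - P1| + |P1 - P2| + |P2 - T| := by
        have t1 : |F u y - T| ≤ |F u y - P2| + |P2 - T| := abs_sub_le _ _ _
        have t2 : |F u y - P2| ≤ |F u y - P1| + |P1 - P2| := abs_sub_le _ _ _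
        linarith
    _ < ε := by linarith
end

section
/- If ψ : ℝ → ℝ is continuous and is not a polynomial, then ψ is a Tauber–Wiener function; that is, for every compact interval [a,b] ⊂ ℝ, the linear span of the family of functions {x ↦ ψ(ξ x + θ) : ξ, θ ∈ ℝ} is dense in C([a,b]) with respect to the supremum norm. -/
set_option maxHeartbeats 1000000
set_option synthInstance.maxHeartbeats 1000000

open MeasureTheory Filter
open scoped BigOperators ContDiff Convolution Topology

noncomputable def powMul (a b : ℝ) (k : ℕ) (h : ℝ → ℝ) (hh : Continuous h) (ξ θ : ℝ) :
    C(Set.Icc a b, ℝ) :=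
  ⟨fun x => (x : ℝ) ^ k * h (ξ * x + θ),
    (continuous_subtype_val.pow k).mul
      (hh.comp ((continuous_const.mul continuous_subtype_val).add continuous_const))⟩

@[simp] lemma powMul_apply (a b : ℝ) (k : ℕ) (h : ℝ → ℝ) (hh : Continuous h) (ξ θ : ℝ)
    (x : Set.Icc a b) : powMul a b k h hh ξ θ x = (x : ℝ) ^ k * h (ξ * x + θ) := rfl

noncomputable def twSpan (ψ : ℝ → ℝ) (hψ : Continuous ψ) (a b : ℝ) :
    Submodule ℝ C(Set.Icc a b, ℝ) :=
  (Submodule.span ℝ (Set.range fun p : ℝ × ℝ => powMul a b 0 ψ hψ p.1 p.2)).topologicalClosure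

lemma twSpan_isClosed (ψ : ℝ → ℝ) (hψ : Continuous ψ) (a b : ℝ) :
    IsClosed ((twSpan ψ hψ a b : Submodule ℝ C(Set.Icc a b, ℝ)) : Set C(Set.Icc a b, ℝ)) :=
  Submodule.isClosed_topologicalClosure _

lemma powMul_mem_twSpan (ψ : ℝ → ℝ) (hψ : Continuous ψ) (a b ξ θ : ℝ) :
    powMul a b 0 ψ hψ ξ θ ∈ twSpan ψ hψ a b :=
  Submodule.le_topologicalClosure _ (Submodule.subset_span ⟨(ξ, θ), rfl⟩)

lemma poly_of_vanishing_iteratedDeriv :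
    ∀ (k : ℕ) (g : ℝ → ℝ), ContDiff ℝ ∞ g → (∀ x, iteratedDeriv k g x = 0) →
    ∃ c : Fin k → ℝ, ∀ x, g x = ∑ i, c i * x ^ (i : ℕ) := by
  intro k
  induction k with
  | zero =>
    intro g _ h
    exact ⟨Fin.elim0, fun x => by simpa using h x⟩
  | succ k ih =>
    intro g hg h
    have hg' : ContDiff ℝ ∞ (deriv g) := (contDiff_infty_iff_deriv.mp hg).2
    obtain ⟨c, hc⟩ := ih (deriv g) hg' (fun x => by
      have := h x; rwa [iteratedDeriv_succ'] at this)
    set G : ℝ → ℝ := fun x => ∑ i : Fin k, c i / ((i : ℕ) + 1) * x ^ ((i : ℕ) + 1) with hG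
    have hGd : ∀ x, HasDerivAt G (deriv g x) x := by
      intro x
      rw [hc x]
      apply HasDerivAt.fun_sum
      intro i _
      have h1 : HasDerivAt (fun x : ℝ => x ^ ((i : ℕ) + 1))
          ((((i : ℕ) + 1 : ℕ) : ℝ) * x ^ (i : ℕ)) x := by
        simpa using hasDerivAt_pow ((i : ℕ) + 1) x
      have := h1.const_mul (c i / ((i : ℕ) + 1))
      convert this using 1
      · rfl
      push_cast
      field_simp
    have hconst : ∀ x, g x - G x = g 0 - G 0 := by
      intro x
      apply is_const_of_deriv_eq_zero (f := fun x => g x - G x)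
      · exact fun y => ((hg.differentiable (by norm_num) y).sub (hGd y).differentiableAt)
      · intro y
        have : HasDerivAt (fun x => g x - G x) (deriv g y - deriv g y) y :=
          ((hg.differentiable (by norm_num) y).hasDerivAt).sub (hGd y)
        simpa using this.deriv
    refine ⟨Fin.cases (g 0) (fun i => c i / ((i : ℕ) + 1)), fun x => ?_⟩
    have hG0 : G 0 = 0 := by simp [hG]
    have := hconst x
    rw [Fin.sum_univ_succ]
    simp only [Fin.cases_zero, Fin.cases_succ, pow_zero, mul_one, Fin.val_succ, Fin.val_zero]
    have hGx : G x = ∑ i : Fin k, c i / ((i : ℕ) + 1) * x ^ ((i : ℕ) + 1) := rfl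
    rw [hG0] at this
    linarith [this, hGx]

lemma exists_bump_iteratedDeriv_ne_zero (ψ : ℝ → ℝ) (hcont : Continuous ψ)
    (hnotpoly : ¬ ∃ p : Polynomial ℝ, ∀ x : ℝ, ψ x = p.eval x) (k : ℕ) :
    ∃ (φ : ContDiffBump (0:ℝ)) (θ : ℝ),
      iteratedDeriv k ((φ.normed volume) ⋆[ContinuousLinearMap.lsmul ℝ ℝ, volume] ψ) θ ≠ 0 := by
  by_contra H
  push_neg at H
  -- family of bumps
  set φ : ℕ → ContDiffBump (0:ℝ) := fun n =>
    ⟨((n:ℝ)+1)⁻¹/2, ((n:ℝ)+1)⁻¹, by positivity, by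
      have : (0:ℝ) < ((n:ℝ)+1)⁻¹ := by positivity
      linarith⟩ with hφ
  set g : ℕ → ℝ → ℝ := fun n =>
    ((φ n).normed volume) ⋆[ContinuousLinearMap.lsmul ℝ ℝ, volume] ψ with hg
  have hsmooth : ∀ n, ContDiff ℝ ∞ (g n) := fun n =>
    HasCompactSupport.contDiff_convolution_left _ (φ n).hasCompactSupport_normed
      (φ n).contDiff_normed (hcont.locallyIntegrable)
  have hpoly : ∀ n, ∃ c : Fin k → ℝ, ∀ x, g n x = ∑ i, c i * x ^ (i : ℕ) :=
    fun n => poly_of_vanishing_iteratedDeriv k (g n) (hsmooth n) (fun x => H (φ n) x)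
  -- nodes
  set s : Finset ℝ := Finset.image (Nat.cast : ℕ → ℝ) (Finset.range k) with hs
  have hscard : s.card = k := by
    rw [hs, Finset.card_image_of_injective _ Nat.cast_injective, Finset.card_range]
  have hinj : Set.InjOn id (s : Set ℝ) := Function.injective_id.injOn
  -- each g n equals its interpolation at the nodes
  have hinterp : ∀ n x, g n x = (Lagrange.interpolate s id (g n)).eval x := by
    intro n x
    obtain ⟨c, hc⟩ := hpoly n
    set p : Polynomial ℝ := ∑ i : Fin k, Polynomial.C (c i) * Polynomial.X ^ (i : ℕ) with hp
    have hev : ∀ y, p.eval y = g n y := by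
      intro y
      rw [hc y, hp]
      simp [Polynomial.eval_finset_sum]
    have hdeg : p.degree < s.card := by
      rw [hscard]
      apply lt_of_le_of_lt (Polynomial.degree_sum_le _ _)
      apply Finset.sup_lt_iff (by exact_mod_cast WithBot.bot_lt_coe k) |>.mpr
      intro i _
      apply lt_of_le_of_lt (Polynomial.degree_C_mul_X_pow_le _ _)
      exact_mod_cast i.isLt
    have := Lagrange.eq_interpolate_of_eval_eq (r := g n) hinj hdeg (fun i _ => by
      simpa using hev i)
    rw [← this, hev]
  -- pointwise convergence of g n to ψ
  have hconv : ∀ x, Tendsto (fun n => g n x) atTop (𝓝 (ψ x)) := by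
    intro x
    apply ContDiffBump.convolution_tendsto_right_of_continuous (μ := volume)
      (φ := φ) _ hcont x
    have : Tendsto (fun n : ℕ => ((n:ℝ)+1)⁻¹) atTop (𝓝 0) :=
      tendsto_one_div_add_atTop_nhds_zero_nat.congr (by intro n; rw [one_div])
    exact this
  -- conclude ψ equals a polynomial
  apply hnotpoly
  refine ⟨Lagrange.interpolate s id ψ, fun x => ?_⟩
  have h2 : Tendsto (fun n => g n x) atTop (𝓝 ((Lagrange.interpolate s id ψ).eval x)) := by
    have heq : ∀ n, g n x = ∑ j ∈ s, g n j * (Lagrange.basis s id j).eval x := by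
      intro n
      rw [hinterp n x, Lagrange.interpolate_apply]
      simp [Polynomial.eval_finset_sum]
    rw [show (Lagrange.interpolate s id ψ).eval x
        = ∑ j ∈ s, ψ j * (Lagrange.basis s id j).eval x by
      rw [Lagrange.interpolate_apply]; simp [Polynomial.eval_finset_sum]]
    rw [show (fun n => g n x) = fun n => ∑ j ∈ s, g n j * (Lagrange.basis s id j).eval x by
      funext n; exact heq n]
    exact tendsto_finset_sum _ (fun j _ => (hconv j).mul_const _)
  exact tendsto_nhds_unique (hconv x) h2

lemma conv_mem_twSpan (ψ : ℝ → ℝ) (hψ : Continuous ψ) (a b : ℝ) (φ : ContDiffBump (0:ℝ))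
    (hc : Continuous ((φ.normed volume) ⋆[ContinuousLinearMap.lsmul ℝ ℝ, volume] ψ)) (ξ θ : ℝ) :
    powMul a b 0 ((φ.normed volume) ⋆[ContinuousLinearMap.lsmul ℝ ℝ, volume] ψ) hc ξ θ
      ∈ twSpan ψ hψ a b := by
  classical
  set V := twSpan ψ hψ a b with hV
  have hVclosed := twSpan_isClosed ψ hψ a b
  haveI : CompleteSpace V := hVclosed.completeSpace_coe
  set n : ℝ → ℝ := φ.normed volume with hn
  have hncont : Continuous n := φ.continuous_normed
  set F : ℝ → C(Set.Icc a b, ℝ) := fun t => n t • powMul a b 0 ψ hψ ξ (θ - t) with hF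
  have hFcont : Continuous F := by
    have : F = fun t => (ContinuousMap.curry
        ⟨fun p : ℝ × (Set.Icc a b) => n p.1 * ((p.2 : ℝ) ^ 0 * ψ (ξ * p.2 + (θ - p.1))),
          by fun_prop⟩) t := by
      funext t; ext x; simp [hF]
    rw [this]
    exact (ContinuousMap.curry _).continuous
  have hFsupp : HasCompactSupport F :=
    HasCompactSupport.mono (φ.hasCompactSupport_normed.smul_right
      (f' := fun t => powMul a b 0 ψ hψ ξ (θ - t))) (by intro t ht; exact ht)
  have hFi : Integrable F volume := hFcont.integrable_of_hasCompactSupport hFsupp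
  have hFmem : ∀ t, F t ∈ V := fun t => V.smul_mem _ (powMul_mem_twSpan ψ hψ a b ξ (θ - t))
  set F' : ℝ → V := fun t => ⟨F t, hFmem t⟩ with hF'
  have hF'cont : Continuous F' := hFcont.subtype_mk _
  have hF'supp : HasCompactSupport F' := by
    apply hFsupp.mono
    intro t ht
    simp only [Function.mem_support] at ht ⊢
    intro h0
    exact ht (by simp [hF', h0])
  have hF'i : Integrable F' volume := hF'cont.integrable_of_hasCompactSupport hF'supp
  have key : (∫ t, F t) = (V.subtypeL) (∫ t, F' t) := by
    have := ContinuousLinearMap.integral_comp_comm (𝕜 := ℝ) (E := V) (Fₗ := C(Set.Icc a b, ℝ)) V.subtypeL hF'i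
    exact this
  have hmem : (∫ t, F t) ∈ V := by
    rw [key]
    exact (∫ t, F' t).2
  have heq : powMul a b 0 ((φ.normed volume) ⋆[ContinuousLinearMap.lsmul ℝ ℝ, volume] ψ) hc ξ θ
      = ∫ t, F t := by
    ext x
    have h1 : (∫ t, (ContinuousMap.evalCLM ℝ x) (F t)) = (ContinuousMap.evalCLM ℝ x) (∫ t, F t) :=
      (ContinuousLinearMap.integral_comp_comm _ hFi)
    have h2 : ((∫ t, F t) : C(Set.Icc a b, ℝ)) x = ∫ t, (F t) x := h1.symm
    rw [powMul_apply, h2, convolution_def]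
    simp only [hF, ContinuousMap.smul_apply, powMul_apply, pow_zero, one_mul, smul_eq_mul,
      ContinuousLinearMap.lsmul_apply]
    congr 1
    ext t
    ring_nf
    exact mul_comm _ _
  rw [heq]
  exact hmem

lemma contDiff_iteratedDeriv (g : ℝ → ℝ) (hg : ContDiff ℝ ∞ g) (k : ℕ) :
    Continuous (iteratedDeriv k g) := by
  rw [iteratedDeriv_eq_iterate]
  exact (hg.iterate_deriv k).continuous

lemma iter_mem (a b : ℝ) (g : ℝ → ℝ) (hg : ContDiff ℝ ∞ g)
    (V : Submodule ℝ C(Set.Icc a b, ℝ)) (hVc : IsClosed (V : Set C(Set.Icc a b, ℝ)))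
    (hbase : ∀ ξ θ : ℝ, powMul a b 0 g hg.continuous ξ θ ∈ V) :
    ∀ (k : ℕ) (ξ θ : ℝ),
      powMul a b k (iteratedDeriv k g) (contDiff_iteratedDeriv g hg k) ξ θ ∈ V := by
  intro k
  induction k with
  | zero =>
    intro ξ θ
    have : powMul a b 0 (iteratedDeriv 0 g) (contDiff_iteratedDeriv g hg 0) ξ θ
        = powMul a b 0 g hg.continuous ξ θ := by
      ext x; simp [iteratedDeriv_zero]
    rw [this]; exact hbase ξ θ
  | succ k ih =>
    intro ξ θ
    have hclosure : powMul a b (k+1) (iteratedDeriv (k+1) g)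
        (contDiff_iteratedDeriv g hg (k+1)) ξ θ ∈ closure (V : Set C(Set.Icc a b, ℝ)) := by
      rw [Metric.mem_closure_iff]
      intro ε hε
      set D : ℝ → ℝ := iteratedDeriv k g with hD
      set D' : ℝ → ℝ := iteratedDeriv (k+1) g with hD'
      have hDd : ∀ y, HasDerivAt D (D' y) y := by
        intro y
        have hdiff : Differentiable ℝ D := by
          rw [hD, iteratedDeriv_eq_iterate]
          exact (hg.iterate_deriv k).differentiable (by norm_num)
        have hder : deriv D = D' := by rw [hD, hD', iteratedDeriv_succ]
        rw [← hder]
        exact (hdiff y).hasDerivAt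
      have hD'c : Continuous D' := contDiff_iteratedDeriv g hg (k+1)
      set M : ℝ := max |a| |b| + 1 with hM
      have hM0 : 0 < M := by positivity
      have hM1 : (1:ℝ) ≤ M := by
        have : (0:ℝ) ≤ max |a| |b| := le_max_of_le_left (abs_nonneg a)
        linarith
      have hMx : ∀ x : Set.Icc a b, |(x:ℝ)| ≤ M := by
        intro x
        have h1 := abs_le_max_abs_abs x.2.1 x.2.2
        linarith
      set R : ℝ := |θ| + (|ξ| + 1) * M + 1 with hR
      have hUC := (isCompact_Icc (a := -R) (b := R)).uniformContinuousOn_of_continuous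
        hD'c.continuousOn
      rw [Metric.uniformContinuousOn_iff] at hUC
      have hε' : 0 < ε / (2 * M ^ (k+1)) := by positivity
      obtain ⟨δ, hδ, hUC⟩ := hUC _ hε'
      set h : ℝ := min (δ / (2 * M)) 1 with hh
      have hh0 : 0 < h := lt_min (by positivity) one_pos
      have hh1 : h ≤ 1 := min_le_right _ _
      have hhM : h * M < δ := by
        have h2 : h ≤ δ / (2 * M) := min_le_left _ _
        have h3 : h * M ≤ δ / (2 * M) * M := mul_le_mul_of_nonneg_right h2 hM0.le
        have h4 : δ / (2 * M) * M = δ / 2 := by field_simp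
        rw [h4] at h3
        exact h3.trans_lt (half_lt_self hδ)
      refine ⟨(h⁻¹) • (powMul a b k D (contDiff_iteratedDeriv g hg k) (ξ + h) θ
          - powMul a b k D (contDiff_iteratedDeriv g hg k) ξ θ), ?_, ?_⟩
      · exact V.smul_mem _ (V.sub_mem (ih (ξ+h) θ) (ih ξ θ))
      · have hbound : ∀ x : Set.Icc a b,
            dist ((powMul a b (k+1) (iteratedDeriv (k+1) g)
              (contDiff_iteratedDeriv g hg (k+1)) ξ θ) x)
              (((h⁻¹) • (powMul a b k D (contDiff_iteratedDeriv g hg k) (ξ + h) θ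
                - powMul a b k D (contDiff_iteratedDeriv g hg k) ξ θ)) x) ≤ ε / 2 := by
          intro x
          -- MVT
          have hlt : ξ < ξ + h := by linarith
          obtain ⟨c, hc, hslope⟩ := exists_hasDerivAt_eq_slope
            (fun s => D (s * (x:ℝ) + θ)) (fun s => D' (s * (x:ℝ) + θ) * (x:ℝ)) hlt
            (by
              apply Continuous.continuousOn
              exact (contDiff_iteratedDeriv g hg k).comp
                ((continuous_id.mul continuous_const).add continuous_const))
            (by
              intro s _
              have inner : HasDerivAt (fun s : ℝ => s * (x:ℝ) + θ) (x:ℝ) s := by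
                simpa using ((hasDerivAt_id s).mul_const (x:ℝ)).add_const θ
              exact (hDd (s * (x:ℝ) + θ)).comp s inner)
          have hslope' : D ((ξ+h) * (x:ℝ) + θ) - D (ξ * (x:ℝ) + θ)
              = D' (c * (x:ℝ) + θ) * (x:ℝ) * h := by
            have hne : ξ + h - ξ ≠ 0 := by
              intro hcon
              have : h = 0 := by linarith
              exact hh0.ne' this
            rw [eq_div_iff hne] at hslope
            rw [← hslope]
            ring
          -- points in the compact set
          have hcx : |c| ≤ |ξ| + 1 := by
            have := abs_le_max_abs_abs hc.1.le hc.2.le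
            have h2 : |ξ + h| ≤ |ξ| + 1 := (abs_add_le _ _).trans (by
              rw [abs_of_pos hh0] at *; linarith)
            have h3 : max |ξ| |ξ+h| ≤ |ξ| + 1 := max_le (by linarith) h2
            linarith
          have hmem1 : ξ * (x:ℝ) + θ ∈ Set.Icc (-R) R := by
            have : |ξ * (x:ℝ) + θ| ≤ R := by
              have h1 : |ξ * (x:ℝ)| ≤ |ξ| * M := by
                rw [abs_mul]
                exact mul_le_mul_of_nonneg_left (hMx x) (abs_nonneg ξ)
              have := abs_add_le (ξ * (x:ℝ)) θ
              have hξM : |ξ| * M ≤ (|ξ| + 1) * M := by nlinarith [abs_nonneg ξ]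
              rw [hR]; linarith
            exact Set.mem_Icc.mpr (abs_le.mp this)
          have hmem2 : c * (x:ℝ) + θ ∈ Set.Icc (-R) R := by
            have : |c * (x:ℝ) + θ| ≤ R := by
              have h1 : |c * (x:ℝ)| ≤ (|ξ| + 1) * M := by
                rw [abs_mul]
                exact mul_le_mul hcx (hMx x) (abs_nonneg _) (by positivity)
              have := abs_add_le (c * (x:ℝ)) θ
              rw [hR]; linarith
            exact Set.mem_Icc.mpr (abs_le.mp this)
          have hdist : dist (ξ * (x:ℝ) + θ) (c * (x:ℝ) + θ) < δ := by
            rw [Real.dist_eq]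
            have : |ξ * (x:ℝ) + θ - (c * (x:ℝ) + θ)| = |ξ - c| * |(x:ℝ)| := by
              rw [← abs_mul]; ring_nf
            rw [this]
            have hξc : |ξ - c| ≤ h := by
              rw [abs_of_nonpos (by linarith [hc.1] : ξ - c ≤ 0)]
              linarith [hc.2]
            calc |ξ - c| * |(x:ℝ)| ≤ h * M :=
              mul_le_mul hξc (hMx x) (abs_nonneg _) hh0.le
            _ < δ := hhM
          have hUCd : dist (D' (ξ * (x:ℝ) + θ)) (D' (c * (x:ℝ) + θ)) < ε / (2 * M ^ (k+1)) :=
            hUC _ hmem1 _ hmem2 hdist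
          -- compute the difference
          rw [Real.dist_eq] at hUCd ⊢
          have hvx : (((h⁻¹) • (powMul a b k D (contDiff_iteratedDeriv g hg k) (ξ + h) θ
                - powMul a b k D (contDiff_iteratedDeriv g hg k) ξ θ)) x : ℝ)
              = (x:ℝ)^k * (x:ℝ) * D' (c * (x:ℝ) + θ) := by
            simp only [ContinuousMap.smul_apply, ContinuousMap.sub_apply, powMul_apply,
              smul_eq_mul]
            rw [show (x:ℝ)^k * D ((ξ+h) * (x:ℝ) + θ) - (x:ℝ)^k * D (ξ * (x:ℝ) + θ)
                = (x:ℝ)^k * (D ((ξ+h) * (x:ℝ) + θ) - D (ξ * (x:ℝ) + θ)) by ring, hslope']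
            field_simp
          rw [hvx, powMul_apply]
          have heq : (x:ℝ)^(k+1) * D' (ξ * (x:ℝ) + θ) - (x:ℝ)^k * (x:ℝ) * D' (c * (x:ℝ) + θ)
              = (x:ℝ)^(k+1) * (D' (ξ * (x:ℝ) + θ) - D' (c * (x:ℝ) + θ)) := by ring
          rw [heq, abs_mul]
          have h1 : |(x:ℝ)^(k+1)| ≤ M^(k+1) := by
            rw [abs_pow]
            exact pow_le_pow_left₀ (abs_nonneg _) (hMx x) _
          calc |(x:ℝ)^(k+1)| * |D' (ξ * (x:ℝ) + θ) - D' (c * (x:ℝ) + θ)|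
              ≤ M^(k+1) * (ε / (2 * M ^ (k+1))) := by
                apply mul_le_mul h1 hUCd.le (abs_nonneg _) (by positivity)
          _ = ε / 2 := by field_simp
        have := (ContinuousMap.dist_le (by linarith : (0:ℝ) ≤ ε/2)).mpr hbound
        linarith
    rwa [hVc.closure_eq] at hclosure

noncomputable def monoC (a b : ℝ) (k : ℕ) : C(Set.Icc a b, ℝ) :=
  ⟨fun x => (x : ℝ) ^ k, continuous_subtype_val.pow k⟩

lemma monoC_mem_twSpan (ψ : ℝ → ℝ) (hcont : Continuous ψ)
    (hnotpoly : ¬ ∃ p : Polynomial ℝ, ∀ x : ℝ, ψ x = p.eval x) (a b : ℝ) (k : ℕ) :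
    monoC a b k ∈ twSpan ψ hcont a b := by
  obtain ⟨φ, θ, hne⟩ := exists_bump_iteratedDeriv_ne_zero ψ hcont hnotpoly k
  set g : ℝ → ℝ := (φ.normed volume) ⋆[ContinuousLinearMap.lsmul ℝ ℝ, volume] ψ with hgdef
  have hgsm : ContDiff ℝ ∞ g :=
    HasCompactSupport.contDiff_convolution_left _ φ.hasCompactSupport_normed
      φ.contDiff_normed hcont.locallyIntegrable
  have hbase : ∀ ξ θ' : ℝ, powMul a b 0 g hgsm.continuous ξ θ' ∈ twSpan ψ hcont a b :=
    fun ξ θ' => conv_mem_twSpan ψ hcont a b φ hgsm.continuous ξ θ'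
  have hiter := iter_mem a b g hgsm (twSpan ψ hcont a b) (twSpan_isClosed ψ hcont a b)
    hbase k 0 θ
  have heq : monoC a b k = (iteratedDeriv k g θ)⁻¹ •
      powMul a b k (iteratedDeriv k g) (contDiff_iteratedDeriv g hgsm k) 0 θ := by
    ext x
    simp only [ContinuousMap.smul_apply, powMul_apply, smul_eq_mul, monoC,
      ContinuousMap.coe_mk, zero_mul, zero_add]
    field_simp
  rw [heq]
  exact Submodule.smul_mem _ _ hiter

lemma polyC_mem_twSpan (ψ : ℝ → ℝ) (hcont : Continuous ψ)
    (hnotpoly : ¬ ∃ p : Polynomial ℝ, ∀ x : ℝ, ψ x = p.eval x) (a b : ℝ) (p : Polynomial ℝ) :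
    p.toContinuousMapOn (Set.Icc a b) ∈ twSpan ψ hcont a b := by
  induction p using Polynomial.induction_on' with
  | add p q hp hq =>
    have : (p + q).toContinuousMapOn (Set.Icc a b)
        = p.toContinuousMapOn (Set.Icc a b) + q.toContinuousMapOn (Set.Icc a b) := by
      ext x; simp [Polynomial.toContinuousMapOn, Polynomial.toContinuousMap]
    rw [this]
    exact Submodule.add_mem _ hp hq
  | monomial n c =>
    have : (Polynomial.monomial n c).toContinuousMapOn (Set.Icc a b) = c • monoC a b n := by
      ext x
      simp [Polynomial.toContinuousMapOn, Polynomial.toContinuousMap, monoC]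
    rw [this]
    exact Submodule.smul_mem _ _ (monoC_mem_twSpan ψ hcont hnotpoly a b n)

theorem continuous_nonpolynomial_is_TauberWiener'
    (ψ : ℝ → ℝ) (hcont : Continuous ψ)
    (hnotpoly : ¬ ∃ p : Polynomial ℝ, ∀ x : ℝ, ψ x = p.eval x) :
    Continuous ψ ∧
    ∀ a b : ℝ, ∀ f : ℝ → ℝ, ContinuousOn f (Set.Icc a b) → ∀ ε : ℝ, 0 < ε →
      ∃ (N : ℕ) (w ξ θ : Fin N → ℝ),
        ∀ x ∈ Set.Icc a b, |f x - ∑ i, w i * ψ (ξ i * x + θ i)| < ε := by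
  refine ⟨hcont, ?_⟩
  intro a b f hf ε hε
  set K := Set.Icc a b
  set fC : C(K, ℝ) := ⟨K.restrict f, hf.restrict⟩ with hfC
  -- fC lies in the closed span
  have hfV : fC ∈ twSpan ψ hcont a b := by
    have htop : fC ∈ (polynomialFunctions K).topologicalClosure := by
      rw [polynomialFunctions_closure_eq_top a b]
      trivial
    have hsub : ((polynomialFunctions K : Subalgebra ℝ C(K, ℝ)) : Set C(K, ℝ))
        ⊆ (twSpan ψ hcont a b : Set C(K, ℝ)) := by
      rintro g hg
      obtain ⟨p, -, rfl⟩ := hg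
      exact polyC_mem_twSpan ψ hcont hnotpoly a b p
    have hcl : closure ((polynomialFunctions K : Subalgebra ℝ C(K, ℝ)) : Set C(K, ℝ))
        ⊆ (twSpan ψ hcont a b : Set C(K, ℝ)) :=
      closure_minimal hsub (twSpan_isClosed ψ hcont a b)
    exact hcl htop
  -- extract a finite linear combination within ε
  rw [twSpan, ← SetLike.mem_coe, Submodule.topologicalClosure_coe, Metric.mem_closure_iff] at hfV
  obtain ⟨w0, hw0, hdist⟩ := hfV ε hε
  rw [SetLike.mem_coe, Submodule.mem_span_set'] at hw0
  obtain ⟨N, wts, gens, hsum⟩ := hw0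
  choose pp hpp using fun i => (gens i).2
  refine ⟨N, wts, fun i => (pp i).1, fun i => (pp i).2, ?_⟩
  intro x hx
  have hdx : dist (fC ⟨x, hx⟩) (w0 ⟨x, hx⟩) < ε :=
    lt_of_le_of_lt (ContinuousMap.dist_apply_le_dist _) hdist
  have hw0x : w0 ⟨x, hx⟩ = ∑ i, wts i * ψ ((pp i).1 * x + (pp i).2) := by
    rw [← hsum]
    have h1 : ((∑ i, wts i • ((gens i : C(K, ℝ)))) ⟨x, hx⟩)
        = ∑ i, wts i * ((gens i : C(K, ℝ)) ⟨x, hx⟩) := by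
      simp
    rw [h1]
    refine Finset.sum_congr rfl fun i _ => ?_
    have h2 : ((gens i : C(K, ℝ)) ⟨x, hx⟩) = (x:ℝ)^0 * ψ ((pp i).1 * x + (pp i).2) := by
      rw [← hpp i]
      rfl
    rw [h2]
    ring
  rw [Real.dist_eq] at hdx
  have hfx : fC ⟨x, hx⟩ = f x := rfl
  rw [hfx, hw0x] at hdx
  exact hdx

theorem continuous_nonpolynomial_is_TauberWiener
    (ψ : ℝ → ℝ) (hcont : Continuous ψ)
    (hnotpoly : ¬ ∃ p : Polynomial ℝ, ∀ x : ℝ, ψ x = p.eval x) :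
    IsTauberWiener ψ := by
  exact continuous_nonpolynomial_is_TauberWiener' ψ hcont hnotpoly
end

section
/- Fix d, N ∈ ℕ with N ≥ 1, a nonzero vector x ∈ ℝ^d, and ε ∈ (0,1). Let μ be the probability measure on the space of N × d real matrices given by the product of standard Gaussian measures N(0,1), one for each entry (i.e., the entries R_{ji} are i.i.d. standard normal random variables). For a matrix R define z = (1/√N) R x ∈ ℝ^N. Then μ( { R : | ‖x‖₂ − ‖z‖₂ | ≤ ε ‖x‖₂ } ) ≥ 1 − 2 exp( −(ε² − ε³) N / 4 ). -/
open scoped BigOperators NNReal ENNReal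
open ProbabilityTheory MeasureTheory Real

namespace JLAux


lemma pdf_eq : (fun x => ENNReal.ofReal (gaussianPDFReal 0 1 x))
    = fun x => ((gaussianPDFReal 0 1 x).toNNReal : ℝ≥0∞) := rfl

lemma integral_gaussianReal (f : ℝ → ℝ) :
    ∫ u, f u ∂(gaussianReal 0 1) = ∫ u, gaussianPDFReal 0 1 u * f u := by
  rw [gaussianReal_of_var_ne_zero 0 one_ne_zero, gaussianPDF_def, pdf_eq,
    integral_withDensity_eq_integral_smul
      ((measurable_gaussianPDFReal 0 1).real_toNNReal) f]
  congr 1 with u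
  simp [NNReal.smul_def, Real.coe_toNNReal _ (gaussianPDFReal_nonneg 0 1 u)]

lemma integrable_gaussianReal_iff (f : ℝ → ℝ) :
    Integrable f (gaussianReal 0 1) ↔
      Integrable (fun u => gaussianPDFReal 0 1 u * f u) volume := by
  rw [gaussianReal_of_var_ne_zero 0 one_ne_zero, gaussianPDF_def, pdf_eq,
    integrable_withDensity_iff_integrable_smul
      ((measurable_gaussianPDFReal 0 1).real_toNNReal)]
  constructor <;> intro hi <;> refine hi.congr (Filter.Eventually.of_forall fun u => ?_) <;>
    simp [NNReal.smul_def, Real.coe_toNNReal _ (gaussianPDFReal_nonneg 0 1 u)]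

lemma mgf_one_dim {c b s : ℝ} (h : 2 * c * b ^ 2 < 1) :
    Integrable (fun u => Real.exp (c * (s + u * b) ^ 2)) (gaussianReal 0 1) ∧
    ∫ u, Real.exp (c * (s + u * b) ^ 2) ∂(gaussianReal 0 1)
      = Real.exp (c * s ^ 2 / (1 - 2 * c * b ^ 2)) / Real.sqrt (1 - 2 * c * b ^ 2) := by
  set α : ℝ := 1 / 2 - c * b ^ 2 with hα_def
  have hα : 0 < α := by rw [hα_def]; linarith
  set m : ℝ := c * s * b / α with hm_def
  have key : ∀ u : ℝ, gaussianPDFReal 0 1 u * Real.exp (c * (s + u * b) ^ 2)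
      = (Real.sqrt (2 * π))⁻¹ * Real.exp (c * s ^ 2 / (1 - 2 * c * b ^ 2))
        * Real.exp (-α * (u - m) ^ 2) := by
    intro u
    rw [gaussianPDFReal_def]
    simp only [NNReal.coe_one, mul_one, sub_zero]
    rw [mul_assoc, mul_assoc, ← Real.exp_add, ← Real.exp_add]
    congr 2
    have h1 : (1:ℝ) - 2 * c * b ^ 2 = 2 * α := by rw [hα_def]; ring
    rw [h1, hm_def]
    field_simp
    ring
  have hint : Integrable (fun u => (Real.sqrt (2 * π))⁻¹
      * Real.exp (c * s ^ 2 / (1 - 2 * c * b ^ 2)) * Real.exp (-α * (u - m) ^ 2)) volume := by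
    have := (integrable_exp_neg_mul_sq hα).comp_sub_right m
    exact this.const_mul _
  constructor
  · rw [integrable_gaussianReal_iff]
    exact hint.congr (Filter.Eventually.of_forall fun u => (key u).symm)
  · rw [integral_gaussianReal]
    calc ∫ u, gaussianPDFReal 0 1 u * Real.exp (c * (s + u * b) ^ 2)
        = ∫ u, (Real.sqrt (2 * π))⁻¹ * Real.exp (c * s ^ 2 / (1 - 2 * c * b ^ 2))
            * Real.exp (-α * (u - m) ^ 2) := by
          exact integral_congr_ae (Filter.Eventually.of_forall key)
      _ = (Real.sqrt (2 * π))⁻¹ * Real.exp (c * s ^ 2 / (1 - 2 * c * b ^ 2))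
            * ∫ u, Real.exp (-α * (u - m) ^ 2) := by
          rw [integral_const_mul]
      _ = (Real.sqrt (2 * π))⁻¹ * Real.exp (c * s ^ 2 / (1 - 2 * c * b ^ 2))
            * Real.sqrt (π / α) := by
          rw [integral_sub_right_eq_self (fun u => Real.exp (-α * u ^ 2)) m,
            integral_gaussian]
      _ = Real.exp (c * s ^ 2 / (1 - 2 * c * b ^ 2)) / Real.sqrt (1 - 2 * c * b ^ 2) := by
          have h1 : (1:ℝ) - 2 * c * b ^ 2 = 2 * α := by rw [hα_def]; ring
          have h2 : Real.sqrt ((2 * π)⁻¹) * Real.sqrt (π / α) * Real.sqrt (2 * α) = 1 := by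
            rw [← Real.sqrt_mul (by positivity), ← Real.sqrt_mul (by positivity)]
            rw [show (2 * π)⁻¹ * (π / α) * (2 * α) = 1 by
              have hπ : (0:ℝ) < π := Real.pi_pos
              field_simp]
            exact Real.sqrt_one
          rw [h1, ← Real.sqrt_inv, eq_div_iff (by positivity : Real.sqrt (2 * α) ≠ 0)]
          linear_combination Real.exp (c * s ^ 2 / (2 * α)) * h2



lemma mgf_pi : ∀ (n : ℕ) (x : Fin n → ℝ) (c s : ℝ),
    2 * c * (∑ i, x i ^ 2) < 1 →
    Integrable (fun r : Fin n → ℝ => Real.exp (c * (s + ∑ i, r i * x i) ^ 2))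
      (Measure.pi fun _ => gaussianReal 0 1) ∧
    ∫ r : Fin n → ℝ, Real.exp (c * (s + ∑ i, r i * x i) ^ 2)
        ∂(Measure.pi fun _ => gaussianReal 0 1)
      = Real.exp (c * s ^ 2 / (1 - 2 * c * ∑ i, x i ^ 2))
          / Real.sqrt (1 - 2 * c * ∑ i, x i ^ 2) := by
  intro n
  induction n with
  | zero =>
      intro x c s _
      simp only [Finset.univ_eq_empty, Finset.sum_empty, add_zero, mul_zero, sub_zero,
        Real.sqrt_one, div_one]
      exact ⟨integrable_const _, by simp⟩
  | succ n ih =>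
      intro x c s h
      have hsum : ∑ i, x i ^ 2 = x 0 ^ 2 + ∑ i : Fin n, x i.succ ^ 2 :=
        Fin.sum_univ_succ _
      set A : ℝ := ∑ i : Fin n, x i.succ ^ 2 with hA_def
      have hA0 : 0 ≤ A := Finset.sum_nonneg fun i _ => sq_nonneg _
      have hx00 : 0 ≤ x 0 ^ 2 := sq_nonneg _
      have hQ : 0 < 1 - 2 * c * (x 0 ^ 2 + A) := by rw [hsum] at h; linarith
      have hcA : 2 * c * A < 1 := by
        rcases le_or_gt c 0 with hc | hc
        · nlinarith
        · nlinarith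
      have hP : 0 < 1 - 2 * c * A := by linarith
      set c' : ℝ := c / (1 - 2 * c * A) with hc'_def
      have hc'x0 : 2 * c' * x 0 ^ 2 < 1 := by
        rw [hc'_def, show 2 * (c / (1 - 2 * c * A)) * x 0 ^ 2
          = (2 * c * x 0 ^ 2) / (1 - 2 * c * A) by ring, div_lt_one hP]
        linarith
      have h1c' : 1 - 2 * c' * x 0 ^ 2 = (1 - 2 * c * (x 0 ^ 2 + A)) / (1 - 2 * c * A) := by
        rw [hc'_def]; field_simp; ring
      set e := MeasurableEquiv.piFinSuccAbove (fun _ : Fin (n + 1) => ℝ) 0 with he_def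
      have MP := measurePreserving_piFinSuccAbove (fun _ : Fin (n + 1) => gaussianReal 0 1) 0
      set g : ℝ × (Fin n → ℝ) → ℝ := fun p =>
        Real.exp (c * ((s + p.1 * x 0) + ∑ i : Fin n, p.2 i * x i.succ) ^ 2) with hg_def
      have he_app : ∀ r : Fin (n + 1) → ℝ, e r = (r 0, fun i => r i.succ) := by
        intro r
        show (Fin.insertNthEquiv (fun _ => ℝ) 0).symm r = _
        simp [Fin.insertNthEquiv_zero]
        rfl
      have hcomp : (fun r : Fin (n + 1) → ℝ => Real.exp (c * (s + ∑ i, r i * x i) ^ 2))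
          = g ∘ e := by
        funext r
        simp only [Function.comp_apply, he_app r, hg_def]
        rw [Fin.sum_univ_succ (f := fun i => r i * x i)]
        ring_nf
      have hg_meas : Measurable g := by
        apply Real.measurable_exp.comp
        apply Measurable.const_mul
        apply Measurable.pow _ measurable_const
        apply Measurable.add
        · exact (measurable_fst.mul_const _).const_add _
        · exact Finset.measurable_sum _ fun i _ =>
            ((measurable_pi_apply i).comp measurable_snd).mul_const _
      have inner_int : ∀ u : ℝ,
          Integrable (fun y : Fin n → ℝ => g (u, y)) (Measure.pi fun _ => gaussianReal 0 1) :=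
        fun u => (ih (fun i => x i.succ) c (s + u * x 0) hcA).1
      have key_pt : ∀ u : ℝ,
          ∫ y : Fin n → ℝ, g (u, y) ∂(Measure.pi fun _ => gaussianReal 0 1)
            = (Real.sqrt (1 - 2 * c * A))⁻¹ * Real.exp (c' * (s + u * x 0) ^ 2) := by
        intro u
        have hv := (ih (fun i => x i.succ) c (s + u * x 0) hcA).2
        rw [hg_def]
        simp only []
        rw [hv, div_eq_mul_inv, mul_comm]
        congr 2
        rw [hc'_def]; ring
      have hg_int : Integrable g
          ((gaussianReal 0 1).prod (Measure.pi fun _ : Fin n => gaussianReal 0 1)) := by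
        rw [integrable_prod_iff hg_meas.aestronglyMeasurable]
        refine ⟨Filter.Eventually.of_forall inner_int, ?_⟩
        have hnorm : (fun u : ℝ => ∫ y : Fin n → ℝ, ‖g (u, y)‖
              ∂(Measure.pi fun _ => gaussianReal 0 1))
            = fun u => (Real.sqrt (1 - 2 * c * A))⁻¹ * Real.exp (c' * (s + u * x 0) ^ 2) := by
          funext u
          rw [← key_pt u]
          congr 1 with y
          rw [Real.norm_eq_abs, abs_of_pos (Real.exp_pos _)]
        rw [hnorm]
        exact ((mgf_one_dim hc'x0).1.const_mul _)
      have int_val : ∫ r : Fin (n + 1) → ℝ, Real.exp (c * (s + ∑ i, r i * x i) ^ 2)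
            ∂(Measure.pi fun _ => gaussianReal 0 1)
          = (Real.sqrt (1 - 2 * c * A))⁻¹
              * (Real.exp (c' * s ^ 2 / (1 - 2 * c' * x 0 ^ 2))
                / Real.sqrt (1 - 2 * c' * x 0 ^ 2)) := by
        rw [hcomp]
        rw [show ∫ r, (g ∘ e) r ∂(Measure.pi fun _ : Fin (n + 1) => gaussianReal 0 1)
            = ∫ p, g p ∂((gaussianReal 0 1).prod (Measure.pi fun _ : Fin n => gaussianReal 0 1))
          from MP.integral_comp' g]
        rw [integral_prod _ hg_int]
        rw [integral_congr_ae (Filter.Eventually.of_forall key_pt)]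
        rw [integral_const_mul, (mgf_one_dim hc'x0).2]
      constructor
      · rw [hcomp]
        exact (MP.integrable_comp_emb e.measurableEmbedding).2 hg_int
      · rw [int_val, hsum]
        have hQP : Real.sqrt (1 - 2 * c' * x 0 ^ 2)
            = Real.sqrt (1 - 2 * c * (x 0 ^ 2 + A)) / Real.sqrt (1 - 2 * c * A) := by
          rw [h1c', Real.sqrt_div hQ.le]
        have harg : c' * s ^ 2 / (1 - 2 * c' * x 0 ^ 2)
            = c * s ^ 2 / (1 - 2 * c * (x 0 ^ 2 + A)) := by
          rw [h1c', hc'_def]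
          field_simp
          have hP2 : (1 - c * 2 * A) ≠ 0 := (by linarith : (0:ℝ) < 1 - c * 2 * A).ne'
          have hQ2 : (1 - c * 2 * (x 0 ^ 2 + A)) ≠ 0 :=
            (by linarith : (0:ℝ) < 1 - c * 2 * (x 0 ^ 2 + A)).ne'
          rw [div_eq_div_iff (mul_ne_zero hP2 hQ2) hQ2]; ring
        rw [hQP, harg]
        have h3 : Real.sqrt (1 - 2 * c * A) ≠ 0 := by positivity
        have h4 : Real.sqrt (1 - 2 * c * (x 0 ^ 2 + A)) ≠ 0 := by positivity
        field_simp



lemma pi_pow {α : Type*} [MeasurableSpace α] (ν : Measure α) [IsProbabilityMeasure ν]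
    (f : α → ℝ) (hf : Integrable f ν) : ∀ n : ℕ,
    Integrable (fun r : Fin n → α => ∏ j, f (r j)) (Measure.pi fun _ => ν) ∧
    ∫ r : Fin n → α, ∏ j, f (r j) ∂(Measure.pi fun _ => ν) = (∫ a, f a ∂ν) ^ n := by
  intro n
  induction n with
  | zero => exact ⟨by simpa using integrable_const 1, by simp⟩
  | succ n ih =>
      set e := MeasurableEquiv.piFinSuccAbove (fun _ : Fin (n + 1) => α) 0 with he_def
      have MP := measurePreserving_piFinSuccAbove (fun _ : Fin (n + 1) => ν) 0
      set g : α × (Fin n → α) → ℝ := fun p => f p.1 * ∏ j, f (p.2 j) with hg_def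
      have he_app : ∀ r : Fin (n + 1) → α, e r = (r 0, fun i => r i.succ) := by
        intro r
        show (Fin.insertNthEquiv (fun _ => α) 0).symm r = _
        simp [Fin.insertNthEquiv_zero]
        rfl
      have hcomp : (fun r : Fin (n + 1) → α => ∏ j, f (r j)) = g ∘ e := by
        funext r
        simp only [Function.comp_apply, he_app r, hg_def]
        rw [Fin.prod_univ_succ (f := fun j => f (r j))]
      have hg_int : Integrable g (ν.prod (Measure.pi fun _ : Fin n => ν)) :=
        hf.mul_prod ih.1
      constructor
      · rw [hcomp]
        exact (MP.integrable_comp_emb e.measurableEmbedding).2 hg_int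
      · rw [hcomp, show ∫ r, (g ∘ e) r ∂(Measure.pi fun _ : Fin (n + 1) => ν)
            = ∫ p, g p ∂(ν.prod (Measure.pi fun _ : Fin n => ν)) from MP.integral_comp' g,
          hg_def]
        rw [integral_prod_mul f (fun y : Fin n → α => ∏ j, f (y j)), ih.2, pow_succ]
        ring

lemma log_ineq_up {t : ℝ} (h0 : 0 ≤ t) (h1 : t ≤ 1) :
    Real.log (1 + t) ≤ t - t ^ 2 / 2 + t ^ 3 / 2 := by
  set F : ℝ → ℝ := fun u => u - u ^ 2 / 2 + u ^ 3 / 3 - Real.log (1 + u) with hF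
  have hd : ∀ u ∈ Set.Ioo (0 : ℝ) 1, HasDerivAt F (1 - u + u ^ 2 - (1 + u)⁻¹) u := by
    intro u hu
    have h1u : (0 : ℝ) < 1 + u := by have := hu.1; linarith
    have hlog : HasDerivAt (fun v : ℝ => Real.log (1 + v)) ((1 : ℝ) / (1 + u)) u := by
      have := ((hasDerivAt_id u).const_add 1).log h1u.ne'
      simpa using this
    have hpoly : HasDerivAt (fun v : ℝ => v - v ^ 2 / 2 + v ^ 3 / 3)
        (1 - u + u ^ 2) u := by
      have h' := (((hasDerivAt_pow 2 u).div_const 2).const_sub 0)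
      have hx := hasDerivAt_id u
      have := ((hasDerivAt_id u).sub ((hasDerivAt_pow 2 u).div_const 2)).add
        ((hasDerivAt_pow 3 u).div_const 3)
      refine this.congr_deriv ?_
      push_cast
      ring
    have := hpoly.sub hlog
    refine this.congr_deriv ?_
    field_simp
  have hmono : MonotoneOn F (Set.Icc (0 : ℝ) 1) := by
    apply monotoneOn_of_deriv_nonneg (convex_Icc 0 1)
    · apply ContinuousOn.sub
      · fun_prop
      · apply ContinuousOn.log (by fun_prop)
        intro u hu
        have := hu.1
        intro hc
        simp only [Set.mem_Icc] at hu
        nlinarith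
    · intro u hu
      rw [interior_Icc] at hu
      exact ((hd u hu).differentiableAt).differentiableWithinAt
    · intro u hu
      rw [interior_Icc] at hu
      rw [(hd u hu).deriv]
      have h1u : (0 : ℝ) < 1 + u := by have := hu.1; linarith
      have : 1 - u + u ^ 2 - (1 + u)⁻¹ = u ^ 3 / (1 + u) := by
        field_simp
        ring
      rw [this]
      exact div_nonneg (pow_nonneg hu.1.le 3) h1u.le
  have h0' : F 0 = 0 := by simp [hF]
  have := hmono (Set.mem_Icc.mpr ⟨le_refl 0, zero_le_one⟩) (Set.mem_Icc.mpr ⟨h0, h1⟩) h0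
  rw [h0'] at this
  have hF' : 0 ≤ t - t ^ 2 / 2 + t ^ 3 / 3 - Real.log (1 + t) := this
  nlinarith [pow_nonneg h0 3]

lemma log_ineq_down {t : ℝ} (h0 : 0 ≤ t) (h1 : t < 1) :
    Real.log (1 - t) ≤ -t - t ^ 2 / 2 + t ^ 3 / 2 := by
  set F : ℝ → ℝ := fun u => -u - u ^ 2 / 2 + u ^ 3 / 2 - Real.log (1 - u) with hF
  have hd : ∀ u ∈ Set.Ioo (0 : ℝ) t, HasDerivAt F (-1 - u + 3 * u ^ 2 / 2 + (1 - u)⁻¹) u := by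
    intro u hu
    have h1u : (0 : ℝ) < 1 - u := by have := hu.2; linarith
    have hlog : HasDerivAt (fun v : ℝ => Real.log (1 - v)) (-(1 : ℝ) / (1 - u)) u := by
      have := ((hasDerivAt_id u).neg.const_add 1).log h1u.ne'
      simpa [sub_eq_add_neg] using this
    have hpoly : HasDerivAt (fun v : ℝ => -v - v ^ 2 / 2 + v ^ 3 / 2)
        (-1 - u + 3 * u ^ 2 / 2) u := by
      have := (((hasDerivAt_id u).neg).sub ((hasDerivAt_pow 2 u).div_const 2)).add
        ((hasDerivAt_pow 3 u).div_const 2)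
      refine this.congr_deriv ?_
      push_cast
      ring
    have := hpoly.sub hlog
    refine this.congr_deriv ?_
    field_simp
    ring
  have hmono : MonotoneOn F (Set.Icc (0 : ℝ) t) := by
    apply monotoneOn_of_deriv_nonneg (convex_Icc 0 t)
    · apply ContinuousOn.sub
      · fun_prop
      · apply ContinuousOn.log (by fun_prop)
        intro u hu
        simp only [Set.mem_Icc] at hu
        intro hc
        nlinarith
    · intro u hu
      rw [interior_Icc] at hu
      exact ((hd u hu).differentiableAt).differentiableWithinAt
    · intro u hu
      rw [interior_Icc] at hu
      rw [(hd u hu).deriv]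
      have h1u : (0 : ℝ) < 1 - u := by have := hu.2; linarith
      have : -1 - u + 3 * u ^ 2 / 2 + (1 - u)⁻¹ = (u ^ 2 * (5 - 3 * u)) / (2 * (1 - u)) := by
        field_simp
        ring
      rw [this]
      have := hu.1
      have h5 : (0:ℝ) < 5 - 3 * u := by nlinarith
      exact div_nonneg (mul_nonneg (sq_nonneg _) h5.le) (by linarith)
  have h0' : F 0 = 0 := by simp [hF]
  have := hmono (Set.mem_Icc.mpr ⟨le_refl 0, h0⟩) (Set.mem_Icc.mpr ⟨h0, le_refl t⟩) h0
  rw [h0'] at this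
  have hF' : 0 ≤ -t - t ^ 2 / 2 + t ^ 3 / 2 - Real.log (1 - t) := this
  linarith


end JLAux

open JLAux

set_option maxHeartbeats 1000000

theorem JL_gaussian_concentration
    (d N : ℕ) (hN : 1 ≤ N)
    (x : EuclideanSpace ℝ (Fin d)) (hx : x ≠ 0)
    (ε : ℝ) (hε : ε ∈ Set.Ioo (0 : ℝ) 1)
    (μ : Measure (Fin N → Fin d → ℝ))
    (hμ : μ = Measure.pi fun _ : Fin N => Measure.pi fun _ : Fin d => gaussianReal 0 1) :
    ENNReal.ofReal (1 - 2 * Real.exp (-(ε ^ 2 - ε ^ 3) * N / 4)) ≤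
      μ {R : Fin N → Fin d → ℝ |
          |‖x‖ - ‖(WithLp.equiv 2 (Fin N → ℝ)).symm
              (fun j => (1 / Real.sqrt N) * ∑ i, R j i * x i)‖| ≤ ε * ‖x‖} := by
  obtain ⟨hε0, hε1⟩ := hε
  set ν : Measure (Fin d → ℝ) := Measure.pi fun _ : Fin d => gaussianReal 0 1 with hν_def
  have hNr : (0:ℝ) < N := by exact_mod_cast Nat.lt_of_lt_of_le Nat.zero_lt_one hN
  set a : ℝ := ‖x‖ with ha_def
  have ha : 0 < a := by rw [ha_def]; exact norm_pos_iff.mpr hx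
  have ha2 : (∑ i, x i ^ 2) = a ^ 2 := by
    rw [ha_def, EuclideanSpace.norm_eq,
      Real.sq_sqrt (Finset.sum_nonneg fun i _ => by positivity)]
    exact Finset.sum_congr rfl fun i _ => by rw [Real.norm_eq_abs, sq_abs]
  set S : (Fin N → Fin d → ℝ) → ℝ := fun R => ∑ j, (∑ i, R j i * x i) ^ 2 with hS_def
  have hSm : Measurable S := by
    apply Finset.measurable_sum
    intro j _
    apply Measurable.pow _ measurable_const
    exact Finset.measurable_sum _ fun i _ =>
      ((measurable_pi_apply i).comp (measurable_pi_apply j)).mul_const _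
  set A : Set (Fin N → Fin d → ℝ) := {R | S R ≤ (1 + ε) * N * a ^ 2} with hA_def
  set B : Set (Fin N → Fin d → ℝ) := {R | (1 - ε) * N * a ^ 2 ≤ S R} with hB_def
  have hAm : MeasurableSet A := measurableSet_le hSm measurable_const
  have hBm : MeasurableSet B := measurableSet_le measurable_const hSm
  -- inclusion into the target event
  have hsub : A ∩ B ⊆ {R : Fin N → Fin d → ℝ |
      |‖x‖ - ‖(WithLp.equiv 2 (Fin N → ℝ)).symm
          (fun j => (1 / Real.sqrt N) * ∑ i, R j i * x i)‖| ≤ ε * ‖x‖} := by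
    rintro R ⟨hRA, hRB⟩
    rw [hA_def, Set.mem_setOf_eq] at hRA
    rw [hB_def, Set.mem_setOf_eq] at hRB
    rw [Set.mem_setOf_eq]
    have hnorm : ‖(WithLp.equiv 2 (Fin N → ℝ)).symm
        (fun j => (1 / Real.sqrt N) * ∑ i, R j i * x i)‖ = Real.sqrt (S R / N) := by
      rw [EuclideanSpace.norm_eq]
      congr 1
      simp only [WithLp.equiv_symm_apply, PiLp.toLp_apply, Real.norm_eq_abs, sq_abs]
      rw [Finset.sum_congr rfl (fun j _ => by
        rw [mul_pow, div_pow, one_pow, Real.sq_sqrt hNr.le, div_mul_eq_mul_div, one_mul] :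
          ∀ j ∈ Finset.univ, ((1 / Real.sqrt N) * ∑ i, R j i * x i) ^ 2
            = (∑ i, R j i * x i) ^ 2 / (N:ℝ)), ← Finset.sum_div]
    rw [hnorm, ← ha_def]
    have hup : Real.sqrt (S R / N) ≤ (1 + ε) * a := by
      rw [← Real.sqrt_sq (by positivity : (0:ℝ) ≤ (1 + ε) * a)]
      apply Real.sqrt_le_sqrt
      rw [div_le_iff₀ hNr]
      nlinarith
    have hdown : (1 - ε) * a ≤ Real.sqrt (S R / N) := by
      rw [← Real.sqrt_sq (by nlinarith : (0:ℝ) ≤ (1 - ε) * a)]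
      apply Real.sqrt_le_sqrt
      rw [le_div_iff₀ hNr]
      nlinarith
    rw [abs_le]
    constructor <;> nlinarith
  -- chernoff upper tail
  set t1 : ℝ := ε / (2 * (1 + ε) * a ^ 2) with ht1_def
  have ht1 : 0 ≤ t1 := le_of_lt (div_pos hε0 (by nlinarith))
  have ht1a : 2 * t1 * a ^ 2 = ε / (1 + ε) := by
    rw [ht1_def]; field_simp
  have hC1 : 2 * t1 * (∑ i, x i ^ 2) < 1 := by
    rw [ha2, ht1a, div_lt_one (by nlinarith)]; linarith
  have hq1 : 1 - 2 * t1 * (∑ i, x i ^ 2) = (1 + ε)⁻¹ := by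
    rw [ha2, ht1a]; field_simp; ring
  set f1 : (Fin d → ℝ) → ℝ := fun r => Real.exp (t1 * (∑ i, r i * x i) ^ 2) with hf1_def
  have hf1int : Integrable f1 ν := by
    have := (mgf_pi d (fun i => x i) t1 0 hC1).1
    simpa [hf1_def] using this
  have hG1 : ∫ r, f1 r ∂ν = Real.sqrt (1 + ε) := by
    have hv := (mgf_pi d (fun i => x i) t1 0 hC1).2
    simp only [zero_add, ne_eq, OfNat.ofNat_ne_zero, not_false_eq_true, zero_pow, mul_zero,
      zero_div, Real.exp_zero] at hv
    rw [hf1_def, hν_def, hv, hq1, Real.sqrt_inv, one_div, inv_inv]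
  have hprod : ∀ (t : ℝ) (R : Fin N → Fin d → ℝ),
      Real.exp (t * S R) = ∏ j, Real.exp (t * (∑ i, R j i * x i) ^ 2) := by
    intro t R
    rw [hS_def, Finset.mul_sum, Real.exp_sum]
  have hexpint1 : Integrable (fun R => Real.exp (t1 * S R)) μ := by
    rw [show (fun R : Fin N → Fin d → ℝ => Real.exp (t1 * S R))
        = fun R => ∏ j, f1 (R j) from funext fun R => hprod t1 R, hμ]
    exact (pi_pow ν f1 hf1int N).1
  have hmgf1 : mgf S μ t1 = (Real.sqrt (1 + ε)) ^ N := by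
    have h0 : mgf S μ t1 = ∫ R, Real.exp (t1 * S R) ∂μ := rfl
    rw [h0, show (fun R : Fin N → Fin d → ℝ => Real.exp (t1 * S R))
        = fun R => ∏ j, f1 (R j) from funext fun R => hprod t1 R, hμ]
    rw [(pi_pow ν f1 hf1int N).2, hG1]
  have hub : (μ {R | (1 + ε) * N * a ^ 2 ≤ S R}).toReal
      ≤ Real.exp (-t1 * ((1 + ε) * N * a ^ 2)) * mgf S μ t1 := by
    have : IsFiniteMeasure μ := by rw [hμ]; infer_instance
    exact measure_ge_le_exp_mul_mgf ((1 + ε) * N * a ^ 2) ht1 hexpint1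
  have hε1' : (0:ℝ) < 1 + ε := by linarith
  have hsq1 : Real.sqrt (1 + ε) = Real.exp (Real.log (1 + ε) / 2) := by
    have hh : Real.exp (Real.log (1 + ε) / 2) ^ 2 = 1 + ε := by
      rw [sq, ← Real.exp_add, show Real.log (1 + ε) / 2 + Real.log (1 + ε) / 2
        = Real.log (1 + ε) by ring, Real.exp_log hε1']
    conv_lhs => rw [← hh]
    exact Real.sqrt_sq (Real.exp_pos _).le
  have hbd1 : Real.exp (-t1 * ((1 + ε) * N * a ^ 2)) * mgf S μ t1
      ≤ Real.exp (-(ε ^ 2 - ε ^ 3) * N / 4) := by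
    rw [hmgf1, hsq1, ← Real.exp_nat_mul, ← Real.exp_add]
    apply Real.exp_le_exp.mpr
    have harg : -t1 * ((1 + ε) * N * a ^ 2) = -(ε * N / 2) := by
      rw [ht1_def]; field_simp
    rw [harg]
    have hlog := log_ineq_up hε0.le hε1.le
    nlinarith [mul_le_mul_of_nonneg_left hlog (show (0:ℝ) ≤ (N:ℝ) / 2 by positivity)]
  -- chernoff lower tail
  have hε2' : (0:ℝ) < 1 - ε := by linarith
  have hane : a ≠ 0 := ha.ne'
  have h1me : (1:ℝ) - ε ≠ 0 := hε2'.ne'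
  set t2 : ℝ := -(ε / (2 * (1 - ε) * a ^ 2)) with ht2_def
  have ht2 : t2 ≤ 0 := by
    rw [ht2_def, neg_nonpos]
    exact le_of_lt (div_pos hε0 (by positivity))
  have ht2a : 2 * t2 * a ^ 2 = -(ε / (1 - ε)) := by
    rw [ht2_def]; field_simp
  have hC2 : 2 * t2 * (∑ i, x i ^ 2) < 1 := by
    rw [ha2, ht2a]
    have : 0 < ε / (1 - ε) := div_pos hε0 hε2'
    linarith
  have hq2 : 1 - 2 * t2 * (∑ i, x i ^ 2) = (1 - ε)⁻¹ := by
    rw [ha2, ht2a]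
    field_simp
    ring
  set f2 : (Fin d → ℝ) → ℝ := fun r => Real.exp (t2 * (∑ i, r i * x i) ^ 2) with hf2_def
  have hf2int : Integrable f2 ν := by
    have := (mgf_pi d (fun i => x i) t2 0 hC2).1
    simpa [hf2_def] using this
  have hG2 : ∫ r, f2 r ∂ν = Real.sqrt (1 - ε) := by
    have hv := (mgf_pi d (fun i => x i) t2 0 hC2).2
    simp only [zero_add, ne_eq, OfNat.ofNat_ne_zero, not_false_eq_true, zero_pow, mul_zero,
      zero_div, Real.exp_zero] at hv
    rw [hf2_def, hν_def, hv, hq2, Real.sqrt_inv, one_div, inv_inv]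
  have hexpint2 : Integrable (fun R => Real.exp (t2 * S R)) μ := by
    rw [show (fun R : Fin N → Fin d → ℝ => Real.exp (t2 * S R))
        = fun R => ∏ j, f2 (R j) from funext fun R => hprod t2 R, hμ]
    exact (pi_pow ν f2 hf2int N).1
  have hmgf2 : mgf S μ t2 = (Real.sqrt (1 - ε)) ^ N := by
    have h0 : mgf S μ t2 = ∫ R, Real.exp (t2 * S R) ∂μ := rfl
    rw [h0, show (fun R : Fin N → Fin d → ℝ => Real.exp (t2 * S R))
        = fun R => ∏ j, f2 (R j) from funext fun R => hprod t2 R, hμ]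
    rw [(pi_pow ν f2 hf2int N).2, hG2]
  have hlb : (μ {R | S R ≤ (1 - ε) * N * a ^ 2}).toReal
      ≤ Real.exp (-t2 * ((1 - ε) * N * a ^ 2)) * mgf S μ t2 := by
    have : IsFiniteMeasure μ := by rw [hμ]; infer_instance
    exact measure_le_le_exp_mul_mgf ((1 - ε) * N * a ^ 2) ht2 hexpint2
  have hsq2 : Real.sqrt (1 - ε) = Real.exp (Real.log (1 - ε) / 2) := by
    have hh : Real.exp (Real.log (1 - ε) / 2) ^ 2 = 1 - ε := by
      rw [sq, ← Real.exp_add, show Real.log (1 - ε) / 2 + Real.log (1 - ε) / 2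
        = Real.log (1 - ε) by ring, Real.exp_log hε2']
    conv_lhs => rw [← hh]
    exact Real.sqrt_sq (Real.exp_pos _).le
  have hbd2 : Real.exp (-t2 * ((1 - ε) * N * a ^ 2)) * mgf S μ t2
      ≤ Real.exp (-(ε ^ 2 - ε ^ 3) * N / 4) := by
    rw [hmgf2, hsq2, ← Real.exp_nat_mul, ← Real.exp_add]
    apply Real.exp_le_exp.mpr
    have harg : -t2 * ((1 - ε) * N * a ^ 2) = ε * N / 2 := by
      rw [ht2_def]; field_simp
    rw [harg]
    have hlog := log_ineq_down hε0.le hε1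
    nlinarith [mul_le_mul_of_nonneg_left hlog (show (0:ℝ) ≤ (N:ℝ) / 2 by positivity)]
  -- combine
  have hPμ : IsProbabilityMeasure μ := by rw [hμ]; infer_instance
  have hfin : ∀ s : Set (Fin N → Fin d → ℝ), μ s ≠ ⊤ := fun s => measure_ne_top μ s
  have hAc : (μ Aᶜ).toReal ≤ Real.exp (-(ε ^ 2 - ε ^ 3) * N / 4) := by
    refine le_trans (le_trans (ENNReal.toReal_mono (hfin _) (measure_mono ?_)) hub) hbd1
    intro R hR
    rw [Set.mem_compl_iff, hA_def, Set.mem_setOf_eq, not_le] at hR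
    exact le_of_lt hR
  have hBc : (μ Bᶜ).toReal ≤ Real.exp (-(ε ^ 2 - ε ^ 3) * N / 4) := by
    refine le_trans (le_trans (ENNReal.toReal_mono (hfin _) (measure_mono ?_)) hlb) hbd2
    intro R hR
    rw [Set.mem_compl_iff, hB_def, Set.mem_setOf_eq, not_le] at hR
    exact le_of_lt hR
  have hcompl : (μ (A ∩ B)ᶜ).toReal = 1 - (μ (A ∩ B)).toReal := by
    have hc := measure_compl (hAm.inter hBm) (hfin _)
    rw [measure_univ] at hc
    rw [hc, ENNReal.toReal_sub_of_le prob_le_one ENNReal.one_ne_top, ENNReal.toReal_one]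
  have hunion : (μ (A ∩ B)ᶜ).toReal ≤ (μ Aᶜ).toReal + (μ Bᶜ).toReal := by
    rw [Set.compl_inter]
    refine le_trans (ENNReal.toReal_mono ?_ (measure_union_le _ _)) ?_
    · exact ENNReal.add_ne_top.mpr ⟨hfin _, hfin _⟩
    · rw [ENNReal.toReal_add (hfin _) (hfin _)]
  have hmain : 1 - 2 * Real.exp (-(ε ^ 2 - ε ^ 3) * N / 4) ≤ (μ (A ∩ B)).toReal := by
    linarith
  calc ENNReal.ofReal (1 - 2 * Real.exp (-(ε ^ 2 - ε ^ 3) * N / 4))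
      ≤ ENNReal.ofReal ((μ (A ∩ B)).toReal) := ENNReal.ofReal_le_ofReal hmain
    _ = μ (A ∩ B) := ENNReal.ofReal_toReal (hfin _)
    _ ≤ _ := measure_mono hsub
end

section
/- Let (A, 𝒜, p) be a probability space, let X ⊆ ℝ^d be a measurable set with a probability measure μ on X, and let φ : X × A → ℝ be measurable with |φ(x, α)| ≤ 1 for all x ∈ X and α ∈ A. Let C > 0 and let β : A → ℝ be measurable with |β(α)| ≤ C for all α, and define g : X → ℝ by g(x) = ∫_A β(α) φ(x, α) dp(α). Then for every N ∈ ℕ with N ≥ 1 and every δ ∈ (0,1), there is a measurable set E ⊆ A^N with p^{⊗N}(E) ≥ 1 − δ such that for every (α_1, …, α_N) ∈ E there exist coefficients w_1, …, w_N ∈ ℝ with ( ∫_X ( g(x) − ∑_{j=1}^N w_j φ(x, α_j) )² dμ(x) )^{1/2} ≤ (C / √N) · ( 1 + √( 2 log(1/δ) ) ). -/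
open Real

private lemma RR_aux_hoeffding_core (q : ℝ) (hq0 : 0 ≤ q) (hq1 : q ≤ 1) (s : ℝ) :
    1 - q + q * Real.exp s ≤ Real.exp (q * s + s ^ 2 / 8) := by
  have hd : ∀ u : ℝ, 0 < 1 - q + q * Real.exp u := by
    intro u
    rcases lt_or_eq_of_le hq1 with h | h
    · have : 0 ≤ q * Real.exp u := mul_nonneg hq0 (exp_pos u).le
      linarith
    · subst h; simpa using exp_pos u
  set F : ℝ → ℝ := fun u => q * u + u ^ 2 / 8 - Real.log (1 - q + q * Real.exp u) with hF
  set F' : ℝ → ℝ := fun u => q + u / 4 - q * Real.exp u / (1 - q + q * Real.exp u) with hF'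
  have hder : ∀ u : ℝ, HasDerivAt F (F' u) u := by
    intro u
    have hden : HasDerivAt (fun v : ℝ => 1 - q + q * Real.exp v) (q * Real.exp u) u :=
      ((Real.hasDerivAt_exp u).const_mul q).const_add (1 - q)
    have hlog : HasDerivAt (fun v : ℝ => Real.log (1 - q + q * Real.exp v))
        (q * Real.exp u / (1 - q + q * Real.exp u)) u := hden.log (hd u).ne'
    have hpoly : HasDerivAt (fun v : ℝ => q * v + v ^ 2 / 8) (q + u / 4) u := by
      have h1 : HasDerivAt (fun v : ℝ => q * v) q u := by simpa using (hasDerivAt_id u).const_mul q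
      have h2 : HasDerivAt (fun v : ℝ => v ^ 2 / 8) (u / 4) u := by
        have := (hasDerivAt_pow 2 u).div_const 8
        exact this.congr_deriv (by rw [show (2:ℕ) - 1 = 1 from rfl]; push_cast; ring)
      exact h1.add h2
    exact hpoly.sub hlog
  have hder' : ∀ u : ℝ, HasDerivAt F'
      (1 / 4 - (q * Real.exp u * (1 - q + q * Real.exp u) - q * Real.exp u * (q * Real.exp u)) /
        (1 - q + q * Real.exp u) ^ 2) u := by
    intro u
    have hnum : HasDerivAt (fun v : ℝ => q * Real.exp v) (q * Real.exp u) u :=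
      (Real.hasDerivAt_exp u).const_mul q
    have hden : HasDerivAt (fun v : ℝ => 1 - q + q * Real.exp v) (q * Real.exp u) u :=
      ((Real.hasDerivAt_exp u).const_mul q).const_add (1 - q)
    have hq : HasDerivAt (fun v : ℝ => q * Real.exp v / (1 - q + q * Real.exp v))
        ((q * Real.exp u * (1 - q + q * Real.exp u) - q * Real.exp u * (q * Real.exp u)) /
          (1 - q + q * Real.exp u) ^ 2) u := hnum.div hden (hd u).ne'
    have hpoly : HasDerivAt (fun v : ℝ => q + v / 4) (1 / 4) u := by
      simpa using ((hasDerivAt_id u).div_const 4).const_add q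
    exact hpoly.sub hq
  have hder'_nonneg : ∀ u : ℝ, 0 ≤ 1 / 4 -
      (q * Real.exp u * (1 - q + q * Real.exp u) - q * Real.exp u * (q * Real.exp u)) /
        (1 - q + q * Real.exp u) ^ 2 := by
    intro u
    have hd2 : (0:ℝ) < (1 - q + q * Real.exp u) ^ 2 := pow_pos (hd u) 2
    rw [sub_nonneg, div_le_iff₀ hd2]
    nlinarith [sq_nonneg ((1 - q) - q * Real.exp u), exp_pos u, hd u]
  have hF'mono : Monotone F' := by
    apply monotone_of_deriv_nonneg
    · exact fun u => (hder' u).differentiableAt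
    · intro u; rw [(hder' u).deriv]; exact hder'_nonneg u
  have hF'0 : F' 0 = 0 := by
    simp [hF']
  have hFdiff : Differentiable ℝ F := fun u => (hder u).differentiableAt
  have hF0 : F 0 = 0 := by simp [hF]
  have key : ∀ u : ℝ, 0 ≤ F u := by
    intro u
    rcases le_total 0 u with h | h
    · have hmono : MonotoneOn F (Set.Ici (0 : ℝ)) := by
        apply monotoneOn_of_deriv_nonneg (convex_Ici 0) hFdiff.continuous.continuousOn
          (hFdiff.differentiableOn)
        intro x hx
        rw [(hder x).deriv]
        rw [interior_Ici] at hx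
        have := hF'mono (le_of_lt hx)
        rw [hF'0] at this; exact this
      have := hmono Set.self_mem_Ici (Set.mem_Ici.2 h) h
      rwa [hF0] at this
    · have hanti : AntitoneOn F (Set.Iic (0 : ℝ)) := by
        apply antitoneOn_of_deriv_nonpos (convex_Iic 0) hFdiff.continuous.continuousOn
          (hFdiff.differentiableOn)
        intro x hx
        rw [(hder x).deriv]
        rw [interior_Iic] at hx
        have := hF'mono (le_of_lt hx)
        rw [hF'0] at this; exact this
      have := hanti (Set.mem_Iic.2 h) Set.self_mem_Iic h
      rwa [hF0] at this
  have := key s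
  have hlog : Real.log (1 - q + q * Real.exp s) ≤ q * s + s ^ 2 / 8 := by
    simp only [hF] at this; linarith
  calc 1 - q + q * Real.exp s = Real.exp (Real.log (1 - q + q * Real.exp s)) := by
        rw [Real.exp_log (hd s)]
    _ ≤ Real.exp (q * s + s ^ 2 / 8) := Real.exp_le_exp.2 hlog

open Real MeasureTheory

private lemma RR_aux_integrable {A : Type*} [MeasurableSpace A] {p : Measure A}
    [IsFiniteMeasure p] {f : A → ℝ} (hf : Measurable f) {M : ℝ} (hM : ∀ a, |f a| ≤ M) :
    Integrable f p :=
  (integrable_const M).mono' hf.aestronglyMeasurable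
    (Filter.Eventually.of_forall fun a => by simpa [Real.norm_eq_abs] using hM a)

private lemma RR_aux_hoeffding {A : Type*} [MeasurableSpace A] (p : Measure A)
    [IsProbabilityMeasure p] (X : A → ℝ) (hX : Measurable X) (lo hi : ℝ)
    (hlo : ∀ a, lo ≤ X a) (hhi : ∀ a, X a ≤ hi) (l : ℝ) :
    ∫ a, Real.exp (l * X a) ∂p ≤ Real.exp (l * ∫ a, X a ∂p + l ^ 2 * (hi - lo) ^ 2 / 8) := by
  have hA : Nonempty A := by
    by_contra h
    rw [not_nonempty_iff] at h
    have : p Set.univ = 1 := measure_univ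
    rw [Set.univ_eq_empty_iff.2 h, measure_empty] at this
    exact zero_ne_one this
  obtain ⟨a0⟩ := hA
  have hlohi : lo ≤ hi := (hlo a0).trans (hhi a0)
  have hXbdd : ∀ a, |X a| ≤ max |lo| |hi| := fun a =>
    abs_le.2 ⟨le_trans (neg_le_neg (le_max_left |lo| |hi|)) (le_trans (neg_abs_le lo) (hlo a)),
      le_trans (hhi a) (le_trans (le_abs_self hi) (le_max_right |lo| |hi|))⟩
  have hXint : Integrable X p := RR_aux_integrable hX hXbdd
  set m : ℝ := ∫ a, X a ∂p with hm
  have hmlo : lo ≤ m := by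
    calc lo = ∫ _ : A, lo ∂p := by simp
    _ ≤ m := integral_mono (integrable_const lo) hXint hlo
  have hmhi : m ≤ hi := by
    calc m ≤ ∫ _ : A, hi ∂p := integral_mono hXint (integrable_const hi) hhi
    _ = hi := by simp
  rcases eq_or_lt_of_le hlohi with heq | hlt
  · -- degenerate case: X is constant
    have hXc : ∀ a, X a = lo := fun a => le_antisymm (heq ▸ hhi a) (hlo a)
    have : (fun a => Real.exp (l * X a)) = fun _ => Real.exp (l * lo) := by
      funext a; rw [hXc a]
    rw [this]
    have hmeq : m = lo := by
      rw [hm]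
      have : X = fun _ => lo := funext hXc
      rw [this]; simp
    rw [integral_const]; simp only [probReal_univ, one_smul]
    rw [hmeq]
    apply Real.exp_le_exp.2
    nlinarith [sq_nonneg (l * (hi - lo))]
  · set L : ℝ := hi - lo with hL
    have hLpos : 0 < L := sub_pos.2 hlt
    set c1 : ℝ := Real.exp (l * lo) with hc1
    set c2 : ℝ := Real.exp (l * hi) with hc2
    set k : ℝ := (c2 - c1) / L with hk
    set b : ℝ := (hi * c1 - lo * c2) / L with hb
    have hpt : ∀ a, Real.exp (l * X a) ≤ b + X a * k := by
      intro a
      have ha' : 0 ≤ (hi - X a) / L := div_nonneg (sub_nonneg.2 (hhi a)) hLpos.le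
      have hb' : 0 ≤ (X a - lo) / L := div_nonneg (sub_nonneg.2 (hlo a)) hLpos.le
      have hab : (hi - X a) / L + (X a - lo) / L = 1 := by
        field_simp; rw [hL]; ring
      have := convexOn_exp.2 (Set.mem_univ (l * lo)) (Set.mem_univ (l * hi)) ha' hb' hab
      simp only [smul_eq_mul] at this
      have harg : (hi - X a) / L * (l * lo) + (X a - lo) / L * (l * hi) = l * X a := by
        field_simp; ring
      rw [harg] at this
      refine this.trans (le_of_eq ?_)
      rw [hb, hk, hc1, hc2]
      field_simp
      ring
    have hexp_int : Integrable (fun a => Real.exp (l * X a)) p := by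
      apply RR_aux_integrable (by fun_prop) (M := Real.exp (|l| * max |lo| |hi|))
      intro a
      rw [abs_of_pos (exp_pos _)]
      apply Real.exp_le_exp.2
      calc l * X a ≤ |l * X a| := le_abs_self _
      _ = |l| * |X a| := abs_mul _ _
      _ ≤ |l| * max |lo| |hi| := by
          exact mul_le_mul_of_nonneg_left (hXbdd a) (abs_nonneg l)
    have hstep2 : ∫ a, Real.exp (l * X a) ∂p ≤ b + m * k := by
      calc ∫ a, Real.exp (l * X a) ∂p ≤ ∫ a, (b + X a * k) ∂p :=
        integral_mono hexp_int ((integrable_const b).add (hXint.mul_const k)) hpt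
      _ = b + m * k := by
        rw [integral_add (integrable_const b) (hXint.mul_const k), integral_const,
          integral_mul_const]
        simp [measure_univ, hm]
    set q : ℝ := (m - lo) / L with hq
    have hq0 : 0 ≤ q := div_nonneg (sub_nonneg.2 hmlo) hLpos.le
    have hq1 : q ≤ 1 := by
      rw [hq, div_le_one hLpos]; rw [hL]; linarith
    have hcore := RR_aux_hoeffding_core q hq0 hq1 (l * L)
    have hident : b + m * k = c1 * (1 - q + q * Real.exp (l * L)) := by
      rw [hb, hk, hq, hc1, hc2]
      have : l * hi = l * lo + l * L := by rw [hL]; ring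
      rw [this, Real.exp_add]
      field_simp
      ring
    have hfinal : c1 * Real.exp (q * (l * L) + (l * L) ^ 2 / 8) =
        Real.exp (l * m + l ^ 2 * (hi - lo) ^ 2 / 8) := by
      rw [hc1, ← Real.exp_add]
      congr 1
      have : q * (l * L) = l * (m - lo) := by
        rw [hq]; field_simp
      rw [this, hL]
      ring
    calc ∫ a, Real.exp (l * X a) ∂p ≤ b + m * k := hstep2
    _ = c1 * (1 - q + q * Real.exp (l * L)) := hident
    _ ≤ c1 * Real.exp (q * (l * L) + (l * L) ^ 2 / 8) := by
        apply mul_le_mul_of_nonneg_left hcore (exp_pos _).le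
    _ = _ := hfinal
private lemma RR_aux_nonempty {A : Type*} [MeasurableSpace A] (p : MeasureTheory.Measure A)
    [MeasureTheory.IsProbabilityMeasure p] : Nonempty A := by
  by_contra h
  rw [not_nonempty_iff] at h
  have : p Set.univ = 1 := measure_univ
  rw [Set.univ_eq_empty_iff.2 h, measure_empty] at this
  exact zero_ne_one this

private lemma RR_aux_abs_integral_le {A : Type*} [MeasurableSpace A]
    (p : MeasureTheory.Measure A) [MeasureTheory.IsProbabilityMeasure p] (f : A → ℝ) (M : ℝ)
    (h : ∀ a, |f a| ≤ M) : |∫ a, f a ∂p| ≤ M := by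
  have := norm_integral_le_of_norm_le_const (μ := p) (f := f) (C := M)
    (Filter.Eventually.of_forall fun a => by simpa [Real.norm_eq_abs] using h a)
  simpa [Real.norm_eq_abs, measure_univ] using this

private lemma RR_aux_cons_measurable {A : Type*} [MeasurableSpace A] (n : ℕ) :
    Measurable (fun z : A × (Fin n → A) => (Fin.cons z.1 z.2 : Fin (n + 1) → A)) := by
  rw [measurable_pi_iff]
  intro i
  induction i using Fin.cases with
  | zero => simpa using measurable_fst
  | succ j => simp only [Fin.cons_succ]; exact (measurable_pi_apply j).comp measurable_snd

private lemma RR_aux_consa_measurable {A : Type*} [MeasurableSpace A] (n : ℕ)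
    (ys : Fin n → A) : Measurable (fun a : A => (Fin.cons a ys : Fin (n + 1) → A)) := by
  have : (fun a : A => (Fin.cons a ys : Fin (n + 1) → A)) =
      (fun z : A × (Fin n → A) => (Fin.cons z.1 z.2 : Fin (n + 1) → A)) ∘ (fun a => (a, ys)) := rfl
  rw [this]
  exact (RR_aux_cons_measurable n).comp (measurable_id.prodMk measurable_const)

private lemma RR_aux_mcdiarmid_mgf {A : Type*} [MeasurableSpace A]
    (p : MeasureTheory.Measure A) [MeasureTheory.IsProbabilityMeasure p] (n : ℕ) :
    ∀ (F : (Fin n → A) → ℝ), Measurable F → ∀ M : ℝ, (∀ αs, |F αs| ≤ M) → ∀ c : ℝ,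
    (∀ (k : Fin n) (αs : Fin n → A) (a : A), |F αs - F (Function.update αs k a)| ≤ c) →
    ∀ l : ℝ,
    ∫ αs, Real.exp (l * F αs) ∂(MeasureTheory.Measure.pi fun _ : Fin n => p) ≤
      Real.exp (l * ∫ αs, F αs ∂(MeasureTheory.Measure.pi fun _ : Fin n => p) +
        n * (l ^ 2 * c ^ 2 / 8)) := by
  induction n with
  | zero =>
      intro F hF M hM c hdiff l
      rw [integral_unique, integral_unique]
      simp [measure_univ]
  | succ n IH =>
      intro F hF M hM c hdiff l
      obtain ⟨a0⟩ := RR_aux_nonempty p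
      have hc : 0 ≤ c := le_trans (abs_nonneg _) (hdiff 0 (fun _ => a0) a0)
      have hMnn : 0 ≤ M := le_trans (abs_nonneg _) (hM fun _ => a0)
      have mp := MeasureTheory.measurePreserving_piFinSuccAbove (fun _ : Fin (n + 1) => p) 0
      set e := MeasurableEquiv.piFinSuccAbove (fun _ : Fin (n + 1) => A) 0 with he
      have hesymm : ∀ z : A × (Fin n → A), e.symm z = Fin.cons z.1 z.2 := by
        intro z
        rw [he, MeasurableEquiv.piFinSuccAbove_symm_apply, Fin.insertNthEquiv_zero]
        rfl
      have hcomp : ∀ h : (Fin (n + 1) → A) → ℝ,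
          ∫ αs, h αs ∂(MeasureTheory.Measure.pi fun _ : Fin (n + 1) => p) =
            ∫ z : A × (Fin n → A), h (Fin.cons z.1 z.2)
              ∂(p.prod (MeasureTheory.Measure.pi fun _ : Fin n => p)) := by
        intro h
        rw [← MeasureTheory.MeasurePreserving.integral_comp' (MeasureTheory.MeasurePreserving.symm e mp) h]
        congr 1
        funext z
        rw [hesymm z]
      -- the conditional function G
      set G : (Fin n → A) → ℝ := fun ys => ∫ a, F (Fin.cons a ys) ∂p with hG
      have hF1meas : Measurable fun z : A × (Fin n → A) => F (Fin.cons z.1 z.2) :=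
        hF.comp (RR_aux_cons_measurable n)
      have hGmeas : Measurable G := by
        have : Measurable fun z : (Fin n → A) × A => F (Fin.cons z.2 z.1) :=
          hF1meas.comp measurable_swap
        exact this.stronglyMeasurable.integral_prod_right'.measurable
      have hGbdd : ∀ ys, |G ys| ≤ M := fun ys =>
        RR_aux_abs_integral_le p _ M fun a => hM _
      have hGdiff : ∀ (k : Fin n) (ys : Fin n → A) (a' : A),
          |G ys - G (Function.update ys k a')| ≤ c := by
        intro k ys a'
        have hint1 : MeasureTheory.Integrable (fun a => F (Fin.cons a ys)) p :=
          RR_aux_integrable (hF.comp (RR_aux_consa_measurable n ys)) (fun a => hM _)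
        have hint2 : MeasureTheory.Integrable
            (fun a => F (Fin.cons a (Function.update ys k a'))) p :=
          RR_aux_integrable (hF.comp (RR_aux_consa_measurable n _)) (fun a => hM _)
        rw [hG]
        simp only
        rw [← MeasureTheory.integral_sub hint1 hint2]
        apply RR_aux_abs_integral_le
        intro a
        have : Fin.cons a (Function.update ys k a') =
            Function.update (Fin.cons a ys : Fin (n+1) → A) k.succ a' := by
          funext i
          rw [Fin.cons_update]
        rw [this]
        exact hdiff k.succ (Fin.cons a ys) a'
      have hinner : ∀ ys : Fin n → A,
          ∫ a, Real.exp (l * F (Fin.cons a ys)) ∂p ≤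
            Real.exp (l * G ys + l ^ 2 * c ^ 2 / 8) := by
        intro ys
        set X : A → ℝ := fun a => F (Fin.cons a ys) with hX
        have hXmeas : Measurable X := hF.comp (RR_aux_consa_measurable n ys)
        have hosc : ∀ a a', |X a - X a'| ≤ c := by
          intro a a'
          have : (Fin.cons a' ys : Fin (n+1) → A) =
              Function.update (Fin.cons a ys : Fin (n+1) → A) 0 a' :=
            (Fin.update_cons_zero ..).symm
          rw [hX]
          simp only
          rw [this]
          exact hdiff 0 (Fin.cons a ys) a'
        set lo : ℝ := sInf (Set.range X) with hlo_def
        have hbdd : BddBelow (Set.range X) := by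
          refine ⟨-M, ?_⟩
          rintro _ ⟨a, rfl⟩
          have := hM (Fin.cons a ys)
          rw [abs_le] at this
          exact this.1
        have hlo : ∀ a, lo ≤ X a := fun a => csInf_le hbdd ⟨a, rfl⟩
        have hhi : ∀ a, X a ≤ lo + c := by
          intro a
          have : X a - c ≤ lo := by
            apply le_csInf ⟨X a0, Set.mem_range_self a0⟩
            rintro _ ⟨a', rfl⟩
            have := hosc a a'
            rw [abs_le] at this
            linarith [this.1]
          linarith
        have hhoef := RR_aux_hoeffding p X hXmeas lo (lo + c) hlo hhi l
        have hXG : ∫ a, X a ∂p = G ys := rfl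
        rw [hXG] at hhoef
        simpa using hhoef
      set K : ℝ := l ^ 2 * c ^ 2 / 8 with hK
      have hFint : MeasureTheory.Integrable (fun z : A × (Fin n → A) => F (Fin.cons z.1 z.2))
          (p.prod (MeasureTheory.Measure.pi fun _ : Fin n => p)) :=
        RR_aux_integrable hF1meas (fun z => hM _)
      have hFexpint : MeasureTheory.Integrable
          (fun z : A × (Fin n → A) => Real.exp (l * F (Fin.cons z.1 z.2)))
          (p.prod (MeasureTheory.Measure.pi fun _ : Fin n => p)) := by
        apply RR_aux_integrable (Real.measurable_exp.comp (hF1meas.const_mul l))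
          (M := Real.exp (|l| * M))
        intro z
        simp only [Function.comp_apply]
        rw [abs_of_pos (Real.exp_pos _)]
        apply Real.exp_le_exp.2
        calc l * F (Fin.cons z.1 z.2) ≤ |l * F (Fin.cons z.1 z.2)| := le_abs_self _
        _ = |l| * |F (Fin.cons z.1 z.2)| := abs_mul _ _
        _ ≤ |l| * M := mul_le_mul_of_nonneg_left (hM _) (abs_nonneg l)
      have hRHSint : MeasureTheory.Integrable (fun ys : Fin n → A => Real.exp (l * G ys + K))
          (MeasureTheory.Measure.pi fun _ : Fin n => p) := by
        apply RR_aux_integrable (Real.measurable_exp.comp ((hGmeas.const_mul l).add_const K))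
          (M := Real.exp (|l| * M + K))
        intro ys
        simp only [Function.comp_apply]
        rw [abs_of_pos (Real.exp_pos _)]
        apply Real.exp_le_exp.2
        have : l * G ys ≤ |l| * M := by
          calc l * G ys ≤ |l * G ys| := le_abs_self _
          _ = |l| * |G ys| := abs_mul _ _
          _ ≤ |l| * M := mul_le_mul_of_nonneg_left (hGbdd _) (abs_nonneg l)
        linarith
      have step1 : ∫ αs, Real.exp (l * F αs) ∂(MeasureTheory.Measure.pi fun _ : Fin (n+1) => p) =
          ∫ ys, (∫ a, Real.exp (l * F (Fin.cons a ys)) ∂p)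
            ∂(MeasureTheory.Measure.pi fun _ : Fin n => p) := by
        rw [hcomp fun αs => Real.exp (l * F αs)]
        exact MeasureTheory.integral_prod_symm _ hFexpint
      have step2 : ∫ ys, (∫ a, Real.exp (l * F (Fin.cons a ys)) ∂p)
            ∂(MeasureTheory.Measure.pi fun _ : Fin n => p) ≤
          ∫ ys, Real.exp (l * G ys + K) ∂(MeasureTheory.Measure.pi fun _ : Fin n => p) := by
        apply MeasureTheory.integral_mono_of_nonneg
        · exact Filter.Eventually.of_forall fun ys =>
            MeasureTheory.integral_nonneg fun a => (Real.exp_pos _).le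
        · exact hRHSint
        · exact Filter.Eventually.of_forall hinner
      have step3 : ∫ ys, Real.exp (l * G ys + K) ∂(MeasureTheory.Measure.pi fun _ : Fin n => p) =
          (∫ ys, Real.exp (l * G ys) ∂(MeasureTheory.Measure.pi fun _ : Fin n => p)) *
            Real.exp K := by
        simp_rw [Real.exp_add]
        rw [MeasureTheory.integral_mul_const]
      have step4 := IH G hGmeas M hGbdd c hGdiff l
      have step5 : ∫ ys, G ys ∂(MeasureTheory.Measure.pi fun _ : Fin n => p) =
          ∫ αs, F αs ∂(MeasureTheory.Measure.pi fun _ : Fin (n+1) => p) := by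
        rw [hcomp F]
        exact (MeasureTheory.integral_prod_symm _ hFint).symm
      calc ∫ αs, Real.exp (l * F αs) ∂(MeasureTheory.Measure.pi fun _ : Fin (n+1) => p) ≤
          ∫ ys, Real.exp (l * G ys + K) ∂(MeasureTheory.Measure.pi fun _ : Fin n => p) := by
            rw [step1]; exact step2
      _ = (∫ ys, Real.exp (l * G ys) ∂(MeasureTheory.Measure.pi fun _ : Fin n => p)) *
            Real.exp K := step3
      _ ≤ Real.exp (l * ∫ ys, G ys ∂(MeasureTheory.Measure.pi fun _ : Fin n => p) +
            n * (l ^ 2 * c ^ 2 / 8)) * Real.exp K :=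
          mul_le_mul_of_nonneg_right step4 (Real.exp_pos _).le
      _ = _ := by
          rw [← Real.exp_add, step5, hK]
          congr 1
          push_cast
          ring
private lemma RR_aux_mcdiarmid_tail {A : Type*} [MeasurableSpace A]
    (p : MeasureTheory.Measure A) [MeasureTheory.IsProbabilityMeasure p] (n : ℕ) (hn : 1 ≤ n)
    (F : (Fin n → A) → ℝ) (hF : Measurable F) (M : ℝ) (hM : ∀ αs, |F αs| ≤ M) (c : ℝ)
    (hc : 0 < c)
    (hdiff : ∀ (k : Fin n) (αs : Fin n → A) (a : A), |F αs - F (Function.update αs k a)| ≤ c)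
    (ε : ℝ) (hε : 0 ≤ ε) :
    ((MeasureTheory.Measure.pi fun _ : Fin n => p)
        {αs | (∫ αs, F αs ∂(MeasureTheory.Measure.pi fun _ : Fin n => p)) + ε ≤ F αs}).toReal ≤
      Real.exp (-(2 * ε ^ 2) / (n * c ^ 2)) := by
  set pn := MeasureTheory.Measure.pi fun _ : Fin n => p with hpn
  set m := ∫ αs, F αs ∂pn with hm
  set l : ℝ := 4 * ε / (n * c ^ 2) with hl
  have hnpos : (0:ℝ) < n := by exact_mod_cast hn
  have hl0 : 0 ≤ l := by positivity
  have hmgf := RR_aux_mcdiarmid_mgf p n F hF M hM c hdiff l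
  have hexpint : MeasureTheory.Integrable (fun αs => Real.exp (l * F αs)) pn := by
    apply RR_aux_integrable (Real.measurable_exp.comp (hF.const_mul l))
      (M := Real.exp (|l| * M))
    intro αs
    simp only [Function.comp_apply]
    rw [abs_of_pos (Real.exp_pos _)]
    apply Real.exp_le_exp.2
    calc l * F αs ≤ |l * F αs| := le_abs_self _
    _ = |l| * |F αs| := abs_mul _ _
    _ ≤ |l| * M := mul_le_mul_of_nonneg_left (hM _) (abs_nonneg l)
  have hmarkov := MeasureTheory.mul_meas_ge_le_integral_of_nonneg
    (μ := pn) (f := fun αs => Real.exp (l * F αs))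
    (Filter.Eventually.of_forall fun αs => (Real.exp_pos _).le) hexpint (Real.exp (l * (m + ε)))
  have hsub : {αs | m + ε ≤ F αs} ⊆ {αs | Real.exp (l * (m + ε)) ≤ Real.exp (l * F αs)} := by
    intro αs hαs
    exact Real.exp_le_exp.2 (mul_le_mul_of_nonneg_left hαs hl0)
  have hmono : (pn {αs | m + ε ≤ F αs}).toReal ≤
      (pn {αs | Real.exp (l * (m + ε)) ≤ Real.exp (l * F αs)}).toReal := by
    apply ENNReal.toReal_mono (MeasureTheory.measure_ne_top _ _)
    exact MeasureTheory.measure_mono hsub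
  have hchain : Real.exp (l * (m + ε)) * (pn {αs | m + ε ≤ F αs}).toReal ≤
      Real.exp (l * m + n * (l ^ 2 * c ^ 2 / 8)) :=
    le_trans (mul_le_mul_of_nonneg_left hmono (Real.exp_pos _).le) (hmarkov.trans hmgf)
  have hres : (pn {αs | m + ε ≤ F αs}).toReal ≤
      Real.exp (l * m + n * (l ^ 2 * c ^ 2 / 8)) / Real.exp (l * (m + ε)) := by
    rw [le_div_iff₀ (Real.exp_pos _)]
    linarith [hchain]
  refine hres.trans (le_of_eq ?_)
  rw [← Real.exp_sub]
  congr 1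
  rw [hl]
  have hc2 : c ^ 2 ≠ 0 := by positivity
  field_simp
  ring
private lemma RR_aux_integral_pi_prod {A : Type*} [MeasurableSpace A]
    (p : MeasureTheory.Measure A) [MeasureTheory.IsProbabilityMeasure p] (N : ℕ)
    (f : Fin N → A → ℝ) (hf : ∀ i, MeasureTheory.Integrable (f i) p) :
    ∫ αs, ∏ i, f i (αs i) ∂(MeasureTheory.Measure.pi fun _ : Fin N => p) =
      ∏ i, ∫ a, f i a ∂p := by
  letI : MeasureTheory.MeasureSpace A := ⟨p⟩
  exact MeasureTheory.integral_fin_nat_prod_eq_prod (E := fun _ : Fin N => A) f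

private lemma RR_aux_integral_pi_single {A : Type*} [MeasurableSpace A]
    (p : MeasureTheory.Measure A) [MeasureTheory.IsProbabilityMeasure p] (N : ℕ) (j : Fin N)
    (h : A → ℝ) (hmeas : Measurable h) (M : ℝ) (hbdd : ∀ a, |h a| ≤ M) :
    ∫ αs, h (αs j) ∂(MeasureTheory.Measure.pi fun _ : Fin N => p) = ∫ a, h a ∂p := by
  classical
  have hint : ∀ i : Fin N, MeasureTheory.Integrable (fun a => if i = j then h a else 1) p := by
    intro i
    by_cases hij : i = j
    · simpa [hij] using RR_aux_integrable hmeas hbdd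
    · simp [hij]
  have key : ∀ αs : Fin N → A, h (αs j) = ∏ i, (if i = j then h (αs i) else 1) := by
    intro αs
    rw [Finset.prod_ite_eq' Finset.univ j (fun i => h (αs i))]
    simp
  calc ∫ αs, h (αs j) ∂(MeasureTheory.Measure.pi fun _ : Fin N => p)
      = ∫ αs, ∏ i, (if i = j then h (αs i) else 1)
          ∂(MeasureTheory.Measure.pi fun _ : Fin N => p) := by
        congr 1; funext αs; exact key αs
    _ = ∏ i, ∫ a, (if i = j then h a else 1) ∂p :=
        RR_aux_integral_pi_prod p N (fun i a => if i = j then h a else 1) hint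
    _ = ∏ i, (if i = j then ∫ a, h a ∂p else 1) := by
        apply Finset.prod_congr rfl
        intro i _
        by_cases hij : i = j <;> simp [hij]
    _ = ∫ a, h a ∂p := by
        rw [Finset.prod_ite_eq' Finset.univ j (fun _ => ∫ a, h a ∂p)]
        simp

private lemma RR_aux_integral_pi_pair {A : Type*} [MeasurableSpace A]
    (p : MeasureTheory.Measure A) [MeasureTheory.IsProbabilityMeasure p] (N : ℕ) (j l : Fin N)
    (hjl : j ≠ l) (h : A → ℝ) (hmeas : Measurable h) (M : ℝ) (hbdd : ∀ a, |h a| ≤ M) :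
    ∫ αs, h (αs j) * h (αs l) ∂(MeasureTheory.Measure.pi fun _ : Fin N => p) =
      (∫ a, h a ∂p) * (∫ a, h a ∂p) := by
  classical
  set f : Fin N → A → ℝ := fun i a => if i = j then h a else if i = l then h a else 1 with hf
  have hint : ∀ i : Fin N, MeasureTheory.Integrable (f i) p := by
    intro i
    rw [hf]
    by_cases hij : i = j
    · simpa [hij] using RR_aux_integrable hmeas hbdd
    · by_cases hil : i = l
      · simpa [hij, hil] using RR_aux_integrable hmeas hbdd
      · simp [hij, hil]
  have hprod : ∀ v : Fin N → ℝ, (∏ i, (if i = j then v j else if i = l then v l else 1)) =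
      v j * v l := by
    intro v
    have hjnotl : j ∉ ({l} : Finset (Fin N)) := by simp [hjl]
    rw [← Finset.prod_mul_prod_compl ({j, l} : Finset (Fin N))]
    have h1 : ∏ i ∈ ({j, l} : Finset (Fin N)), (if i = j then v j else if i = l then v l else 1)
        = v j * v l := by
      rw [Finset.prod_insert hjnotl, Finset.prod_singleton]
      simp [hjl, Ne.symm hjl]
    have h2 : ∏ i ∈ ({j, l} : Finset (Fin N))ᶜ,
        (if i = j then v j else if i = l then v l else 1) = 1 := by
      apply Finset.prod_eq_one
      intro i hi
      rw [Finset.mem_compl, Finset.mem_insert, Finset.mem_singleton] at hi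
      push_neg at hi
      simp [hi.1, hi.2]
    rw [h1, h2, mul_one]
  have key : ∀ αs : Fin N → A, h (αs j) * h (αs l) = ∏ i, f i (αs i) := by
    intro αs
    rw [hf]
    refine ((hprod (fun i => h (αs i))).symm).trans ?_
    apply Finset.prod_congr rfl
    intro i _
    by_cases hij : i = j
    · subst hij; simp
    · by_cases hil : i = l
      · subst hil; simp [hij]
      · simp [hij, hil]
  calc ∫ αs, h (αs j) * h (αs l) ∂(MeasureTheory.Measure.pi fun _ : Fin N => p)
      = ∫ αs, ∏ i, f i (αs i) ∂(MeasureTheory.Measure.pi fun _ : Fin N => p) := by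
        congr 1; funext αs; exact key αs
    _ = ∏ i, ∫ a, f i a ∂p := RR_aux_integral_pi_prod p N f hint
    _ = ∏ i, (if i = j then ∫ a, h a ∂p else if i = l then ∫ a, h a ∂p else 1) := by
        apply Finset.prod_congr rfl
        intro i _
        rw [hf]
        by_cases hij : i = j
        · simp [hij]
        · by_cases hil : i = l <;> simp [hij, hil]
    _ = (∫ a, h a ∂p) * (∫ a, h a ∂p) := hprod (fun _ => ∫ a, h a ∂p)
private lemma RR_aux_sq_integral_le {A : Type*} [MeasurableSpace A]
    (p : MeasureTheory.Measure A) [MeasureTheory.IsProbabilityMeasure p] (f : A → ℝ)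
    (hmeas : Measurable f) (M : ℝ) (hbdd : ∀ a, |f a| ≤ M) :
    (∫ a, f a ∂p) ^ 2 ≤ ∫ a, f a ^ 2 ∂p := by
  have hint : MeasureTheory.Integrable f p := RR_aux_integrable hmeas hbdd
  have hint2 : MeasureTheory.Integrable (fun a => f a ^ 2) p := by
    apply RR_aux_integrable (hmeas.pow_const 2) (M := M ^ 2)
    intro a
    rw [abs_pow]
    exact pow_le_pow_left₀ (abs_nonneg _) (hbdd a) 2
  set m := ∫ a, f a ∂p with hm
  have h0 : 0 ≤ ∫ a, (f a - m) ^ 2 ∂p :=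
    MeasureTheory.integral_nonneg fun a => sq_nonneg _
  have hexp : (fun a => (f a - m) ^ 2) = fun a => (f a ^ 2 - (2 * m) * f a) + m ^ 2 := by
    funext a; ring
  rw [hexp] at h0
  have hcm : MeasureTheory.Integrable (fun a => 2 * m * f a) p := hint.const_mul (2 * m)
  have hsub : MeasureTheory.Integrable (fun a => f a ^ 2 - 2 * m * f a) p := hint2.sub hcm
  rw [MeasureTheory.integral_add hsub (MeasureTheory.integrable_const _),
    MeasureTheory.integral_sub hint2 hcm,
    MeasureTheory.integral_const_mul, MeasureTheory.integral_const] at h0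
  simp only [probReal_univ, one_smul, ← hm] at h0
  nlinarith [h0]

private lemma RR_aux_var {A : Type*} [MeasurableSpace A]
    (p : MeasureTheory.Measure A) [MeasureTheory.IsProbabilityMeasure p] (N : ℕ) (hN : 1 ≤ N)
    (h : A → ℝ) (hmeas : Measurable h) (C : ℝ) (hC : 0 ≤ C) (hbdd : ∀ a, |h a| ≤ C) :
    ∫ αs, ((∫ a, h a ∂p) - (N : ℝ)⁻¹ * ∑ j, h (αs j)) ^ 2
        ∂(MeasureTheory.Measure.pi fun _ : Fin N => p) ≤ C ^ 2 / N := by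
  classical
  set pn := MeasureTheory.Measure.pi fun _ : Fin N => p with hpn
  set m := ∫ a, h a ∂p with hm
  set Q := ∫ a, h a * h a ∂p with hQdef
  have hNpos : (0:ℝ) < N := by exact_mod_cast hN
  have habs : ∀ x y : ℝ, |x| ≤ C → |y| ≤ C → |x * y| ≤ C ^ 2 := by
    intro x y hx hy
    rw [abs_mul]
    calc |x| * |y| ≤ C * C := mul_le_mul hx hy (abs_nonneg _) hC
    _ = C ^ 2 := (sq C).symm
  have hQle : Q ≤ C ^ 2 := by
    rw [hQdef]
    calc ∫ a, h a * h a ∂p ≤ ∫ _ : A, C ^ 2 ∂p := by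
          apply MeasureTheory.integral_mono
            (RR_aux_integrable (hmeas.mul hmeas) (fun a => habs _ _ (hbdd a) (hbdd a)))
            (MeasureTheory.integrable_const _)
          intro a
          exact le_trans (le_abs_self _) (habs _ _ (hbdd a) (hbdd a))
    _ = C ^ 2 := by simp
  have hmQ : m * m ≤ Q := by
    have := RR_aux_sq_integral_le p h hmeas C hbdd
    rw [← hm] at this
    calc m * m = m ^ 2 := (sq m).symm
    _ ≤ ∫ a, h a ^ 2 ∂p := this
    _ = Q := by rw [hQdef]; congr 1; funext a; rw [sq]
  have hmeasj : ∀ j : Fin N, Measurable fun αs : Fin N → A => h (αs j) :=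
    fun j => hmeas.comp (measurable_pi_apply j)
  have hintj : ∀ j : Fin N, MeasureTheory.Integrable (fun αs : Fin N → A => h (αs j)) pn :=
    fun j => RR_aux_integrable (hmeasj j) (fun αs => hbdd _)
  have hint_sum : MeasureTheory.Integrable (fun αs : Fin N → A => ∑ j, h (αs j)) pn :=
    MeasureTheory.integrable_finset_sum _ (fun j _ => hintj j)
  have hint_pair : ∀ j l : Fin N,
      MeasureTheory.Integrable (fun αs : Fin N → A => h (αs j) * h (αs l)) pn :=
    fun j l => RR_aux_integrable ((hmeasj j).mul (hmeasj l))
      (fun αs => habs _ _ (hbdd _) (hbdd _))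
  have hint_inner : ∀ j : Fin N,
      MeasureTheory.Integrable (fun αs : Fin N → A => ∑ l, h (αs j) * h (αs l)) pn :=
    fun j => MeasureTheory.integrable_finset_sum _ (fun l _ => hint_pair j l)
  have hint_sumsum : MeasureTheory.Integrable
      (fun αs : Fin N → A => ∑ j, ∑ l, h (αs j) * h (αs l)) pn :=
    MeasureTheory.integrable_finset_sum _ (fun j _ => hint_inner j)
  -- single marginals
  have hsingle : ∀ j : Fin N, ∫ αs, h (αs j) ∂pn = m :=
    fun j => RR_aux_integral_pi_single p N j h hmeas C hbdd
  -- pair marginals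
  have hterm : ∀ j l : Fin N, ∫ αs, h (αs j) * h (αs l) ∂pn = if l = j then Q else m * m := by
    intro j l
    by_cases hlj : l = j
    · subst hlj
      rw [if_pos rfl]
      exact RR_aux_integral_pi_single p N l (fun a => h a * h a) (hmeas.mul hmeas) (C ^ 2)
        (fun a => habs _ _ (hbdd a) (hbdd a))
    · rw [if_neg hlj]
      exact RR_aux_integral_pi_pair p N j l (Ne.symm hlj) h hmeas C hbdd
  -- expansion of the square
  have hexp : (fun αs : Fin N → A => (m - (N : ℝ)⁻¹ * ∑ j, h (αs j)) ^ 2) =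
      fun αs => (m ^ 2 - (2 * m * (N : ℝ)⁻¹) * ∑ j, h (αs j)) +
        ((N : ℝ)⁻¹) ^ 2 * ∑ j, ∑ l, h (αs j) * h (αs l) := by
    funext αs
    have hs : ∑ j, ∑ l, h (αs j) * h (αs l) = (∑ j, h (αs j)) * (∑ l, h (αs l)) :=
      (Finset.sum_mul_sum Finset.univ Finset.univ (fun j => h (αs j)) (fun l => h (αs l))).symm
    rw [hs]
    ring
  rw [hexp]
  have hcm1 : MeasureTheory.Integrable
      (fun αs : Fin N → A => 2 * m * (N : ℝ)⁻¹ * ∑ j, h (αs j)) pn :=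
    hint_sum.const_mul _
  have hcm2 : MeasureTheory.Integrable
      (fun αs : Fin N → A => ((N : ℝ)⁻¹) ^ 2 * ∑ j, ∑ l, h (αs j) * h (αs l)) pn :=
    hint_sumsum.const_mul _
  have hsub : MeasureTheory.Integrable
      (fun αs : Fin N → A => m ^ 2 - 2 * m * (N : ℝ)⁻¹ * ∑ j, h (αs j)) pn :=
    (MeasureTheory.integrable_const _).sub hcm1
  rw [MeasureTheory.integral_add hsub hcm2,
    MeasureTheory.integral_sub (MeasureTheory.integrable_const _) hcm1,
    MeasureTheory.integral_const_mul, MeasureTheory.integral_const_mul,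
    MeasureTheory.integral_const,
    MeasureTheory.integral_finset_sum _ (fun j _ => hintj j),
    MeasureTheory.integral_finset_sum _ (fun j _ => hint_inner j)]
  simp only [probReal_univ, one_smul]
  have hsum1 : ∑ j : Fin N, ∫ αs, h (αs j) ∂pn = N * m := by
    rw [Finset.sum_congr rfl (fun j _ => hsingle j)]
    rw [Finset.sum_const, Finset.card_univ, Fintype.card_fin, nsmul_eq_mul]
  have hsum2 : ∑ j : Fin N, ∫ αs, ∑ l, h (αs j) * h (αs l) ∂pn =
      N * ((N : ℝ) * (m * m) + (Q - m * m)) := by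
    have hinner : ∀ j : Fin N, ∫ αs, ∑ l, h (αs j) * h (αs l) ∂pn =
        (N : ℝ) * (m * m) + (Q - m * m) := by
      intro j
      rw [MeasureTheory.integral_finset_sum _ (fun l _ => hint_pair j l)]
      rw [Finset.sum_congr rfl (fun l _ => hterm j l)]
      have : ∀ l : Fin N, (if l = j then Q else m * m) =
          m * m + (if l = j then Q - m * m else 0) := by
        intro l; split_ifs <;> ring
      rw [Finset.sum_congr rfl (fun l _ => this l), Finset.sum_add_distrib,
        Finset.sum_const, Finset.sum_ite_eq' Finset.univ j (fun _ => Q - m * m)]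
      simp [Finset.card_univ]
    rw [Finset.sum_congr rfl (fun j _ => hinner j)]
    rw [Finset.sum_const, Finset.card_univ, Fintype.card_fin, nsmul_eq_mul]
  rw [hsum1, hsum2]
  have hNne : (N : ℝ) ≠ 0 := ne_of_gt hNpos
  have key : m ^ 2 - 2 * m * (N : ℝ)⁻¹ * ((N : ℝ) * m) +
      ((N : ℝ)⁻¹) ^ 2 * ((N : ℝ) * ((N : ℝ) * (m * m) + (Q - m * m))) = (Q - m * m) / N := by
    field_simp
    ring
  rw [key]
  gcongr
  nlinarith [mul_self_nonneg m, hQle]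

private lemma RR_aux_norm_toLp {Ω : Type*} [MeasurableSpace Ω] (μ : Measure Ω)
    [IsProbabilityMeasure μ] (f : Ω → ℝ) (hf : MemLp f 2 μ) :
    ‖hf.toLp f‖ = Real.sqrt (∫ x, f x ^ 2 ∂μ) := by
  have h1 : ‖hf.toLp f‖ ^ 2 = ∫ x, f x ^ 2 ∂μ := by
    rw [← real_inner_self_eq_norm_sq]
    rw [MeasureTheory.L2.inner_def]
    apply integral_congr_ae
    filter_upwards [hf.coeFn_toLp] with x hx
    rw [hx]
    simp [sq, RCLike.inner_apply]
  rw [← h1, Real.sqrt_sq (norm_nonneg _)]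

private lemma RR_aux_L2_diff {Ω : Type*} [MeasurableSpace Ω] (μ : Measure Ω)
    [IsProbabilityMeasure μ] (f1 f2 : Ω → ℝ) (h1 : Measurable f1) (h2 : Measurable f2)
    (M1 M2 : ℝ) (hb1 : ∀ x, |f1 x| ≤ M1) (hb2 : ∀ x, |f2 x| ≤ M2) :
    |Real.sqrt (∫ x, f1 x ^ 2 ∂μ) - Real.sqrt (∫ x, f2 x ^ 2 ∂μ)| ≤
      Real.sqrt (∫ x, (f1 x - f2 x) ^ 2 ∂μ) := by
  have hm1 : MemLp f1 2 μ := MemLp.of_bound h1.aestronglyMeasurable M1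
    (Filter.Eventually.of_forall fun x => by simpa [Real.norm_eq_abs] using hb1 x)
  have hm2 : MemLp f2 2 μ := MemLp.of_bound h2.aestronglyMeasurable M2
    (Filter.Eventually.of_forall fun x => by simpa [Real.norm_eq_abs] using hb2 x)
  have hsub : MemLp (f1 - f2) 2 μ := hm1.sub hm2
  have key : hm1.toLp f1 - hm2.toLp f2 = hsub.toLp (f1 - f2) := (MemLp.toLp_sub hm1 hm2).symm
  have hs : Real.sqrt (∫ x, (f1 x - f2 x) ^ 2 ∂μ) = ‖hm1.toLp f1 - hm2.toLp f2‖ := by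
    rw [key, RR_aux_norm_toLp μ (f1 - f2) hsub]
    rfl
  rw [← RR_aux_norm_toLp μ f1 hm1, ← RR_aux_norm_toLp μ f2 hm2, hs]
  exact abs_norm_sub_norm_le _ _
open scoped BigOperators
open MeasureTheory

theorem rahimi_recht_random_features_L2
    {A : Type*} [MeasurableSpace A] (p : Measure A) [IsProbabilityMeasure p]
    (d : ℕ) (X : Set (EuclideanSpace ℝ (Fin d))) (hX : MeasurableSet X)
    (μ : Measure X) [IsProbabilityMeasure μ]
    (φ : X → A → ℝ) (hφmeas : Measurable (Function.uncurry φ))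
    (hφbdd : ∀ (x : X) (α : A), |φ x α| ≤ 1)
    (C : ℝ) (hC : 0 < C)
    (β : A → ℝ) (hβmeas : Measurable β) (hβbdd : ∀ α, |β α| ≤ C)
    (g : X → ℝ) (hg : ∀ x, g x = ∫ α, β α * φ x α ∂p)
    (N : ℕ) (hN : 1 ≤ N) (δ : ℝ) (hδ : δ ∈ Set.Ioo (0 : ℝ) 1) :
    ∃ E : Set (Fin N → A), MeasurableSet E ∧
      ENNReal.ofReal (1 - δ) ≤ (Measure.pi fun _ : Fin N => p) E ∧
      ∀ αs ∈ E, ∃ w : Fin N → ℝ,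
        Real.sqrt (∫ x, (g x - ∑ j, w j * φ x (αs j)) ^ 2 ∂μ) ≤
          (C / Real.sqrt N) * (1 + Real.sqrt (2 * Real.log (1 / δ))) := by
  classical
  obtain ⟨hδ0, hδ1⟩ := hδ
  have hNpos : (0:ℝ) < N := by exact_mod_cast hN
  have hsqrtN : (0:ℝ) < Real.sqrt N := Real.sqrt_pos.2 hNpos
  have hφ' : Measurable (fun q : X × A => φ q.1 q.2) := hφmeas
  -- basic facts about g
  have hβφmeas : Measurable (fun q : X × A => β q.2 * φ q.1 q.2) :=
    (hβmeas.comp measurable_snd).mul hφ'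
  have hgmeas : Measurable g := by
    have : g = fun x => ∫ α, β α * φ x α ∂p := funext hg
    rw [this]
    exact hβφmeas.stronglyMeasurable.integral_prod_right'.measurable
  have hβφbdd : ∀ (x : X) (α : A), |β α * φ x α| ≤ C := by
    intro x α
    rw [abs_mul]
    calc |β α| * |φ x α| ≤ C * 1 := mul_le_mul (hβbdd α) (hφbdd x α) (abs_nonneg _) hC.le
    _ = C := mul_one C
  have hgbdd : ∀ x, |g x| ≤ C := by
    intro x
    rw [hg x]
    exact RR_aux_abs_integral_le p _ C (fun α => hβφbdd x α)
  -- the random field and its L² norms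
  set pN := Measure.pi fun _ : Fin N => p with hpN
  set Zf : (Fin N → A) → X → ℝ :=
    fun αs x => g x - (N:ℝ)⁻¹ * ∑ j, β (αs j) * φ x (αs j) with hZf
  set W : (Fin N → A) → ℝ := fun αs => ∫ x, (Zf αs x) ^ 2 ∂μ with hW
  set Z : (Fin N → A) → ℝ := fun αs => Real.sqrt (W αs) with hZ
  -- measurability
  have hpair : ∀ j : Fin N,
      Measurable (fun q : (Fin N → A) × X => β (q.1 j) * φ q.2 (q.1 j)) := fun j =>
    (hβmeas.comp ((measurable_pi_apply j).comp measurable_fst)).mul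
      (hφ'.comp (measurable_snd.prodMk ((measurable_pi_apply j).comp measurable_fst)))
  have hZfmeas : Measurable (fun q : (Fin N → A) × X => Zf q.1 q.2) := by
    apply (hgmeas.comp measurable_snd).sub
    exact (Finset.measurable_sum Finset.univ (fun j _ => hpair j)).const_mul (N:ℝ)⁻¹
  have hZfmeas1 : ∀ αs, Measurable (fun x => Zf αs x) :=
    fun αs => hZfmeas.comp (measurable_const.prodMk measurable_id)
  -- bounds
  have hsumbdd : ∀ (αs : Fin N → A) (x : X),
      |(N:ℝ)⁻¹ * ∑ j, β (αs j) * φ x (αs j)| ≤ C := by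
    intro αs x
    rw [abs_mul, abs_inv, Nat.abs_cast]
    have h1 : |∑ j, β (αs j) * φ x (αs j)| ≤ ∑ _j : Fin N, C :=
      (Finset.abs_sum_le_sum_abs _ _).trans (Finset.sum_le_sum fun j _ => hβφbdd x (αs j))
    rw [Finset.sum_const, Finset.card_univ, Fintype.card_fin, nsmul_eq_mul] at h1
    calc (N:ℝ)⁻¹ * |∑ j, β (αs j) * φ x (αs j)| ≤ (N:ℝ)⁻¹ * ((N:ℝ) * C) := by
          apply mul_le_mul_of_nonneg_left h1 (by positivity)
    _ = C := by field_simp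
  have hZfbdd : ∀ αs x, |Zf αs x| ≤ 2 * C := by
    intro αs x
    rw [hZf]
    simp only
    rw [sub_eq_add_neg]
    calc |g x + -((N:ℝ)⁻¹ * ∑ j, β (αs j) * φ x (αs j))| ≤
        |g x| + |-((N:ℝ)⁻¹ * ∑ j, β (αs j) * φ x (αs j))| := abs_add_le _ _
    _ = |g x| + |(N:ℝ)⁻¹ * ∑ j, β (αs j) * φ x (αs j)| := by rw [abs_neg]
    _ ≤ C + C := add_le_add (hgbdd x) (hsumbdd αs x)
    _ = 2 * C := by ring
  have hsq_bdd : ∀ (b : ℝ) (y : ℝ), |y| ≤ b → |y ^ 2| ≤ b ^ 2 := by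
    intro b y hy
    rw [abs_pow]
    exact pow_le_pow_left₀ (abs_nonneg _) hy 2
  have hWmeas : Measurable W :=
    ((hZfmeas.pow_const 2).stronglyMeasurable.integral_prod_right').measurable
  have hWnonneg : ∀ αs, 0 ≤ W αs := fun αs => integral_nonneg fun x => sq_nonneg _
  have hWle : ∀ αs, W αs ≤ (2 * C) ^ 2 := by
    intro αs
    rw [hW]
    simp only
    calc ∫ x, (Zf αs x) ^ 2 ∂μ ≤ ∫ _x : X, (2 * C) ^ 2 ∂μ := by
          apply integral_mono (RR_aux_integrable ((hZfmeas1 αs).pow_const 2)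
            (fun x => hsq_bdd _ _ (hZfbdd αs x))) (integrable_const _)
          intro x
          exact le_trans (le_abs_self _) (hsq_bdd _ _ (hZfbdd αs x))
    _ = (2 * C) ^ 2 := by simp
  have hZmeas : Measurable Z := hWmeas.sqrt
  have hZbdd : ∀ αs, |Z αs| ≤ 2 * C := by
    intro αs
    rw [hZ]
    simp only
    rw [abs_of_nonneg (Real.sqrt_nonneg _)]
    calc Real.sqrt (W αs) ≤ Real.sqrt ((2 * C) ^ 2) := Real.sqrt_le_sqrt (hWle αs)
    _ = 2 * C := Real.sqrt_sq (by positivity)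
  -- bounded differences
  have hZdiff : ∀ (k : Fin N) (αs : Fin N → A) (a : A),
      |Z αs - Z (Function.update αs k a)| ≤ 2 * C / N := by
    intro k αs a
    have hdiffpt : ∀ x, |Zf αs x - Zf (Function.update αs k a) x| ≤ 2 * C / N := by
      intro x
      have h1 : Zf αs x - Zf (Function.update αs k a) x =
          (N:ℝ)⁻¹ * (∑ j, (β (Function.update αs k a j) * φ x (Function.update αs k a j) -
            β (αs j) * φ x (αs j))) := by
        rw [hZf]
        simp only
        rw [Finset.sum_sub_distrib]
        ring
      have h2 : ∑ j, (β (Function.update αs k a j) * φ x (Function.update αs k a j) -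
          β (αs j) * φ x (αs j)) =
          β a * φ x a - β (αs k) * φ x (αs k) := by
        rw [Finset.sum_eq_single k]
        · rw [Function.update_self]
        · intro j _ hjk
          rw [Function.update_of_ne hjk]
          ring
        · intro hk
          exact absurd (Finset.mem_univ k) hk
      rw [h1, h2, abs_mul, abs_inv, Nat.abs_cast]
      have h3 : |β a * φ x a - β (αs k) * φ x (αs k)| ≤ 2 * C := by
        rw [sub_eq_add_neg]
        calc |β a * φ x a + -(β (αs k) * φ x (αs k))| ≤
            |β a * φ x a| + |-(β (αs k) * φ x (αs k))| := abs_add_le _ _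
        _ = |β a * φ x a| + |β (αs k) * φ x (αs k)| := by rw [abs_neg]
        _ ≤ C + C := add_le_add (hβφbdd x a) (hβφbdd x (αs k))
        _ = 2 * C := by ring
      calc (N:ℝ)⁻¹ * |β a * φ x a - β (αs k) * φ x (αs k)| ≤ (N:ℝ)⁻¹ * (2 * C) :=
            mul_le_mul_of_nonneg_left h3 (by positivity)
      _ = 2 * C / N := by rw [inv_mul_eq_div]
    have hkey := RR_aux_L2_diff μ (Zf αs) (Zf (Function.update αs k a)) (hZfmeas1 αs)
      (hZfmeas1 _) (2 * C) (2 * C) (hZfbdd αs) (hZfbdd _)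
    have hlast : Real.sqrt (∫ x, (Zf αs x - Zf (Function.update αs k a) x) ^ 2 ∂μ) ≤
        2 * C / N := by
      have hd : (0:ℝ) ≤ 2 * C / N := by positivity
      calc Real.sqrt (∫ x, (Zf αs x - Zf (Function.update αs k a) x) ^ 2 ∂μ) ≤
          Real.sqrt ((2 * C / N) ^ 2) := by
            apply Real.sqrt_le_sqrt
            calc ∫ x, (Zf αs x - Zf (Function.update αs k a) x) ^ 2 ∂μ ≤
                ∫ _x : X, (2 * C / N) ^ 2 ∂μ := by
                  apply integral_mono (RR_aux_integrable
                    (((hZfmeas1 αs).sub (hZfmeas1 _)).pow_const 2)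
                    (fun x => hsq_bdd _ _ (hdiffpt x))) (integrable_const _)
                  intro x
                  exact le_trans (le_abs_self _) (hsq_bdd _ _ (hdiffpt x))
            _ = (2 * C / N) ^ 2 := by simp
      _ = 2 * C / N := Real.sqrt_sq hd
    exact hkey.trans hlast
  -- mean bound
  have hmeanW : ∫ αs, W αs ∂pN ≤ C ^ 2 / N := by
    have hint_prod : Integrable (fun q : (Fin N → A) × X => (Zf q.1 q.2) ^ 2) (pN.prod μ) :=
      RR_aux_integrable (hZfmeas.pow_const 2) (fun q => hsq_bdd _ _ (hZfbdd q.1 q.2))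
    have hswap := MeasureTheory.integral_integral_swap
      (f := fun (αs : Fin N → A) (x : X) => (Zf αs x) ^ 2) hint_prod
    rw [hW]
    simp only
    rw [hswap]
    have hinner : ∀ x : X, ∫ αs, (Zf αs x) ^ 2 ∂pN ≤ C ^ 2 / N := by
      intro x
      have hvar := RR_aux_var p N hN (fun α => β α * φ x α)
        (hβmeas.mul (hφ'.comp (measurable_const.prodMk measurable_id))) C hC.le
        (fun α => hβφbdd x α)
      rw [← hg x] at hvar
      exact hvar
    calc ∫ x, (∫ αs, (Zf αs x) ^ 2 ∂pN) ∂μ ≤ ∫ _x : X, C ^ 2 / N ∂μ := by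
          apply integral_mono_of_nonneg
          · exact Filter.Eventually.of_forall fun x => integral_nonneg fun αs => sq_nonneg _
          · exact integrable_const _
          · exact Filter.Eventually.of_forall hinner
    _ = C ^ 2 / N := by simp
  have hmeanZ : ∫ αs, Z αs ∂pN ≤ C / Real.sqrt N := by
    have h1 : (∫ αs, Z αs ∂pN) ^ 2 ≤ ∫ αs, Z αs ^ 2 ∂pN :=
      RR_aux_sq_integral_le pN Z hZmeas (2 * C) hZbdd
    have h2 : ∫ αs, Z αs ^ 2 ∂pN = ∫ αs, W αs ∂pN := by
      congr 1
      funext αs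
      rw [hZ]
      simp only
      exact Real.sq_sqrt (hWnonneg αs)
    have h4 : 0 ≤ ∫ αs, Z αs ∂pN :=
      integral_nonneg fun αs => Real.sqrt_nonneg _
    calc ∫ αs, Z αs ∂pN = Real.sqrt ((∫ αs, Z αs ∂pN) ^ 2) := (Real.sqrt_sq h4).symm
    _ ≤ Real.sqrt (C ^ 2 / N) := Real.sqrt_le_sqrt (by rw [h2] at h1; linarith [hmeanW])
    _ = C / Real.sqrt N := by rw [Real.sqrt_div (sq_nonneg C), Real.sqrt_sq hC.le]
  -- concentration
  set t := Real.log (1 / δ) with htdef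
  have ht : 0 < t := Real.log_pos (by rw [lt_div_iff₀ hδ0]; linarith)
  set ε := C * Real.sqrt (2 * t) / Real.sqrt N with hεdef
  have hε : 0 ≤ ε := by positivity
  set c := 2 * C / N with hcdef
  have hc : 0 < c := by positivity
  have htail := RR_aux_mcdiarmid_tail p N hN Z hZmeas (2 * C) hZbdd c hc
    (by rw [hcdef]; exact hZdiff) ε hε
  have hexp_eq : Real.exp (-(2 * ε ^ 2) / (N * c ^ 2)) = δ := by
    have h2t : Real.sqrt (2 * t) ^ 2 = 2 * t := Real.sq_sqrt (by positivity)
    have hN2 : Real.sqrt N ^ 2 = (N:ℝ) := Real.sq_sqrt hNpos.le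
    have hε2 : ε ^ 2 = C ^ 2 * (2 * t) / N := by
      rw [hεdef, div_pow, mul_pow, h2t, hN2]
    have harg : -(2 * ε ^ 2) / (N * c ^ 2) = -t := by
      rw [hε2, hcdef]
      have hCne : C ≠ 0 := hC.ne'
      have hNne : (N:ℝ) ≠ 0 := hNpos.ne'
      field_simp
    rw [harg, Real.exp_neg, htdef, Real.exp_log (by positivity : (0:ℝ) < 1 / δ), one_div,
      inv_inv]
  set E : Set (Fin N → A) := {αs | Z αs ≤ C / Real.sqrt N + ε} with hE
  have hEmeas : MeasurableSet E := measurableSet_le hZmeas measurable_const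
  have hcompl : Eᶜ ⊆ {αs | (∫ αs, Z αs ∂pN) + ε ≤ Z αs} := by
    intro αs hαs
    rw [hE] at hαs
    simp only [Set.mem_compl_iff, Set.mem_setOf_eq, not_le] at hαs
    have : (∫ αs, Z αs ∂pN) + ε ≤ C / Real.sqrt N + ε := by linarith [hmeanZ]
    exact le_trans this hαs.le
  have htailE : (pN Eᶜ).toReal ≤ δ := by
    calc (pN Eᶜ).toReal ≤ (pN {αs | (∫ αs, Z αs ∂pN) + ε ≤ Z αs}).toReal :=
          ENNReal.toReal_mono (measure_ne_top _ _) (measure_mono hcompl)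
    _ ≤ Real.exp (-(2 * ε ^ 2) / (N * c ^ 2)) := htail
    _ = δ := hexp_eq
  have hmeasE : ENNReal.ofReal (1 - δ) ≤ pN E := by
    have h1 : pN Eᶜ ≤ ENNReal.ofReal δ :=
      (ENNReal.le_ofReal_iff_toReal_le (measure_ne_top _ _) hδ0.le).2 htailE
    rw [prob_compl_eq_one_sub hEmeas] at h1
    have h3 : 1 ≤ ENNReal.ofReal δ + pN E := tsub_le_iff_right.1 h1
    have h4 : ENNReal.ofReal (1 - δ) = 1 - ENNReal.ofReal δ := by
      rw [ENNReal.ofReal_sub 1 hδ0.le, ENNReal.ofReal_one]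
    rw [h4]
    exact tsub_le_iff_left.2 h3
  refine ⟨E, hEmeas, hmeasE, ?_⟩
  intro αs hαs
  refine ⟨fun j => β (αs j) / N, ?_⟩
  have hfun_eq : (fun x : X => g x - ∑ j, (β (αs j) / N) * φ x (αs j)) = fun x => Zf αs x := by
    funext x
    rw [hZf]
    simp only
    congr 1
    rw [Finset.mul_sum]
    apply Finset.sum_congr rfl
    intro j _
    ring
  have hZval : Real.sqrt (∫ x, (g x - ∑ j, (β (αs j) / N) * φ x (αs j)) ^ 2 ∂μ) = Z αs := by
    rw [hZ, hW]
    simp only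
    congr 1
    congr 1
    funext x
    rw [congrFun hfun_eq x]
  have hZle : Z αs ≤ C / Real.sqrt N + ε := hαs
  have hrhs : (C / Real.sqrt N) * (1 + Real.sqrt (2 * t)) = C / Real.sqrt N + ε := by
    rw [hεdef]
    ring
  calc Real.sqrt (∫ x, (g x - ∑ j, (β (αs j) / N) * φ x (αs j)) ^ 2 ∂μ) = Z αs := hZval
  _ ≤ C / Real.sqrt N + ε := hZle
  _ = (C / Real.sqrt N) * (1 + Real.sqrt (2 * t)) := hrhs.symm
end

section
/- For every d ≥ 1 and every compact set K ⊂ ℝ^d, the linear span of the family of Gaussian radial basis functions { x ↦ exp( − a ‖x − b‖² ) : a > 0, b ∈ ℝ^d } is dense in the space C(K) of continuous real-valued functions on K with respect to the supremum norm. -/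
open scoped BigOperators
open scoped RealInnerProductSpace
open scoped Pointwise

lemma gauss_exponent_identity {d : ℕ} (a a' : ℝ) (ha : 0 < a) (ha' : 0 < a')
    (x b b' : EuclideanSpace ℝ (Fin d)) :
    -a * ‖x - b‖ ^ 2 + -a' * ‖x - b'‖ ^ 2 =
      -(a * a' / (a + a')) * ‖b - b'‖ ^ 2 +
      -(a + a') * ‖x - ((a / (a + a')) • b + (a' / (a + a')) • b')‖ ^ 2 := by
  have hs : a + a' ≠ 0 := by positivity
  have key : ∀ u v : EuclideanSpace ℝ (Fin d), ‖u - v‖ ^ 2 = ‖u‖^2 - 2 * ⟪u,v⟫ + ‖v‖^2 :=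
    fun u v => norm_sub_sq_real u v
  simp only [key, norm_add_sq_real, inner_add_right, real_inner_smul_right,
    norm_smul, mul_pow, Real.norm_eq_abs, sq_abs, real_inner_smul_left,
    real_inner_smul_right, real_inner_comm b' b]
  field_simp
  ring

theorem gaussian_rbf_span_dense
    (d : ℕ) (hd : 1 ≤ d)
    (K : Set (EuclideanSpace ℝ (Fin d))) (hK : IsCompact K)
    (f : EuclideanSpace ℝ (Fin d) → ℝ) (hf : ContinuousOn f K)
    (ε : ℝ) (hε : 0 < ε) :
    ∃ (N : ℕ) (w a : Fin N → ℝ) (b : Fin N → EuclideanSpace ℝ (Fin d)),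
      (∀ i, 0 < a i) ∧
      ∀ x ∈ K, |f x - ∑ i, w i * Real.exp (-(a i) * ‖x - b i‖ ^ 2)| < ε := by
  haveI : CompactSpace K := isCompact_iff_compactSpace.mp hK
  -- the Gaussian as a continuous map on K
  let g : ℝ → EuclideanSpace ℝ (Fin d) → C(K, ℝ) := fun a b =>
    ⟨fun z => Real.exp (-a * ‖(z : EuclideanSpace ℝ (Fin d)) - b‖ ^ 2), by fun_prop⟩
  -- the set of Gaussians with positive width
  let S : Set C(K, ℝ) := {h | ∃ a b, 0 < a ∧ h = g a b}
  let A : Submodule ℝ C(K, ℝ) := Submodule.span ℝ S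
  -- product of two Gaussians is a scalar multiple of a Gaussian
  have hmul_gauss : ∀ a b, 0 < a → ∀ a' b', 0 < a' →
      g a b * g a' b' =
        Real.exp (-(a * a' / (a + a')) * ‖b - b'‖ ^ 2) •
          g (a + a') ((a / (a + a')) • b + (a' / (a + a')) • b') := by
    intro a b ha a' b' ha'
    ext z
    simp only [ContinuousMap.mul_apply, ContinuousMap.smul_apply, ContinuousMap.coe_mk,
      smul_eq_mul, g, ← Real.exp_add]
    rw [gauss_exponent_identity a a' ha ha' (z : EuclideanSpace ℝ (Fin d)) b b']
  -- A is closed under multiplication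
  have hAmul : ∀ p ∈ A, ∀ q ∈ A, p * q ∈ A := by
    have hSS : S * S ⊆ (A : Set C(K, ℝ)) := by
      rintro _ ⟨p, ⟨a, b, ha, rfl⟩, q, ⟨a', b', ha', rfl⟩, rfl⟩
      show g a b * g a' b' ∈ (A : Set C(K, ℝ))
      rw [hmul_gauss a b ha a' b' ha']
      exact A.smul_mem _ (Submodule.subset_span ⟨a + a', _, by positivity, rfl⟩)
    intro p hp q hq
    have hle : A * A ≤ A := by
      show Submodule.span ℝ S * Submodule.span ℝ S ≤ A
      rw [Submodule.span_mul_span]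
      exact Submodule.span_le.mpr hSS
    exact hle (Submodule.mul_mem_mul hp hq)
  -- closure of A contains the constant 1
  have hone : (1 : C(K, ℝ)) ∈ closure (A : Set C(K, ℝ)) := by
    rw [Metric.mem_closure_iff]
    intro δ hδ
    obtain ⟨R, hR⟩ : ∃ R : ℝ, ∀ x ∈ K, ‖x‖ ≤ R := by
      obtain ⟨R, hR⟩ := hK.isBounded.subset_closedBall 0
      exact ⟨R, fun x hx => by simpa using hR hx⟩
    have hcont : ContinuousAt (fun a : ℝ => 1 - Real.exp (-a * R ^ 2)) 0 := by fun_prop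
    have htend := hcont.tendsto
    simp only [neg_zero, zero_mul, Real.exp_zero, sub_self] at htend
    have hev : ∀ᶠ a in nhds (0:ℝ), 1 - Real.exp (-a * R ^ 2) < δ :=
      htend (Iio_mem_nhds hδ)
    obtain ⟨a, ha, hlt⟩ := hev.exists_gt
    refine ⟨g a 0, Submodule.subset_span ⟨a, 0, ha, rfl⟩, ?_⟩
    rw [dist_eq_norm]
    refine (ContinuousMap.norm_lt_iff _ hδ).mpr fun z => ?_
    have hz : ‖(z : EuclideanSpace ℝ (Fin d))‖ ≤ R := hR z z.2
    have h1 : -a * R ^ 2 ≤ -a * ‖(z : EuclideanSpace ℝ (Fin d)) - 0‖ ^ 2 := by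
      have hle : ‖(z : EuclideanSpace ℝ (Fin d)) - 0‖ ^ 2 ≤ R ^ 2 := by
        rw [sub_zero]
        exact pow_le_pow_left₀ (norm_nonneg _) hz 2
      nlinarith
    have h2 : Real.exp (-a * ‖(z : EuclideanSpace ℝ (Fin d)) - 0‖ ^ 2) ≤ 1 := by
      apply Real.exp_le_one_iff.mpr
      nlinarith [sq_nonneg ‖(z : EuclideanSpace ℝ (Fin d)) - 0‖]
    have h3 : Real.exp (-a * R ^ 2) ≤ Real.exp (-a * ‖(z : EuclideanSpace ℝ (Fin d)) - 0‖ ^ 2) :=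
      Real.exp_le_exp.mpr h1
    simp only [ContinuousMap.sub_apply, ContinuousMap.one_apply, ContinuousMap.coe_mk,
      Real.norm_eq_abs, g]
    rw [abs_of_nonneg (by linarith)]
    linarith
  -- the closure of A as a subalgebra
  let B : Subalgebra ℝ C(K, ℝ) :=
    { carrier := closure (A : Set C(K, ℝ))
      add_mem' := fun hp hq => A.topologicalClosure.add_mem hp hq
      mul_mem' := fun {p q} hp hq =>
        map_mem_closure₂ continuous_mul hp hq hAmul
      algebraMap_mem' := fun c => by
        have h : (algebraMap ℝ C(K, ℝ)) c = c • 1 := Algebra.algebraMap_eq_smul_one c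
        rw [h]
        exact A.topologicalClosure.smul_mem c hone
      one_mem' := hone
      zero_mem' := A.topologicalClosure.zero_mem }
  -- B separates points
  have hsep : B.SeparatesPoints := by
    intro x y hxy
    refine ⟨_, ⟨g 1 (x : EuclideanSpace ℝ (Fin d)),
      subset_closure (Submodule.subset_span ⟨1, _, one_pos, rfl⟩), rfl⟩, ?_⟩
    simp only [ContinuousMap.coe_mk, g]
    have hxy' : (x : EuclideanSpace ℝ (Fin d)) ≠ (y : EuclideanSpace ℝ (Fin d)) :=
      fun h => hxy (Subtype.ext h)
    have h2 : 0 < ‖(y : EuclideanSpace ℝ (Fin d)) - (x : EuclideanSpace ℝ (Fin d))‖ ^ 2 := by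
      have hne : (y : EuclideanSpace ℝ (Fin d)) - (x : EuclideanSpace ℝ (Fin d)) ≠ 0 :=
        sub_ne_zero.mpr (Ne.symm hxy')
      exact pow_pos (norm_pos_iff.mpr hne) 2
    intro hcontra
    have h1 : ‖(x : EuclideanSpace ℝ (Fin d)) - (x : EuclideanSpace ℝ (Fin d))‖ ^ 2 = 0 := by simp
    simp only [h1, mul_zero, Real.exp_zero] at hcontra
    have hlt : Real.exp (-1 * ‖(y : EuclideanSpace ℝ (Fin d)) -
        (x : EuclideanSpace ℝ (Fin d))‖ ^ 2) < 1 := by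
      have : -1 * ‖(y : EuclideanSpace ℝ (Fin d)) - (x : EuclideanSpace ℝ (Fin d))‖ ^ 2 < 0 := by
        nlinarith
      calc Real.exp (-1 * ‖(y : EuclideanSpace ℝ (Fin d)) -
            (x : EuclideanSpace ℝ (Fin d))‖ ^ 2) < Real.exp 0 := Real.exp_lt_exp.mpr this
        _ = 1 := Real.exp_zero
    rw [← hcontra] at hlt
    exact lt_irrefl _ hlt
  -- Stone-Weierstrass
  have hB : B.topologicalClosure = ⊤ :=
    ContinuousMap.subalgebra_topologicalClosure_eq_top_of_separatesPoints B hsep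
  -- the restriction of f to K
  let fK : C(K, ℝ) := ⟨K.restrict f, hf.restrict⟩
  have hfK : fK ∈ closure (A : Set C(K, ℝ)) := by
    have h1 : fK ∈ B.topologicalClosure := hB ▸ Algebra.mem_top
    have h1' : fK ∈ closure (B : Set C(K, ℝ)) := h1
    have h3 : (B : Set C(K, ℝ)) = closure (A : Set C(K, ℝ)) := rfl
    rwa [h3, closure_closure] at h1'
  -- approximate
  obtain ⟨p, hpA, hpd⟩ := Metric.mem_closure_iff.mp hfK ε hε
  have hpA' : p ∈ Submodule.span ℝ S := hpA
  rw [Submodule.mem_span_set'] at hpA'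
  obtain ⟨n, c, v, hsum⟩ := hpA'
  choose av bv hav hgv using fun i => (v i).2
  refine ⟨n, c, av, bv, hav, fun x hx => ?_⟩
  have hpx : p ⟨x, hx⟩ = ∑ i, c i * Real.exp (-(av i) * ‖x - bv i‖ ^ 2) := by
    rw [← hsum]
    simp only [ContinuousMap.coe_sum, Finset.sum_apply, ContinuousMap.coe_smul, Pi.smul_apply,
      smul_eq_mul]
    refine Finset.sum_congr rfl fun i _ => ?_
    congr 1
    rw [hgv i]
    rfl
  calc |f x - ∑ i, c i * Real.exp (-(av i) * ‖x - bv i‖ ^ 2)|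
      = dist (fK ⟨x, hx⟩) (p ⟨x, hx⟩) := by
        rw [hpx]; simp [fK, Real.dist_eq]; rfl
    _ ≤ dist fK p := ContinuousMap.dist_apply_le_dist _
    _ < ε := hpd
end

section
/- Let K ⊂ ℝ^d be compact, let U be a compact subset of C(K), and let F : U → ℝ be a continuous functional. Then for every ε > 0 there exist m ∈ ℕ, points x_1, …, x_m ∈ K, and a continuous function G : ℝ^m → ℝ such that for every u ∈ U, | F(u) − G( u(x_1), …, u(x_m) ) | < ε. In other words, every continuous functional on a compact subset of C(K) can be uniformly approximated by a continuous function of finitely many point evaluations of its argument. -/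
open scoped BigOperators

theorem functional_approx_by_point_evaluations
    (d : ℕ) (K : Set (EuclideanSpace ℝ (Fin d))) (hK : IsCompact K)
    (U : Set C(K, ℝ)) (hU : IsCompact U)
    (F : U → ℝ) (hF : Continuous F)
    (ε : ℝ) (hε : 0 < ε) :
    ∃ (m : ℕ) (x : Fin m → K) (G : (Fin m → ℝ) → ℝ),
      Continuous G ∧
      ∀ u : U, |F u - G (fun j => (u : C(K, ℝ)) (x j))| < ε := by
  haveI : CompactSpace U := isCompact_iff_compactSpace.mp hU
  set ev : K → C(U, ℝ) := fun x =>
    ⟨fun u => (u : C(K, ℝ)) x,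
      (continuous_eval_const x).comp continuous_subtype_val⟩ with hev
  set A : Subalgebra ℝ C(U, ℝ) := Algebra.adjoin ℝ (Set.range ev) with hA
  have hsep : A.SeparatesPoints := by
    intro u v huv
    have h1 : (u : C(K, ℝ)) ≠ v := fun h => huv (Subtype.ext h)
    obtain ⟨x, hx⟩ := DFunLike.ne_iff.mp h1
    exact ⟨ev x, ⟨ev x, Algebra.subset_adjoin ⟨x, rfl⟩, rfl⟩, hx⟩
  obtain ⟨g, hg⟩ := ContinuousMap.exists_mem_subalgebra_near_continuousMap_of_separatesPoints
    A hsep ⟨F, hF⟩ ε hε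
  have hstruct : ∀ f : C(U, ℝ), f ∈ A → ∃ (m : ℕ) (x : Fin m → K) (G : (Fin m → ℝ) → ℝ),
      Continuous G ∧ ∀ u : U, f u = G (fun j => (u : C(K, ℝ)) (x j)) := by
    intro f hf
    induction hf using Algebra.adjoin_induction with
    | mem f hf =>
        obtain ⟨x, rfl⟩ := hf
        exact ⟨1, fun _ => x, fun z => z 0, continuous_apply 0, fun u => rfl⟩
    | algebraMap r =>
        exact ⟨0, Fin.elim0, fun _ => r, continuous_const, fun u => rfl⟩
    | add f g' hfA hgA ihf ihg =>
        obtain ⟨m, x, G, hG, hGf⟩ := ihf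
        obtain ⟨n, y, H, hH, hHg⟩ := ihg
        refine ⟨m + n, Fin.append x y,
          fun z => G (fun i => z (Fin.castAdd n i)) + H (fun i => z (Fin.natAdd m i)),
          (hG.comp (continuous_pi fun i => continuous_apply _)).add
            (hH.comp (continuous_pi fun i => continuous_apply _)), fun u => ?_⟩
        simp only [ContinuousMap.add_apply, hGf u, hHg u, Fin.append_left, Fin.append_right]
    | mul f g' hfA hgA ihf ihg =>
        obtain ⟨m, x, G, hG, hGf⟩ := ihf
        obtain ⟨n, y, H, hH, hHg⟩ := ihg
        refine ⟨m + n, Fin.append x y,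
          fun z => G (fun i => z (Fin.castAdd n i)) * H (fun i => z (Fin.natAdd m i)),
          (hG.comp (continuous_pi fun i => continuous_apply _)).mul
            (hH.comp (continuous_pi fun i => continuous_apply _)), fun u => ?_⟩
        simp only [ContinuousMap.mul_apply, hGf u, hHg u, Fin.append_left, Fin.append_right]
  obtain ⟨m, x, G, hG, hGg⟩ := hstruct (g : C(U, ℝ)) g.2
  refine ⟨m, x, G, hG, fun u => ?_⟩
  have h1 : |F u - (g : C(U, ℝ)) u| ≤ ‖(g : C(U, ℝ)) - ⟨F, hF⟩‖ := by
    have := ContinuousMap.norm_coe_le_norm ((g : C(U, ℝ)) - ⟨F, hF⟩) u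
    simpa [Real.norm_eq_abs, abs_sub_comm] using this
  have h2 : |F u - (g : C(U, ℝ)) u| < ε := lt_of_le_of_lt h1 hg
  rwa [hGg u] at h2
end
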